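/- arXiv:2001.02116 — 6 statements merged into one kernel-verified Lean document; each statement's English description precedes it below -/
import Mathlib

section
/- Let A⁻ ≤ A⁺ be d×d Metzler matrices and let 𝒜 = {M Metzler : A⁻ ≤ M ≤ A⁺ entrywise}. Then every matrix in 𝒜 is Hurwitz stable if and only if A⁺ is Hurwitz stable, which in turn is equivalent to the existence of a strictly positive vector v₊ with v₊ᵀA⁺ < 0 componentwise. -/
open Matrix

/-- A square real matrix is Metzler if all its off-diagonal entries are nonnegative. -/
def IsMetzler {d : ℕ} (M : Matrix (Fin d) (Fin d) ℝ) : Prop :=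
  ∀ i j, i ≠ j → 0 ≤ M i j

/-- A square real matrix is Hurwitz stable if every (complex) eigenvalue has
negative real part. -/
def IsHurwitz {d : ℕ} (M : Matrix (Fin d) (Fin d) ℝ) : Prop :=
  ∀ z ∈ spectrum ℂ (M.map (Complex.ofReal)), z.re < 0

namespace IHAux

open Filter Topology

attribute [local instance] Matrix.linftyOpNormedAddCommGroup Matrix.linftyOpNormedRing
  Matrix.linftyOpNormedAlgebra

variable {d : ℕ}

lemma mem_spectrum_iff_eig (M : Matrix (Fin d) (Fin d) ℂ) (z : ℂ) :
    z ∈ spectrum ℂ M ↔ ∃ x : Fin d → ℂ, x ≠ 0 ∧ M *ᵥ x = z • x := by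
  rw [spectrum.mem_iff, Algebra.algebraMap_eq_smul_one,
    Matrix.isUnit_iff_isUnit_det, isUnit_iff_ne_zero, not_not,
    ← Matrix.exists_mulVec_eq_zero_iff]
  constructor
  · rintro ⟨x, hx, hx0⟩
    rw [Matrix.sub_mulVec, Matrix.smul_mulVec, Matrix.one_mulVec] at hx0
    exact ⟨x, hx, (sub_eq_zero.mp hx0).symm⟩
  · rintro ⟨x, hx, hx0⟩
    refine ⟨x, hx, ?_⟩
    rw [Matrix.sub_mulVec, Matrix.smul_mulVec, Matrix.one_mulVec, hx0, sub_self]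

section NormLemmas

variable {𝕜 : Type*} [RCLike 𝕜]

lemma entry_nnnorm_le (M : Matrix (Fin d) (Fin d) 𝕜) (i j : Fin d) : ‖M i j‖₊ ≤ ‖M‖₊ := by
  rw [Matrix.linfty_opNNNorm_def]
  calc ‖M i j‖₊ ≤ ∑ k, ‖M i k‖₊ :=
        Finset.single_le_sum (f := fun k => ‖M i k‖₊) (fun k _ => zero_le) (Finset.mem_univ j)
    _ ≤ _ := Finset.le_sup (f := fun i => ∑ k, ‖M i k‖₊) (Finset.mem_univ i)

lemma entry_norm_le (M : Matrix (Fin d) (Fin d) 𝕜) (i j : Fin d) : ‖M i j‖ ≤ ‖M‖ :=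
  entry_nnnorm_le M i j

lemma tendsto_entry {ι : Type*} {l : Filter ι} {F : ι → Matrix (Fin d) (Fin d) 𝕜}
    {X : Matrix (Fin d) (Fin d) 𝕜} (h : Tendsto F l (𝓝 X)) (i j : Fin d) :
    Tendsto (fun n => F n i j) l (𝓝 (X i j)) := by
  rw [tendsto_iff_norm_sub_tendsto_zero]
  replace h := tendsto_iff_norm_sub_tendsto_zero.mp h
  refine squeeze_zero (fun n => norm_nonneg _) (fun n => ?_) h
  have : F n i j - X i j = (F n - X) i j := by simp
  rw [this]
  exact entry_norm_le _ i j

lemma hasSum_entry {f : ℕ → Matrix (Fin d) (Fin d) 𝕜} {X : Matrix (Fin d) (Fin d) 𝕜}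
    (h : HasSum f X) (i j : Fin d) : HasSum (fun n => f n i j) (X i j) := by
  have := tendsto_entry (l := (atTop : Filter (Finset ℕ))) h i j
  simpa [HasSum, Matrix.sum_apply] using this

end NormLemmas


lemma mul_entry_nonneg {X Y : Matrix (Fin d) (Fin d) ℝ} (hX : ∀ i j, 0 ≤ X i j)
    (hY : ∀ i j, 0 ≤ Y i j) : ∀ i j, 0 ≤ (X * Y) i j := fun i j => by
  rw [Matrix.mul_apply]
  exact Finset.sum_nonneg fun k _ => mul_nonneg (hX i k) (hY k j)

lemma pow_entry_nonneg {X : Matrix (Fin d) (Fin d) ℝ} (hX : ∀ i j, 0 ≤ X i j) :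
    ∀ (n : ℕ) i j, 0 ≤ (X ^ n) i j := by
  intro n
  induction n with
  | zero => intro i j; rw [pow_zero]; by_cases h : i = j <;> simp [Matrix.one_apply, h]
  | succ n ih =>
      intro i j
      rw [pow_succ]
      exact mul_entry_nonneg ih hX i j

lemma mulVec_nonneg {X : Matrix (Fin d) (Fin d) ℝ} (hX : ∀ i j, 0 ≤ X i j) {u : Fin d → ℝ}
    (hu : ∀ i, 0 ≤ u i) : ∀ i, 0 ≤ (X *ᵥ u) i := fun i => by
  rw [Matrix.mulVec, dotProduct]
  exact Finset.sum_nonneg fun k _ => mul_nonneg (hX i k) (hu k)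

lemma mulVec_mono {X : Matrix (Fin d) (Fin d) ℝ} (hX : ∀ i j, 0 ≤ X i j) {u w : Fin d → ℝ}
    (h : ∀ i, u i ≤ w i) : ∀ i, (X *ᵥ u) i ≤ (X *ᵥ w) i := fun i => by
  rw [Matrix.mulVec, Matrix.mulVec, dotProduct, dotProduct]
  exact Finset.sum_le_sum fun k _ => mul_le_mul_of_nonneg_left (h k) (hX i k)


lemma isHurwitz_transpose {M : Matrix (Fin d) (Fin d) ℝ} (h : IsHurwitz M) : IsHurwitz Mᵀ := by
  intro z hz
  apply h z
  have hmap : (Mᵀ).map Complex.ofReal = (M.map Complex.ofReal)ᵀ := by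
    ext i j
    simp [Matrix.transpose_apply, Matrix.map_apply]
  rw [hmap] at hz
  rw [spectrum.mem_iff] at hz ⊢
  intro hu
  apply hz
  rw [Algebra.algebraMap_eq_smul_one] at hu ⊢
  have heq : z • (1 : Matrix (Fin d) (Fin d) ℂ) - (M.map Complex.ofReal)ᵀ
      = (z • 1 - M.map Complex.ofReal)ᵀ := by
    rw [Matrix.transpose_sub, Matrix.transpose_smul, Matrix.transpose_one]
  rw [heq, Matrix.isUnit_iff_isUnit_det, Matrix.det_transpose, ← Matrix.isUnit_iff_isUnit_det]
  exact hu

lemma hurwitz_of_pos_vecMul_neg (M : Matrix (Fin d) (Fin d) ℝ) (hM : IsMetzler M)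
    (v : Fin d → ℝ) (hv : ∀ i, 0 < v i) (hvM : ∀ j, (v ᵥ* M) j < 0) : IsHurwitz M := by
  intro z hz
  by_contra hre
  push_neg at hre
  obtain ⟨x, hx, hx0⟩ := (mem_spectrum_iff_eig _ z).mp hz
  set a : Fin d → ℝ := fun i => ‖x i‖ with ha
  have ha0 : ∀ i, 0 ≤ a i := fun i => norm_nonneg _
  have key : ∀ j, z.re * a j ≤ ∑ i, M j i * a i := by
    intro j
    rcases eq_or_lt_of_le (ha0 j) with h0 | h0
    · rw [← h0, mul_zero]
      apply Finset.sum_nonneg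
      intro i _
      rcases eq_or_ne i j with rfl | hij
      · rw [← h0, mul_zero]
      · exact mul_nonneg (hM j i (Ne.symm hij)) (ha0 i)
    · have hrow : (M.map Complex.ofReal *ᵥ x) j = z * x j := by rw [hx0]; rfl
      have hrow' : ∑ i, (M j i : ℂ) * x i = z * x j := by
        simpa [Matrix.mulVec, dotProduct, Matrix.map_apply] using hrow
      have E := congrArg (fun w => (w * (starRingEnd ℂ) (x j)).re) hrow'
      simp only [Finset.sum_mul, Complex.re_sum] at E
      have E1 : ∀ i, ((M j i : ℂ) * x i * (starRingEnd ℂ) (x j)).re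
          = M j i * (x i * (starRingEnd ℂ) (x j)).re := by
        intro i
        rw [mul_assoc, Complex.re_ofReal_mul]
      have E2 : (z * x j * (starRingEnd ℂ) (x j)).re = z.re * (a j ^ 2) := by
        rw [mul_assoc, Complex.mul_conj, ← Complex.sq_norm]
        simp [ha, Complex.mul_re, ← Complex.ofReal_pow]
      rw [E2] at E
      have hsum : ∑ i, ((M j i : ℂ) * x i * (starRingEnd ℂ) (x j)).re
          ≤ ∑ i, M j i * (a i * a j) := by
        apply Finset.sum_le_sum
        intro i _
        rw [E1 i]
        rcases eq_or_ne i j with rfl | hij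
        · rw [Complex.mul_conj, ← Complex.sq_norm]
          simp [ha, sq]
        · refine mul_le_mul_of_nonneg_left ?_ (hM j i (Ne.symm hij))
          calc (x i * (starRingEnd ℂ) (x j)).re ≤ ‖x i * (starRingEnd ℂ) (x j)‖ :=
                Complex.re_le_norm _
            _ = a i * a j := by simp [ha, _root_.map_mul]
      rw [E] at hsum
      have hsum' : (z.re * a j) * a j ≤ (∑ i, M j i * a i) * a j := by
        calc (z.re * a j) * a j = z.re * a j ^ 2 := by ring
          _ ≤ ∑ i, M j i * (a i * a j) := hsum
          _ = (∑ i, M j i * a i) * a j := by rw [Finset.sum_mul]; simp [mul_assoc]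
      exact le_of_mul_le_mul_right hsum' h0
  -- final contradiction
  obtain ⟨j₀, hj₀⟩ : ∃ j, x j ≠ 0 := Function.ne_iff.mp hx
  have haj₀ : 0 < a j₀ := by simpa [ha] using (norm_pos_iff.mpr hj₀)
  have hvecMul : ∀ j, (v ᵥ* M) j = ∑ i, v i * M i j := by
    intro j; simp [Matrix.vecMul, dotProduct]
  have hT1 : ∑ j, (v ᵥ* M) j * a j < 0 := by
    have := Finset.sum_lt_sum (s := Finset.univ) (f := fun j => (v ᵥ* M) j * a j)
      (g := fun _ => (0:ℝ))
      (fun j _ => mul_nonpos_iff.mpr (Or.inr ⟨(hvM j).le, ha0 j⟩))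
      ⟨j₀, Finset.mem_univ _, mul_neg_of_neg_of_pos (hvM j₀) haj₀⟩
    simpa using this
  have hT2 : 0 ≤ ∑ j, (v ᵥ* M) j * a j := by
    have hTeq : ∑ j, (v ᵥ* M) j * a j = ∑ i, v i * ∑ j, M i j * a j := by
      simp only [hvecMul, Finset.sum_mul, Finset.mul_sum, mul_assoc]
      rw [Finset.sum_comm]
    rw [hTeq]
    have step : ∀ i, v i * (z.re * a i) ≤ v i * ∑ j, M i j * a j :=
      fun i => mul_le_mul_of_nonneg_left (key i) (hv i).le
    calc (0:ℝ) ≤ ∑ i, v i * (z.re * a i) := by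
          apply Finset.sum_nonneg
          intro i _
          exact mul_nonneg (hv i).le (mul_nonneg hre (ha0 i))
      _ ≤ ∑ i, v i * ∑ j, M i j * a j := Finset.sum_le_sum fun i _ => step i
  linarith

lemma exists_pos_mulVec_neg (A : Matrix (Fin d) (Fin d) ℝ) (hA : IsMetzler A)
    (hH : IsHurwitz A) : ∃ y : Fin d → ℝ, (∀ i, 0 < y i) ∧ ∀ j, (A *ᵥ y) j < 0 := by
  rcases Nat.eq_zero_or_pos d with rfl | hd
  · exact ⟨fun _ => 1, fun i => i.elim0, fun j => j.elim0⟩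
  haveI : Nonempty (Fin d) := ⟨⟨0, hd⟩⟩
  -- constants
  set m : ℝ := ‖A‖ + 1 with hm
  have hmpos : 0 < m := by positivity
  have hm2 : (0:ℝ) < 2 * m := by linarith
  -- the shifted nonnegative matrix
  set B : Matrix (Fin d) (Fin d) ℝ := A + m • (1 : Matrix (Fin d) (Fin d) ℝ) with hBdef
  have hB0 : ∀ i j, 0 ≤ B i j := by
    intro i j
    rcases eq_or_ne i j with rfl | hij
    · have h1 : |A i i| ≤ ‖A‖ := by
        rw [← Real.norm_eq_abs]; exact entry_norm_le A i i
      have := abs_le.mp h1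
      simp only [hBdef, Matrix.add_apply, Matrix.smul_apply, Matrix.one_apply_eq, smul_eq_mul,
        mul_one, hm]
      linarith [this.1]
    · simpa [hBdef, Matrix.add_apply, Matrix.smul_apply, Matrix.one_apply_ne hij]
        using hA i j hij
  have hBnorm : ‖B‖ ≤ ‖A‖ + m := by
    calc ‖B‖ ≤ ‖A‖ + ‖m • (1 : Matrix (Fin d) (Fin d) ℝ)‖ := norm_add_le _ _
      _ = ‖A‖ + |m| * ‖(1 : Matrix (Fin d) (Fin d) ℝ)‖ := by rw [norm_smul, Real.norm_eq_abs]
      _ = ‖A‖ + m := by rw [norm_one, abs_of_pos hmpos, mul_one]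
  -- the contraction T
  set T : Matrix (Fin d) (Fin d) ℝ := (2 * m)⁻¹ • B with hTdef
  have hT : ‖T‖ < 1 := by
    rw [hTdef, norm_smul, Real.norm_eq_abs, abs_of_pos (by positivity)]
    rw [inv_mul_lt_one₀ hm2]
    calc ‖B‖ ≤ ‖A‖ + m := hBnorm
      _ < 2 * m := by rw [hm]; linarith
  have hT0 : ∀ i j, 0 ≤ T i j := by
    intro i j
    simp only [hTdef, Matrix.smul_apply, smul_eq_mul]
    exact mul_nonneg (by positivity) (hB0 i j)
  -- geometric series
  set V : Matrix (Fin d) (Fin d) ℝ := ∑' n, T ^ n with hVdef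
  have hV1 : (1 - T) * V = 1 := mul_neg_geom_series T hT
  have hV2 : V * (1 - T) = 1 := geom_series_mul_neg T hT
  have hVsum : HasSum (fun n => T ^ n) V := (summable_geometric_of_norm_lt_one hT).hasSum
  have hV0 : ∀ i j, 0 ≤ V i j := fun i j =>
    (hasSum_entry hVsum i j).nonneg (fun n => pow_entry_nonneg hT0 n i j)
  -- R = inverse of (m•1 - A)
  set R : Matrix (Fin d) (Fin d) ℝ := (2 * m)⁻¹ • V with hRdef
  have hR0 : ∀ i j, 0 ≤ R i j := by
    intro i j
    simp only [hRdef, Matrix.smul_apply, smul_eq_mul]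
    exact mul_nonneg (by positivity) (hV0 i j)
  have hC : m • (1 : Matrix (Fin d) (Fin d) ℝ) - A = (2 * m) • ((1 : Matrix (Fin d) (Fin d) ℝ) - T) := by
    rw [smul_sub, hTdef, smul_smul, mul_inv_cancel₀ (ne_of_gt hm2), one_smul, hBdef]
    ext i j
    simp only [Matrix.sub_apply, Matrix.smul_apply, Matrix.add_apply, smul_eq_mul]
    ring
  have hCR : (m • (1 : Matrix (Fin d) (Fin d) ℝ) - A) * R = 1 := by
    rw [hC, hRdef, smul_mul_assoc, mul_smul_comm, smul_smul, mul_inv_cancel₀ (ne_of_gt hm2),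
      one_smul, hV1]
  have hRC : R * (m • (1 : Matrix (Fin d) (Fin d) ℝ) - A) = 1 := by
    rw [hC, hRdef, smul_mul_assoc, mul_smul_comm, smul_smul, inv_mul_cancel₀ (ne_of_gt hm2),
      one_smul, hV2]
  -- rows of R are nonzero
  have hRrow : ∀ i, 0 < ∑ j, R i j := by
    intro i
    rcases lt_or_ge 0 (∑ j, R i j) with h | h
    · exact h
    exfalso
    have hall : ∀ j, R i j = 0 := by
      intro j
      have h1 : ∑ j, R i j = 0 :=
        le_antisymm h (Finset.sum_nonneg fun j _ => hR0 i j)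
      exact (Finset.sum_eq_zero_iff_of_nonneg (fun j _ => hR0 i j)).mp h1 j (Finset.mem_univ j)
    have h2 := congrArg (fun X : Matrix (Fin d) (Fin d) ℝ => X i i) hRC
    simp [Matrix.mul_apply, hall] at h2
  -- A is invertible
  have hdet : A.det ≠ 0 := by
    intro h0
    obtain ⟨x, hx, hx0⟩ := (Matrix.exists_mulVec_eq_zero_iff).mpr h0
    have hmem : (0:ℂ) ∈ spectrum ℂ (A.map Complex.ofReal) := by
      rw [mem_spectrum_iff_eig]
      refine ⟨fun i => (x i : ℂ), ?_, ?_⟩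
      · intro hc
        apply hx
        funext i
        have := congrFun hc i
        simpa using this
      · funext j
        have hj := congrFun hx0 j
        simp only [Matrix.mulVec, dotProduct] at hj ⊢
        simp only [Matrix.map_apply, zero_smul, Pi.zero_apply]
        rw [show (∑ i, (A j i : ℂ) * (x i : ℂ)) = ((∑ i, A j i * x i : ℝ) : ℂ) by push_cast; ring]
        rw [hj]
        simp
    have := hH 0 hmem
    simp at this
  -- the candidate vector
  set negOne : Fin d → ℝ := fun _ => (-1 : ℝ) with hnegOne
  set ones : Fin d → ℝ := fun _ => (1 : ℝ) with hones
  set y : Fin d → ℝ := A⁻¹ *ᵥ negOne with hydef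
  have hAy : A *ᵥ y = negOne := by
    rw [hydef, Matrix.mulVec_mulVec, Matrix.mul_nonsing_inv A (isUnit_iff_ne_zero.mpr hdet),
      Matrix.one_mulVec]
  have hCy : (m • (1 : Matrix (Fin d) (Fin d) ℝ) - A) *ᵥ y = m • y + ones := by
    rw [Matrix.sub_mulVec, Matrix.smul_mulVec, Matrix.one_mulVec, hAy]
    funext i
    simp [hnegOne, hones]
  have hyrec : y = (m • R) *ᵥ y + R *ᵥ ones := by
    conv_lhs => rw [← Matrix.one_mulVec y, ← hRC, ← Matrix.mulVec_mulVec, hCy]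
    rw [Matrix.mulVec_add, Matrix.mulVec_smul]
    conv_rhs => rw [Matrix.smul_mulVec]
  -- iteration inequality
  set Mm : Matrix (Fin d) (Fin d) ℝ := m • R with hMmdef
  have hMm0 : ∀ i j, 0 ≤ Mm i j := by
    intro i j
    simp only [hMmdef, Matrix.smul_apply, smul_eq_mul]
    exact mul_nonneg hmpos.le (hR0 i j)
  have hones0 : ∀ i, (0:ℝ) ≤ ones i := fun i => by norm_num [hones]
  have hRones0 : ∀ i, 0 ≤ (R *ᵥ ones) i := mulVec_nonneg hR0 hones0
  have hiter : ∀ n : ℕ, ∀ i, ((Mm ^ (n + 1)) *ᵥ y) i + (R *ᵥ ones) i ≤ y i := by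
    intro n
    induction n with
    | zero =>
        intro i
        rw [pow_one]
        exact le_of_eq (congrFun hyrec i).symm
    | succ n ih =>
        intro i
        have hstep : Mm *ᵥ ((Mm ^ (n + 1)) *ᵥ y) = (Mm ^ (n + 2)) *ᵥ y := by
          rw [Matrix.mulVec_mulVec, ← pow_succ']
        have h1 : ((Mm ^ (n + 2)) *ᵥ y) i ≤ (Mm *ᵥ (y - R *ᵥ ones)) i := by
          rw [← hstep]
          exact mulVec_mono hMm0 (fun k => by have := ih k; simp [Pi.sub_apply]; linarith) i
        have h2 : (Mm *ᵥ (y - R *ᵥ ones)) i = (Mm *ᵥ y) i - (Mm *ᵥ (R *ᵥ ones)) i := by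
          rw [Matrix.mulVec_sub]
          rfl
        have h3 : (Mm *ᵥ y) i = y i - (R *ᵥ ones) i := by
          have := congrFun hyrec i
          simp only [Pi.add_apply] at this
          linarith
        have h4 : 0 ≤ (Mm *ᵥ (R *ᵥ ones)) i := mulVec_nonneg hMm0 hRones0 i
        rw [h2, h3] at h1
        linarith
  -- complex side
  set φ : Matrix (Fin d) (Fin d) ℝ →+* Matrix (Fin d) (Fin d) ℂ :=
    (Complex.ofRealHom).mapMatrix with hφdef
  have hφapply : ∀ (X : Matrix (Fin d) (Fin d) ℝ) i j, φ X i j = (X i j : ℂ) := fun X i j => rfl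
  set Ac : Matrix (Fin d) (Fin d) ℂ := A.map Complex.ofReal with hAcdef
  haveI : Nontrivial (Matrix (Fin d) (Fin d) ℂ) := by
    refine ⟨0, 1, fun h => ?_⟩
    have := congrFun (congrFun h ⟨0, hd⟩) ⟨0, hd⟩
    simp [Matrix.one_apply] at this
  obtain ⟨lam0, hlam0, hmax⟩ := (spectrum.isCompact Ac).exists_isMaxOn (spectrum.nonempty Ac)
    (Complex.continuous_re.continuousOn)
  set δ : ℝ := -lam0.re with hδdef
  have hδ : 0 < δ := by
    have := hH lam0 hlam0
    rw [hδdef]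
    linarith
  set r : ℝ := m / (m + δ) with hrdef
  have hr0 : 0 ≤ r := by positivity
  have hr1 : r < 1 := by
    rw [hrdef, div_lt_one (by linarith)]
    linarith
  have hmne : ((m:ℝ) : ℂ) ≠ 0 := by
    exact_mod_cast ne_of_gt hmpos
  have hCRc : φ (m • (1 : Matrix (Fin d) (Fin d) ℝ) - A) * φ R = 1 := by
    rw [← RingHom.map_mul, hCR, RingHom.map_one]
  have hφMm : φ Mm = (m : ℂ) • φ R := by
    ext i j
    rw [hφapply]
    simp only [hMmdef, Matrix.smul_apply, smul_eq_mul]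
    push_cast
    rw [hφapply]
  have hφC : φ (m • (1 : Matrix (Fin d) (Fin d) ℝ) - A) = (m:ℂ) • 1 - Ac := by
    ext i j
    rw [hφapply]
    simp only [Matrix.sub_apply, Matrix.smul_apply, smul_eq_mul, hAcdef, Matrix.map_apply]
    rcases eq_or_ne i j with rfl | hij
    · rw [Matrix.one_apply_eq, Matrix.one_apply_eq]
      push_cast
      ring
    · rw [Matrix.one_apply_ne hij, Matrix.one_apply_ne hij]
      push_cast
      ring
  have hMc : ∀ μ ∈ spectrum ℂ (φ Mm), ‖μ‖ ≤ r := by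
    intro μ hμ
    obtain ⟨x, hx, hx0⟩ := (mem_spectrum_iff_eig _ μ).mp hμ
    have hμ0 : μ ≠ 0 := by
      rintro rfl
      have h5 : ((m:ℂ)) • (φ R *ᵥ x) = 0 := by
        rw [← Matrix.smul_mulVec, ← hφMm, hx0, zero_smul]
      have hRx : φ R *ᵥ x = 0 := by
        rcases smul_eq_zero.mp h5 with h | h
        · exact absurd h hmne
        · exact h
      apply hx
      have h6 : φ (m • (1 : Matrix (Fin d) (Fin d) ℝ) - A) *ᵥ (φ R *ᵥ x) = 0 := by
        rw [hRx, Matrix.mulVec_zero]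
      rwa [Matrix.mulVec_mulVec, hCRc, Matrix.one_mulVec] at h6
    have hcne : ((m:ℂ)⁻¹ * μ) ≠ 0 := mul_ne_zero (inv_ne_zero hmne) hμ0
    have hRx : φ R *ᵥ x = ((m:ℂ)⁻¹ * μ) • x := by
      have h5 : (m:ℂ) • (φ R *ᵥ x) = μ • x := by
        rw [← Matrix.smul_mulVec, ← hφMm, hx0]
      calc φ R *ᵥ x = (m:ℂ)⁻¹ • ((m:ℂ) • (φ R *ᵥ x)) := by
            rw [smul_smul, inv_mul_cancel₀ hmne, one_smul]
        _ = (m:ℂ)⁻¹ • (μ • x) := by rw [h5]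
        _ = ((m:ℂ)⁻¹ * μ) • x := by rw [smul_smul]
    have hCx : φ (m • (1 : Matrix (Fin d) (Fin d) ℝ) - A) *ᵥ x = ((m:ℂ)⁻¹ * μ)⁻¹ • x := by
      have h6 : φ (m • (1 : Matrix (Fin d) (Fin d) ℝ) - A) *ᵥ (φ R *ᵥ x) = x := by
        rw [Matrix.mulVec_mulVec, hCRc, Matrix.one_mulVec]
      rw [hRx, Matrix.mulVec_smul] at h6
      calc φ (m • (1 : Matrix (Fin d) (Fin d) ℝ) - A) *ᵥ x
          = ((m:ℂ)⁻¹ * μ)⁻¹ • (((m:ℂ)⁻¹ * μ) • (φ (m • (1 : Matrix (Fin d) (Fin d) ℝ) - A) *ᵥ x)) := by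
            rw [smul_smul, inv_mul_cancel₀ hcne, one_smul]
        _ = ((m:ℂ)⁻¹ * μ)⁻¹ • x := by rw [h6]
    set lam : ℂ := (m:ℂ) - ((m:ℂ)⁻¹ * μ)⁻¹ with hlamdef
    have hAcx : Ac *ᵥ x = lam • x := by
      rw [hφC, Matrix.sub_mulVec, Matrix.smul_mulVec, Matrix.one_mulVec] at hCx
      rw [hlamdef, sub_smul]
      rw [← hCx]
      abel
    have hlammem : lam ∈ spectrum ℂ Ac := (mem_spectrum_iff_eig Ac lam).mpr ⟨x, hx, hAcx⟩
    have hlamre : lam.re ≤ -δ := by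
      have h := hmax hlammem
      simp only [Set.mem_setOf_eq] at h
      rw [hδdef]
      linarith
    have h7 : m + δ ≤ ‖(m:ℂ) - lam‖ := by
      have h8 : ((m:ℂ) - lam).re ≤ ‖(m:ℂ) - lam‖ := Complex.re_le_norm _
      have h9 : ((m:ℂ) - lam).re = m - lam.re := by simp
      linarith
    have hc : (m:ℂ)⁻¹ * μ = ((m:ℂ) - lam)⁻¹ := by
      rw [show (m:ℂ) - lam = ((m:ℂ)⁻¹ * μ)⁻¹ by rw [hlamdef]; ring, inv_inv]
    have hμeq : μ = (m:ℂ) * ((m:ℂ) - lam)⁻¹ := by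
      rw [← hc, ← mul_assoc, mul_inv_cancel₀ hmne, one_mul]
    rw [hμeq, norm_mul, norm_inv]
    have hnm : ‖((m:ℝ):ℂ)‖ = m := by
      rw [Complex.norm_real, Real.norm_eq_abs, abs_of_pos hmpos]
    rw [hnm, hrdef, div_eq_mul_inv]
    have hpos : (0:ℝ) < m + δ := by linarith
    exact mul_le_mul_of_nonneg_left (by
      apply inv_anti₀ hpos h7) hmpos.le
  -- spectral radius bound and Gelfand
  have hρ : spectralRadius ℂ (φ Mm) ≤ ENNReal.ofReal r := by
    unfold spectralRadius
    refine iSup₂_le fun μ hμ => ?_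
    rw [← enorm_eq_nnnorm, ← ofReal_norm]
    exact ENNReal.ofReal_le_ofReal (hMc μ hμ)
  set r1 : ℝ := (r + 1) / 2 with hr1def
  have hr1a : r < r1 := by rw [hr1def]; linarith
  have hr1b : r1 < 1 := by rw [hr1def]; linarith
  have hr1pos : 0 < r1 := by rw [hr1def]; linarith
  have hglt : spectralRadius ℂ (φ Mm) < ENNReal.ofReal r1 :=
    lt_of_le_of_lt hρ ((ENNReal.ofReal_lt_ofReal_iff hr1pos).mpr hr1a)
  have hev : ∀ᶠ n : ℕ in atTop, (‖(φ Mm) ^ n‖₊ : ENNReal) ^ (1/(n:ℝ)) < ENNReal.ofReal r1 :=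
    (spectrum.pow_nnnorm_pow_one_div_tendsto_nhds_spectralRadius (φ Mm)).eventually_lt_const hglt
  have hnormMm : ∀ᶠ n : ℕ in atTop, ‖(φ Mm) ^ n‖ ≤ r1 ^ n := by
    filter_upwards [hev, Filter.eventually_ge_atTop 1] with n hn hn1
    have hne : (n:ℝ) ≠ 0 := Nat.cast_ne_zero.mpr (by omega)
    have h8 : (((‖(φ Mm) ^ n‖₊ : ENNReal) ^ (1/(n:ℝ))) ^ (n:ℕ)) < (ENNReal.ofReal r1) ^ (n:ℕ) :=
      ENNReal.pow_lt_pow_left (by omega) hn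
    rw [← ENNReal.rpow_natCast ((‖(φ Mm) ^ n‖₊ : ENNReal) ^ (1/(n:ℝ))) n, ← ENNReal.rpow_mul,
      one_div_mul_cancel hne, ENNReal.rpow_one] at h8
    rw [← ENNReal.ofReal_pow hr1pos.le] at h8
    rw [← enorm_eq_nnnorm, ← ofReal_norm] at h8
    exact le_of_lt ((ENNReal.ofReal_lt_ofReal_iff_of_nonneg (norm_nonneg _)).mp h8)
  have hentry : ∀ i j, Tendsto (fun n => (Mm ^ n) i j) atTop (𝓝 0) := by
    intro i j
    apply squeeze_zero_norm'
    · filter_upwards [hnormMm] with n hn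
      have hmap : (φ Mm) ^ n = φ (Mm ^ n) := (map_pow φ Mm n).symm
      calc ‖(Mm ^ n) i j‖ = ‖(φ (Mm ^ n)) i j‖ := by
            rw [hφapply, Complex.norm_real]
        _ ≤ ‖φ (Mm ^ n)‖ := entry_norm_le _ i j
        _ = ‖(φ Mm) ^ n‖ := by rw [hmap]
        _ ≤ r1 ^ n := hn
    · exact tendsto_pow_atTop_nhds_zero_of_lt_one hr1pos.le hr1b
  have hvecTendsto : ∀ i, Tendsto (fun n => ((Mm ^ n) *ᵥ y) i) atTop (𝓝 0) := by
    intro i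
    have heq : (fun n => ((Mm ^ n) *ᵥ y) i) = fun n => ∑ j, (Mm ^ n) i j * y j := by
      funext n
      rw [Matrix.mulVec, dotProduct]
    rw [heq]
    have := tendsto_finset_sum (Finset.univ : Finset (Fin d))
      (fun j _ => (hentry i j).mul_const (y j))
    simpa using this
  refine ⟨y, ?_, ?_⟩
  · intro i
    have htend : Tendsto (fun n : ℕ => ((Mm ^ (n+1)) *ᵥ y) i + (R *ᵥ ones) i) atTop
        (𝓝 (0 + (R *ᵥ ones) i)) :=
      (((hvecTendsto i).comp (tendsto_add_atTop_nat 1)).add tendsto_const_nhds)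
    have hle := le_of_tendsto htend (Filter.Eventually.of_forall fun n => hiter n i)
    have hpos : 0 < (R *ᵥ ones) i := by
      have h10 : (R *ᵥ ones) i = ∑ j, R i j := by
        rw [Matrix.mulVec, dotProduct]
        simp [hones]
      rw [h10]
      exact hRrow i
    rw [zero_add] at hle
    linarith
  · intro j
    rw [hAy]
    norm_num [hnegOne]


end IHAux

theorem interval_hurwitz_iff_upper_bound {d : ℕ}
    (Am Ap : Matrix (Fin d) (Fin d) ℝ)
    (hAm : IsMetzler Am) (hAp : IsMetzler Ap) (hle : ∀ i j, Am i j ≤ Ap i j) :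
    ((∀ M : Matrix (Fin d) (Fin d) ℝ, IsMetzler M → (∀ i j, Am i j ≤ M i j) → (∀ i j, M i j ≤ Ap i j) → IsHurwitz M)
      ↔ IsHurwitz Ap)
    ∧ (IsHurwitz Ap ↔ ∃ v : Fin d → ℝ, (∀ i, 0 < v i) ∧ ∀ j, (v ᵥ* Ap) j < 0) := by
  have L2 : IsHurwitz Ap → ∃ v : Fin d → ℝ, (∀ i, 0 < v i) ∧ ∀ j, (v ᵥ* Ap) j < 0 := by
    intro h
    have hT : IsMetzler Apᵀ := fun i j hij => hAp j i (Ne.symm hij)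
    obtain ⟨y, hy, hAy⟩ := IHAux.exists_pos_mulVec_neg Apᵀ hT (IHAux.isHurwitz_transpose h)
    refine ⟨y, hy, fun j => ?_⟩
    have hvm : y ᵥ* Ap = Apᵀ *ᵥ y := (Matrix.mulVec_transpose Ap y).symm
    rw [hvm]
    exact hAy j
  refine ⟨⟨fun h => h Ap hAp hle (fun i j => le_refl _), ?_⟩,
    fun h => L2 h, fun ⟨v, hv, hvAp⟩ => IHAux.hurwitz_of_pos_vecMul_neg Ap hAp v hv hvAp⟩
  intro hH M hM h1 h2
  obtain ⟨v, hv, hvAp⟩ := L2 hH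
  apply IHAux.hurwitz_of_pos_vecMul_neg M hM v hv
  intro j
  have hcmp : (v ᵥ* M) j ≤ (v ᵥ* Ap) j := by
    rw [Matrix.vecMul, Matrix.vecMul, dotProduct, dotProduct]
    exact Finset.sum_le_sum fun i _ => mul_le_mul_of_nonneg_left (h2 i j) (hv i).le
  exact lt_of_le_of_lt hcmp (hvAp j)
end

section
/- Let M be a d×d Metzler matrix, b = e_i, c = e_j standard basis vectors with i ≠ j. Then the row vector [cᵀb, cᵀMb, …, cᵀM^{d−1}b] is nonzero if and only if there is a directed path from node i to node j in the directed graph on vertices {1,…,d} with an edge from m to n (m ≠ n) whenever M_{nm} ≠ 0. -/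
open Matrix

/-- If the (j,i) entry of all powers `M^k` with `k < d` vanish, then all powers'
(j,i) entries vanish, by Cayley–Hamilton. -/
lemma entry_pow_eq_zero_aux {d : ℕ} (M : Matrix (Fin d) (Fin d) ℝ) (i j : Fin d)
    (h : ∀ k < d, (M ^ k) j i = 0) : ∀ k, (M ^ k) j i = 0 := by
  have hmon := M.charpoly_monic
  have hdeg : M.charpoly.natDegree = d := by
    rw [Matrix.charpoly_natDegree_eq_dim, Fintype.card_fin]
  have haev : Polynomial.aeval M M.charpoly = 0 := M.aeval_self_charpoly
  rw [Polynomial.aeval_eq_sum_range, hdeg, Finset.sum_range_succ] at haev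
  have hcoeff : M.charpoly.coeff d = 1 := by
    have h1 := hmon.coeff_natDegree; rwa [hdeg] at h1
  rw [hcoeff, one_smul] at haev
  have hMd : M ^ d = -∑ m ∈ Finset.range d, M.charpoly.coeff m • M ^ m :=
    eq_neg_of_add_eq_zero_right haev
  intro k
  induction k using Nat.strong_induction_on with
  | _ k ih =>
    by_cases hk : k < d
    · exact h k hk
    · push_neg at hk
      have hsplit : M ^ k = M ^ (k - d) * M ^ d := by
        rw [← pow_add]; congr 1; omega
      have h1 : M ^ k = -∑ m ∈ Finset.range d, M.charpoly.coeff m • M ^ (k - d + m) := by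
        rw [hsplit, hMd, Matrix.mul_neg, Matrix.mul_sum]
        congr 1
        refine Finset.sum_congr rfl fun m hm => ?_
        rw [Matrix.mul_smul, ← pow_add]
      rw [h1]
      simp only [Matrix.neg_apply, Matrix.sum_apply, Matrix.smul_apply, smul_eq_mul]
      rw [Finset.sum_eq_zero, neg_zero]
      intro m hm
      rw [ih (k - d + m) (by simp only [Finset.mem_range] at hm; omega), mul_zero]

/-- If `N` lies in the subalgebra generated by `M` and all (j,i) entries of powers of
`M` vanish, then so do those of powers of `N`. -/
lemma entry_adjoin_zero {d : ℕ} (M N : Matrix (Fin d) (Fin d) ℝ) (i j : Fin d)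
    (hN : N ∈ Algebra.adjoin ℝ ({M} : Set (Matrix (Fin d) (Fin d) ℝ)))
    (h : ∀ k, (M ^ k) j i = 0) : ∀ k, (N ^ k) j i = 0 := by
  intro k
  have hk : N ^ k ∈ Algebra.adjoin ℝ ({M} : Set (Matrix (Fin d) (Fin d) ℝ)) := pow_mem hN k
  rw [Algebra.adjoin_singleton_eq_range_aeval] at hk
  obtain ⟨q, hq⟩ := hk
  have hq' : (Polynomial.aeval M) q = N ^ k := hq
  rw [← hq', Polynomial.aeval_eq_sum_range]
  simp only [Matrix.sum_apply, Matrix.smul_apply, smul_eq_mul]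
  exact Finset.sum_eq_zero fun m _ => by rw [h m, mul_zero]

lemma pow_entry_nonneg {d : ℕ} (N : Matrix (Fin d) (Fin d) ℝ)
    (h : ∀ m n, 0 ≤ N m n) : ∀ (k : ℕ) (m n : Fin d), 0 ≤ (N ^ k) m n := by
  intro k
  induction k with
  | zero =>
    intro m n
    by_cases h' : m = n <;> simp [Matrix.one_apply, h']
  | succ k ih =>
    intro m n
    rw [pow_succ, Matrix.mul_apply]
    exact Finset.sum_nonneg fun l _ => mul_nonneg (ih m l) (h l n)

theorem output_controllability_iff_path {d : ℕ}
    (M : Matrix (Fin d) (Fin d) ℝ) (hM : IsMetzler M)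
    (i j : Fin d) (hij : i ≠ j) :
    (∃ k < d, (Pi.single j (1 : ℝ) ᵥ* (M ^ k)) ⬝ᵥ Pi.single i (1 : ℝ) ≠ 0) ↔
      Relation.ReflTransGen (fun m n : Fin d => m ≠ n ∧ M n m ≠ 0) i j := by
  have hentry : ∀ k : ℕ,
      (Pi.single j (1 : ℝ) ᵥ* (M ^ k)) ⬝ᵥ Pi.single i (1 : ℝ) = (M ^ k) j i := by
    intro k; simp [Matrix.single_vecMul, dotProduct_single]
  simp only [hentry]
  constructor
  · rintro ⟨k, -, hk⟩
    clear hij hentry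
    induction k generalizing i with
    | zero =>
      rw [pow_zero] at hk
      by_cases h' : j = i
      · exact h' ▸ Relation.ReflTransGen.refl
      · exact absurd (Matrix.one_apply_ne h') hk
    | succ k ih =>
      rw [pow_succ, Matrix.mul_apply] at hk
      obtain ⟨l, -, hl⟩ := Finset.exists_ne_zero_of_sum_ne_zero hk
      have h1 : (M ^ k) j l ≠ 0 := left_ne_zero_of_mul hl
      have h2 : M l i ≠ 0 := right_ne_zero_of_mul hl
      by_cases hil : i = l
      · subst hil; exact ih i h1
      · exact Relation.ReflTransGen.head ⟨hil, h2⟩ (ih l h1)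
  · intro hpath
    by_contra hcon
    push_neg at hcon
    have hallM : ∀ k, (M ^ k) j i = 0 := entry_pow_eq_zero_aux M i j hcon
    set c : ℝ := 1 + ∑ m, |M m m| with hc
    set N : Matrix (Fin d) (Fin d) ℝ := M + c • 1 with hNdef
    have hmem : N ∈ Algebra.adjoin ℝ ({M} : Set (Matrix (Fin d) (Fin d) ℝ)) := by
      refine add_mem (Algebra.subset_adjoin rfl) ?_
      exact Subalgebra.smul_mem _ (one_mem _) c
    have hallN : ∀ k, (N ^ k) j i = 0 := entry_adjoin_zero M N i j hmem hallM
    have hNnn : ∀ m n, 0 ≤ N m n := by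
      intro m n
      by_cases h' : m = n
      · subst h'
        have h1 : |M m m| ≤ ∑ l, |M l l| :=
          Finset.single_le_sum (f := fun l => |M l l|) (fun l _ => abs_nonneg _) (Finset.mem_univ m)
        have h2 := neg_abs_le (M m m)
        simp only [hNdef, hc, Matrix.add_apply, Matrix.smul_apply, Matrix.one_apply_eq,
          smul_eq_mul, mul_one]
        linarith
      · have : N m n = M m n := by
          simp [hNdef, Matrix.add_apply, Matrix.smul_apply, Matrix.one_apply_ne h']
        rw [this]
        exact hM m n h'
    have key : ∀ a : Fin d,
        Relation.ReflTransGen (fun m n : Fin d => m ≠ n ∧ M n m ≠ 0) a j →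
        ∃ k, 0 < (N ^ k) j a := by
      intro a h
      induction h using Relation.ReflTransGen.head_induction_on with
      | refl => exact ⟨0, by simp [Matrix.one_apply]⟩
      | @head a c' hac hcb ih =>
        obtain ⟨k, hk⟩ := ih
        refine ⟨k + 1, ?_⟩
        rw [pow_succ, Matrix.mul_apply]
        have hNca : 0 < N c' a := by
          have hle : 0 ≤ M c' a := hM c' a (Ne.symm hac.1)
          have hne : M c' a ≠ 0 := hac.2
          have : N c' a = M c' a := by
            simp [hNdef, Matrix.add_apply, Matrix.smul_apply,
              Matrix.one_apply_ne (Ne.symm hac.1)]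
          rw [this]
          exact lt_of_le_of_ne hle (Ne.symm hne)
        calc (0 : ℝ) < (N ^ k) j c' * N c' a := mul_pos hk hNca
          _ ≤ ∑ l, (N ^ k) j l * N l a :=
            Finset.single_le_sum
              (fun l _ => mul_nonneg (pow_entry_nonneg N hNnn k j l) (hNnn l a))
              (Finset.mem_univ c')
    obtain ⟨k, hk⟩ := key i hpath
    rw [hallN k] at hk
    exact lt_irrefl 0 hk
end

section
/- Let A⁻ ≤ A⁺ be d×d Metzler matrices and fix indices i, j. Suppose there exist a nonnegative vector w₋ ∈ ℝ^d and a scalar μ₋ ≥ 0 such that w₋ᵀe_i > 0, w₋ᵀ(A⁻ − μ₋I) + e_jᵀ = 0, and A⁻ − μ₋I is Hurwitz stable. Then for every Metzler matrix A with A⁻ ≤ A ≤ A⁺ there exist a nonnegative vector w and a scalar μ ≥ 0 with wᵀe_i > 0 and wᵀ(A − μI) + e_jᵀ = 0. -/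
open Matrix Finset Filter

/-- Entrywise nonnegativity and bound for powers of a nonnegative matrix. -/
lemma pow_entry_nonneg_and_le {d : ℕ} {B : Matrix (Fin d) (Fin d) ℝ} {K : ℝ}
    (hB : ∀ k l, 0 ≤ B k l) (hK : ∀ k l, B k l ≤ K) (hK0 : 0 ≤ K) :
    ∀ n k l, 0 ≤ (B ^ n) k l ∧ (B ^ n) k l ≤ (d * K + 1) ^ n := by
  intro n
  induction n with
  | zero =>
    intro k l
    simp only [pow_zero, Matrix.one_apply]
    split <;> norm_num
  | succ n ih =>
    intro k l
    rw [pow_succ, Matrix.mul_apply]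
    constructor
    · exact Finset.sum_nonneg fun m _ => mul_nonneg (ih k m).1 (hB m l)
    · calc (∑ m, (B ^ n) k m * B m l) ≤ ∑ _m : Fin d, (d * K + 1) ^ n * K := by
            refine Finset.sum_le_sum fun m _ => ?_
            exact mul_le_mul (ih k m).2 (hK m l) (hB m l) (by positivity)
        _ = d * K * (d * K + 1) ^ n := by
            rw [Finset.sum_const, card_univ, Fintype.card_fin]; ring
        _ ≤ (d * K + 1) ^ (n + 1) := by
            rw [pow_succ]
            have h1 : (0:ℝ) ≤ (d * K + 1) ^ n := by positivity
            nlinarith [h1]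

/-- Entrywise monotonicity of matrix powers for nonnegative matrices. -/
lemma pow_entry_mono {d : ℕ} {B1 B2 : Matrix (Fin d) (Fin d) ℝ}
    (h0 : ∀ k l, 0 ≤ B1 k l) (h : ∀ k l, B1 k l ≤ B2 k l) :
    ∀ n k l, 0 ≤ (B1 ^ n) k l ∧ (B1 ^ n) k l ≤ (B2 ^ n) k l := by
  intro n
  induction n with
  | zero =>
    intro k l
    simp only [pow_zero, Matrix.one_apply]
    constructor
    · split <;> norm_num
    · rfl
  | succ n ih =>
    intro k l
    rw [pow_succ, pow_succ, Matrix.mul_apply, Matrix.mul_apply]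
    constructor
    · exact Finset.sum_nonneg fun m _ => mul_nonneg (ih k m).1 (h0 m l)
    · refine Finset.sum_le_sum fun m _ => ?_
      exact mul_le_mul (ih k m).2 (h m l) (h0 m l)
        (le_trans (ih k m).1 (ih k m).2)

/-- If the Metzler shift `Am - μm•1` is Hurwitz and a nonnegative `wm` with `wm i ≠ 0`
solves `wm ᵥ* (Am - μm•1) = -e_j`, then `i` is reachable from `j` in `Am + c•1`. -/
lemma reach_of_hurwitz {d : ℕ} (Am : Matrix (Fin d) (Fin d) ℝ) (μm c : ℝ) (i j : Fin d)
    (wm : Fin d → ℝ) (hwi : wm i ≠ 0)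
    (heqv : wm ᵥ* (Am - μm • (1 : Matrix (Fin d) (Fin d) ℝ)) = - Pi.single j 1)
    (hH : IsHurwitz (Am - μm • (1 : Matrix (Fin d) (Fin d) ℝ)))
    (hBm0 : ∀ k l, (0:ℝ) ≤ (Am + c • (1 : Matrix (Fin d) (Fin d) ℝ)) k l) :
    ∃ n, ((Am + c • (1 : Matrix (Fin d) (Fin d) ℝ)) ^ n) j i ≠ 0 := by
  classical
  set Bm := Am + c • (1 : Matrix (Fin d) (Fin d) ℝ) with hBmdef
  set N := Am - μm • (1 : Matrix (Fin d) (Fin d) ℝ) with hNdef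
  by_contra hcon
  push_neg at hcon
  haveI : DecidableEq (Matrix (Fin d) (Fin d) ℝ) := Classical.decEq _
  haveI := Classical.decPred (fun k : Fin d => ∀ n, (Bm ^ n) j k = 0)
  set S : Finset (Fin d) := Finset.univ.filter (fun k => ∀ n, (Bm ^ n) j k = 0) with hSdef
  have hSmem : ∀ k, k ∈ S ↔ ∀ n, (Bm ^ n) j k = 0 := by
    intro k; rw [hSdef, Finset.mem_filter]; simp
  have hpow : ∀ n k l, 0 ≤ (Bm ^ n) k l :=
    fun n k l => (pow_entry_mono hBm0 (fun _ _ => le_refl _) n k l).1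
  have hiS : i ∈ S := (hSmem i).mpr hcon
  have hjS : j ∉ S := by
    intro h
    have := (hSmem j).mp h 0
    simp [Matrix.one_apply] at this
  have hedge : ∀ l k, l ∉ S → k ∈ S → Bm l k = 0 := by
    intro l k hl hk
    rw [hSmem, not_forall] at hl
    obtain ⟨m, hm⟩ := hl
    have hml : 0 < (Bm ^ m) j l := lt_of_le_of_ne (hpow m j l) (Ne.symm hm)
    have hz : (Bm ^ (m + 1)) j k = 0 := (hSmem k).mp hk (m + 1)
    rw [pow_succ, Matrix.mul_apply] at hz
    have hterm := (Finset.sum_eq_zero_iff_of_nonneg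
      (fun t _ => mul_nonneg (hpow m j t) (hBm0 t k))).mp hz l (Finset.mem_univ l)
    rcases mul_eq_zero.mp hterm with h | h
    · exact absurd h (ne_of_gt hml)
    · exact h
  have hNoff : ∀ l k, l ∉ S → k ∈ S → N l k = 0 := by
    intro l k hl hk
    have hlk : l ≠ k := fun h => hl (h ▸ hk)
    have h1 : (1 : Matrix (Fin d) (Fin d) ℝ) l k = 0 := Matrix.one_apply_ne hlk
    have hB := hedge l k hl hk
    rw [hBmdef] at hB
    simp only [Matrix.add_apply, Matrix.smul_apply, h1, smul_eq_mul, mul_zero, add_zero] at hB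
    rw [hNdef]
    simp [Matrix.sub_apply, Matrix.smul_apply, h1, hB]
  have sum_conv : ∀ (f : Fin d → ℝ), (∀ l, l ∉ S → f l = 0) →
      ∑ a : S, f a = ∑ l, f l := by
    intro f hf
    rw [Finset.sum_coe_sort S f]
    rw [← Finset.sum_filter_add_sum_filter_not Finset.univ (· ∈ S) f]
    have hz : ∑ l ∈ Finset.univ.filter (fun l => ¬ l ∈ S), f l = 0 :=
      Finset.sum_eq_zero fun l hl => hf l (Finset.mem_filter.mp hl).2
    rw [hz, add_zero]
    congr 1
    ext l
    simp
  set N' : Matrix S S ℝ := fun a b => N a b with hN'def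
  have hker : (fun a : S => wm a) ᵥ* N' = 0 := by
    funext b
    have hbj : (b : Fin d) ≠ j := fun h => hjS (h ▸ b.2)
    have h1 : (wm ᵥ* N) b = 0 := by
      rw [heqv]
      simp [Pi.single_eq_of_ne hbj]
    simp only [Matrix.vecMul, dotProduct] at h1 ⊢
    rw [Pi.zero_apply]
    rw [show ∑ a : S, wm a * N' a b = ∑ a : S, wm a * N a b from rfl]
    rw [sum_conv (fun l => wm l * N l b)
      (fun l hl => by show wm l * N l b = 0; rw [hNoff l b hl b.2, mul_zero])]
    exact h1
  have hune : (fun a : S => wm a) ≠ 0 := by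
    intro h
    have := congrFun h ⟨i, hiS⟩
    exact hwi this
  have hdet' : N'.det = 0 := Matrix.exists_vecMul_eq_zero_iff.mp ⟨_, hune, hker⟩
  obtain ⟨v, hv0, hvz⟩ := Matrix.exists_mulVec_eq_zero_iff.mpr hdet'
  set vt : Fin d → ℝ := fun k => if h : k ∈ S then v ⟨k, h⟩ else 0 with hvtdef
  have hvt0 : vt ≠ 0 := by
    obtain ⟨a, ha⟩ := Function.ne_iff.mp hv0
    intro h
    apply ha
    have := congrFun h a
    simpa [hvtdef, a.2] using this
  have hNvt : N *ᵥ vt = 0 := by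
    funext k
    simp only [Matrix.mulVec, dotProduct, Pi.zero_apply]
    have hoff : ∀ l, l ∉ S → (fun l => N k l * vt l) l = 0 := by
      intro l hl
      simp [hvtdef, hl]
    rw [← sum_conv (fun l => N k l * vt l) hoff]
    by_cases hk : k ∈ S
    · have := congrFun hvz ⟨k, hk⟩
      simp only [Matrix.mulVec, dotProduct, Pi.zero_apply] at this
      rw [← this]
      refine Finset.sum_congr rfl fun a _ => ?_
      simp [hvtdef, a.2, hN'def]
    · refine Finset.sum_eq_zero fun a _ => ?_
      rw [hNoff k a hk a.2, zero_mul]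
  have hdet : N.det = 0 := Matrix.exists_mulVec_eq_zero_iff.mp ⟨vt, hvt0, hNvt⟩
  have hmem : (0 : ℂ) ∈ spectrum ℂ (N.map Complex.ofReal) := by
    rw [spectrum.zero_mem_iff, Matrix.isUnit_iff_isUnit_det]
    have hd : (N.map Complex.ofReal).det = 0 := by
      have h2 := (Complex.ofRealHom).map_det N
      rw [RingHom.mapMatrix_apply] at h2
      show (N.map ⇑Complex.ofRealHom).det = 0
      rw [← h2, hdet, map_zero]
    rw [hd]
    exact not_isUnit_zero
  have := hH 0 hmem
  simp at this

theorem interval_output_controllability {d : ℕ}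
    (Am Ap : Matrix (Fin d) (Fin d) ℝ) (i j : Fin d)
    (hAm : IsMetzler Am) (hAp : IsMetzler Ap) (hle : ∀ i j, Am i j ≤ Ap i j)
    (wm : Fin d → ℝ) (μm : ℝ)
    (hwm : ∀ k, 0 ≤ wm k) (hμm : 0 ≤ μm)
    (hwi : 0 < wm ⬝ᵥ Pi.single i (1 : ℝ))
    (heq : wm ᵥ* (Am - μm • (1 : Matrix (Fin d) (Fin d) ℝ)) + Pi.single j (1 : ℝ) = 0)
    (hH : IsHurwitz (Am - μm • (1 : Matrix (Fin d) (Fin d) ℝ))) :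
    ∀ A : Matrix (Fin d) (Fin d) ℝ, IsMetzler A → (∀ m n, Am m n ≤ A m n) → (∀ m n, A m n ≤ Ap m n) →
      ∃ (w : Fin d → ℝ) (μ : ℝ), (∀ k, 0 ≤ w k) ∧ 0 ≤ μ ∧
        0 < w ⬝ᵥ Pi.single i (1 : ℝ) ∧
        w ᵥ* (A - μ • (1 : Matrix (Fin d) (Fin d) ℝ)) + Pi.single j (1 : ℝ) = 0 := by
  intro A hA hAmA _hAAp
  classical
  have hd : 0 < d := i.pos
  have hd1 : (1:ℝ) ≤ (d:ℝ) := by exact_mod_cast hd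
  -- the big constant
  set K : ℝ := (∑ k : Fin d, ∑ l : Fin d, (|A k l| + |Am k l|)) + 1 with hKdef
  have hsum0 : (0:ℝ) ≤ ∑ k : Fin d, ∑ l : Fin d, (|A k l| + |Am k l|) :=
    Finset.sum_nonneg fun k _ => Finset.sum_nonneg fun l _ => by positivity
  have hK1 : 1 ≤ K := by rw [hKdef]; linarith
  have hK0 : 0 ≤ K := by linarith
  have hbound : ∀ k l, |A k l| + |Am k l| ≤ K - 1 := by
    intro k l
    have t1 : |A k l| + |Am k l| ≤ ∑ l', (|A k l'| + |Am k l'|) :=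
      Finset.single_le_sum (f := fun l' => |A k l'| + |Am k l'|)
        (fun l' _ => by positivity) (Finset.mem_univ l)
    have t2 : (∑ l', (|A k l'| + |Am k l'|)) ≤
        ∑ k' : Fin d, ∑ l', (|A k' l'| + |Am k' l'|) :=
      Finset.single_le_sum (f := fun k' => ∑ l', (|A k' l'| + |Am k' l'|))
        (fun k' _ => Finset.sum_nonneg fun l' _ => by positivity) (Finset.mem_univ k)
    rw [hKdef]; linarith
  have hAK : ∀ k l, |A k l| ≤ K := by
    intro k l; have := hbound k l; have := abs_nonneg (Am k l); linarith
  have hAmK : ∀ k l, |Am k l| ≤ K := by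
    intro k l; have := hbound k l; have := abs_nonneg (A k l); linarith
  set B := A + K • (1 : Matrix (Fin d) (Fin d) ℝ) with hBdef
  set Bm := Am + K • (1 : Matrix (Fin d) (Fin d) ℝ) with hBmdef
  have hBapp : ∀ k l, B k l = A k l + (if k = l then K else 0) := by
    intro k l
    rw [hBdef]
    simp [Matrix.add_apply, Matrix.smul_apply, Matrix.one_apply, mul_ite]
  have hBmapp : ∀ k l, Bm k l = Am k l + (if k = l then K else 0) := by
    intro k l
    rw [hBmdef]
    simp [Matrix.add_apply, Matrix.smul_apply, Matrix.one_apply, mul_ite]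
  have hB0 : ∀ k l, 0 ≤ B k l := by
    intro k l
    rw [hBapp]
    rcases eq_or_ne k l with h | h
    · subst h
      rw [if_pos rfl]
      have := abs_le.mp (hAK k k)
      linarith [this.1]
    · rw [if_neg h, add_zero]
      exact hA k l h
  have hBm0 : ∀ k l, 0 ≤ Bm k l := by
    intro k l
    rw [hBmapp]
    rcases eq_or_ne k l with h | h
    · subst h
      rw [if_pos rfl]
      have := abs_le.mp (hAmK k k)
      linarith [this.1]
    · rw [if_neg h, add_zero]
      exact hAm k l h
  have hBK : ∀ k l, B k l ≤ 2 * K := by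
    intro k l
    rw [hBapp]
    have := abs_le.mp (hAK k l)
    rcases eq_or_ne k l with h | h
    · rw [if_pos h]
      linarith [this.2]
    · rw [if_neg h, add_zero]
      linarith [this.2]
  have hBmB : ∀ k l, Bm k l ≤ B k l := by
    intro k l
    rw [hBapp, hBmapp]
    have := hAmA k l
    linarith
  set lam : ℝ := 2 * d * K + 2 with hlamdef
  have hlampos : 0 < lam := by rw [hlamdef]; nlinarith
  have hlamne : lam ≠ 0 := ne_of_gt hlampos
  set μ : ℝ := lam - K with hμdef
  have hμ0 : 0 ≤ μ := by rw [hμdef, hlamdef]; nlinarith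
  set M := μ • (1 : Matrix (Fin d) (Fin d) ℝ) - A with hMdef
  have hMapp : ∀ k l, M k l = (if k = l then lam else 0) - B k l := by
    intro k l
    rw [hMdef, hBapp]
    simp only [Matrix.sub_apply, Matrix.smul_apply, Matrix.one_apply, smul_eq_mul, mul_ite,
      mul_one, mul_zero]
    by_cases h : k = l <;> simp [h, hμdef] <;> ring
  -- invertibility of M
  have hdet : M.det ≠ 0 := by
    intro h0
    obtain ⟨v, hv0, hMv⟩ := Matrix.exists_mulVec_eq_zero_iff.mpr h0
    obtain ⟨k, -, hkmax⟩ := Finset.exists_max_image Finset.univ (fun l => |v l|)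
      ⟨i, Finset.mem_univ i⟩
    have hvk : 0 < |v k| := by
      obtain ⟨m, hm⟩ := Function.ne_iff.mp hv0
      exact lt_of_lt_of_le (abs_pos.mpr hm) (hkmax m (Finset.mem_univ m))
    have hMvk : ∑ l, M k l * v l = 0 := by
      have := congrFun hMv k
      simpa [Matrix.mulVec, dotProduct] using this
    have hsum : lam * v k = ∑ l, B k l * v l := by
      have e1 : ∑ l, M k l * v l = (∑ l, (if k = l then lam else 0) * v l)
          - ∑ l, B k l * v l := by
        rw [← Finset.sum_sub_distrib]
        refine Finset.sum_congr rfl fun l _ => ?_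
        rw [hMapp k l]; ring
      have e2 : (∑ l, (if k = l then lam else 0) * v l) = lam * v k := by
        simp only [ite_mul, zero_mul]
        rw [Finset.sum_ite_eq Finset.univ k (fun l => lam * v l)]
        simp
      rw [e1, e2] at hMvk
      linarith
    have habs : lam * |v k| ≤ 2 * K * d * |v k| := by
      calc lam * |v k| = |lam * v k| := by
            rw [abs_mul, abs_of_pos hlampos]
        _ = |∑ l, B k l * v l| := by rw [hsum]
        _ ≤ ∑ l, |B k l * v l| := Finset.abs_sum_le_sum_abs _ _
        _ ≤ ∑ _l : Fin d, 2 * K * |v k| := by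
            refine Finset.sum_le_sum fun l _ => ?_
            rw [abs_mul, abs_of_nonneg (hB0 k l)]
            exact mul_le_mul (hBK k l) (hkmax l (Finset.mem_univ l)) (abs_nonneg _)
              (by linarith)
        _ = 2 * K * d * |v k| := by
            rw [Finset.sum_const, Finset.card_univ, Fintype.card_fin]
            push_cast; ring
    rw [hlamdef] at habs
    nlinarith
  have hunit : IsUnit M.det := isUnit_iff_ne_zero.mpr hdet
  set w := Pi.single j (1:ℝ) ᵥ* M⁻¹ with hwdef
  have hwM : w ᵥ* M = Pi.single j 1 := by
    rw [hwdef, Matrix.vecMul_vecMul, Matrix.nonsing_inv_mul M hunit, Matrix.vecMul_one]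
  -- the fixed point identity componentwise
  have hwB : ∀ k, ∑ l, w l * B l k = lam * w k - (Pi.single j 1 : Fin d → ℝ) k := by
    intro k
    have h1 : ∑ l, w l * M l k = (Pi.single j 1 : Fin d → ℝ) k := by
      have := congrFun hwM k
      simpa [Matrix.vecMul, dotProduct] using this
    have e1 : ∑ l, w l * M l k = (∑ l, (if l = k then w l * lam else 0))
        - ∑ l, w l * B l k := by
      rw [← Finset.sum_sub_distrib]
      refine Finset.sum_congr rfl fun l _ => ?_
      rw [hMapp l k]
      by_cases h : l = k <;> simp [h] <;> ring
    have e2 : (∑ l, (if l = k then w l * lam else 0)) = w k * lam := by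
      rw [Finset.sum_ite_eq' Finset.univ k (fun l => w l * lam)]
      simp
    rw [e1, e2] at h1
    linarith
  -- Neumann-type expansion identity
  have hexp : ∀ N k, w k = (∑ n ∈ Finset.range N, (lam⁻¹) ^ (n+1) * (B ^ n) j k)
      + (lam⁻¹) ^ N * (∑ l, w l * (B ^ N) l k) := by
    intro N
    induction N with
    | zero =>
      intro k
      rw [Finset.range_zero, Finset.sum_empty, pow_zero, pow_zero, zero_add, one_mul]
      simp only [Matrix.one_apply, mul_ite, mul_one, mul_zero]
      rw [Finset.sum_ite_eq' Finset.univ k w]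
      simp
    | succ N ih =>
      intro k
      have hR : ∑ l, w l * (B ^ (N+1)) l k
          = lam * (∑ l, w l * (B ^ N) l k) - (B ^ N) j k := by
        have e1 : ∀ l, (B ^ (N+1)) l k = ∑ m, B l m * (B ^ N) m k := by
          intro l; rw [pow_succ', Matrix.mul_apply]
        calc ∑ l, w l * (B ^ (N+1)) l k
            = ∑ l, ∑ m, w l * (B l m * (B ^ N) m k) := by
              refine Finset.sum_congr rfl fun l _ => ?_
              rw [e1 l, Finset.mul_sum]
          _ = ∑ m, (∑ l, w l * B l m) * (B ^ N) m k := by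
              rw [Finset.sum_comm]
              refine Finset.sum_congr rfl fun m _ => ?_
              rw [Finset.sum_mul]
              refine Finset.sum_congr rfl fun l _ => ?_
              ring
          _ = ∑ m, (lam * w m - (Pi.single j 1 : Fin d → ℝ) m) * (B ^ N) m k := by
              refine Finset.sum_congr rfl fun m _ => ?_
              rw [hwB m]
          _ = lam * (∑ m, w m * (B ^ N) m k)
              - ∑ m, (Pi.single j 1 : Fin d → ℝ) m * (B ^ N) m k := by
              rw [Finset.mul_sum, ← Finset.sum_sub_distrib]
              refine Finset.sum_congr rfl fun m _ => ?_
              ring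
          _ = lam * (∑ l, w l * (B ^ N) l k) - (B ^ N) j k := by
              congr 1
              simp only [Pi.single_apply, ite_mul, one_mul, zero_mul]
              rw [Finset.sum_ite_eq' Finset.univ j (fun m => (B ^ N) m k)]
              simp
      rw [Finset.sum_range_succ, ih k, hR]
      have hkey : (lam⁻¹) ^ (N+1) * lam = (lam⁻¹) ^ N := by
        rw [pow_succ, mul_assoc, inv_mul_cancel₀ hlamne, mul_one]
      linear_combination (-(∑ l, w l * (B ^ N) l k)) * hkey
  -- entrywise bounds on powers of B
  have hBpow := pow_entry_nonneg_and_le hB0 hBK (by linarith)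
  set r : ℝ := ((d : ℝ) * (2 * K) + 1) / lam with hrdef
  have hr0 : 0 ≤ r := by
    rw [hrdef]
    apply div_nonneg _ hlampos.le
    positivity
  have hr1 : r < 1 := by
    rw [hrdef, div_lt_one hlampos, hlamdef]
    nlinarith
  set W : ℝ := ∑ l, |w l| with hWdef
  have hRbound : ∀ N k, |(lam⁻¹) ^ N * (∑ l, w l * (B ^ N) l k)| ≤ W * r ^ N := by
    intro N k
    have h1 : |∑ l, w l * (B ^ N) l k| ≤ W * ((d : ℝ) * (2 * K) + 1) ^ N := by
      calc |∑ l, w l * (B ^ N) l k| ≤ ∑ l, |w l * (B ^ N) l k| :=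
            Finset.abs_sum_le_sum_abs _ _
        _ ≤ ∑ l, |w l| * ((d : ℝ) * (2 * K) + 1) ^ N := by
            refine Finset.sum_le_sum fun l _ => ?_
            rw [abs_mul]
            refine mul_le_mul_of_nonneg_left ?_ (abs_nonneg _)
            rw [abs_of_nonneg (hBpow N l k).1]
            exact (hBpow N l k).2
        _ = W * ((d : ℝ) * (2 * K) + 1) ^ N := by rw [hWdef, ← Finset.sum_mul]
    have hpn : (0:ℝ) ≤ (lam⁻¹) ^ N := pow_nonneg (inv_nonneg.mpr hlampos.le) N
    have h2 : |(lam⁻¹) ^ N| = (lam⁻¹) ^ N := abs_of_nonneg hpn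
    rw [abs_mul, h2]
    calc (lam⁻¹) ^ N * |∑ l, w l * (B ^ N) l k|
        ≤ (lam⁻¹) ^ N * (W * ((d : ℝ) * (2 * K) + 1) ^ N) :=
          mul_le_mul_of_nonneg_left h1 hpn
      _ = W * r ^ N := by
          rw [hrdef, div_pow]
          field_simp
          rw [one_div, inv_pow, mul_comm _ W, mul_assoc, inv_mul_cancel₀ (pow_ne_zero N hlamne), mul_one]
  have htend0 : Tendsto (fun N : ℕ => W * r ^ N) atTop (nhds 0) := by
    have := (tendsto_pow_atTop_nhds_zero_of_lt_one hr0 hr1).const_mul W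
    simpa using this
  have hSlim : ∀ k, Tendsto (fun N => ∑ n ∈ Finset.range N, (lam⁻¹) ^ (n+1) * (B ^ n) j k)
      atTop (nhds (w k)) := by
    intro k
    have hfun : (fun N => ∑ n ∈ Finset.range N, (lam⁻¹) ^ (n+1) * (B ^ n) j k)
        = fun N => w k - (lam⁻¹) ^ N * (∑ l, w l * (B ^ N) l k) := by
      funext N
      have := hexp N k
      linarith
    rw [hfun]
    have hrem : Tendsto (fun N : ℕ => (lam⁻¹) ^ N * (∑ l, w l * (B ^ N) l k))
        atTop (nhds 0) := squeeze_zero_norm (fun N => hRbound N k) htend0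
    have := Filter.Tendsto.sub (tendsto_const_nhds (x := w k) (f := atTop)) hrem
    simpa using this
  have hw0 : ∀ k, 0 ≤ w k := by
    intro k
    refine ge_of_tendsto (hSlim k) (Filter.Eventually.of_forall fun N => ?_)
    exact Finset.sum_nonneg fun n _ =>
      mul_nonneg (pow_nonneg (inv_nonneg.mpr hlampos.le) _) (hBpow n j k).1
  -- reachability via Hurwitz
  have hwmAm : wm ᵥ* (Am - μm • (1 : Matrix (Fin d) (Fin d) ℝ)) = - Pi.single j 1 :=
    eq_neg_of_add_eq_zero_left heq
  have hwmi : wm i ≠ 0 := by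
    have hdp : wm ⬝ᵥ Pi.single i (1:ℝ) = wm i := by
      rw [dotProduct_single, mul_one]
    rw [hdp] at hwi
    exact ne_of_gt hwi
  have hBm0' : ∀ k l, (0:ℝ) ≤ (Am + K • (1 : Matrix (Fin d) (Fin d) ℝ)) k l := hBm0
  obtain ⟨n0, hn0⟩ := reach_of_hurwitz Am μm K i j wm hwmi hwmAm hH hBm0'
  rw [← hBmdef] at hn0
  have hBmn : 0 < (B ^ n0) j i := by
    have h1 : 0 < (Bm ^ n0) j i :=
      lt_of_le_of_ne (pow_entry_mono hBm0 (fun _ _ => le_refl _) n0 j i).1 (Ne.symm hn0)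
    exact lt_of_lt_of_le h1 (pow_entry_mono hBm0 hBmB n0 j i).2
  set δ : ℝ := (lam⁻¹) ^ (n0+1) * (B ^ n0) j i with hδdef
  have hδpos : 0 < δ := mul_pos (pow_pos (inv_pos.mpr hlampos) _) hBmn
  have hwipos : δ ≤ w i := by
    refine ge_of_tendsto (hSlim i) ?_
    rw [Filter.eventually_atTop]
    refine ⟨n0 + 1, fun N hN => ?_⟩
    exact Finset.single_le_sum (f := fun n => (lam⁻¹) ^ (n+1) * (B ^ n) j i)
      (fun n _ => mul_nonneg (pow_nonneg (inv_nonneg.mpr hlampos.le) _) (hBpow n j i).1)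
      (Finset.mem_range.mpr (by omega))
  refine ⟨w, μ, hw0, hμ0, ?_, ?_⟩
  · rw [dotProduct_single, mul_one]
    exact lt_of_lt_of_le hδpos hwipos
  · have hAM : A - μ • (1 : Matrix (Fin d) (Fin d) ℝ) = -M := by
      rw [hMdef, neg_sub]
    rw [hAM, Matrix.vecMul_neg, hwM]
    simp
end

section
/- Let Θ ⊂ ℝ^N be compact and connected and let M : Θ → ℝ^{d×d} be a continuous matrix-valued function such that M(θ) is Metzler for all θ ∈ Θ. Then M(θ) is Hurwitz stable for all θ ∈ Θ if and only if (i) there exists θ* ∈ Θ with M(θ*) Hurwitz stable, and (ii) (−1)^d det(M(θ)) > 0 for all θ ∈ Θ. -/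
open Matrix

namespace MetzAux
open Polynomial
variable {d : ℕ}

/-- The value `det (t • 1 - A)` of the characteristic polynomial. -/
noncomputable def q (A : Matrix (Fin d) (Fin d) ℝ) (t : ℝ) : ℝ :=
  (t • (1 : Matrix (Fin d) (Fin d) ℝ) - A).det

lemma eval_charpoly {R : Type*} [CommRing R] (A : Matrix (Fin d) (Fin d) R) (t : R) :
    (A.charpoly).eval t = (t • (1 : Matrix (Fin d) (Fin d) R) - A).det := by
  rw [Matrix.charpoly, ← Polynomial.coe_evalRingHom, RingHom.map_det]
  congr 1
  ext i j
  by_cases h : i = j <;>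
    simp [h, charmatrix_apply, Matrix.smul_apply, Matrix.one_apply, diagonal_apply]

lemma q_eq (A : Matrix (Fin d) (Fin d) ℝ) (t : ℝ) : q A t = (A.charpoly).eval t :=
  (eval_charpoly A t).symm

lemma spec_iff {M : Matrix (Fin d) (Fin d) ℂ} {z : ℂ} :
    z ∈ spectrum ℂ M ↔ (z • (1 : Matrix (Fin d) (Fin d) ℂ) - M).det = 0 := by
  rw [spectrum.mem_iff, Matrix.isUnit_iff_isUnit_det, isUnit_iff_ne_zero, not_not]
  congr! 2
  simp [Algebra.algebraMap_eq_smul_one]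

lemma map_det (A : Matrix (Fin d) (Fin d) ℝ) (t : ℝ) :
    (((t : ℂ)) • (1 : Matrix (Fin d) (Fin d) ℂ) - A.map Complex.ofReal).det = (q A t : ℂ) := by
  have h1 : ((t : ℂ)) • (1 : Matrix (Fin d) (Fin d) ℂ) - A.map Complex.ofReal
      = (t • (1 : Matrix (Fin d) (Fin d) ℝ) - A).map Complex.ofReal := by
    ext i j
    by_cases h : i = j <;>
      simp [h, Matrix.smul_apply, Matrix.one_apply, Matrix.map_apply]
  rw [q, h1]
  exact (RingHom.map_det Complex.ofRealHom (t • (1 : Matrix (Fin d) (Fin d) ℝ) - A)).symm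

lemma spec_iff_q {A : Matrix (Fin d) (Fin d) ℝ} {t : ℝ} :
    (t : ℂ) ∈ spectrum ℂ (A.map Complex.ofReal) ↔ q A t = 0 := by
  rw [spec_iff, map_det]
  exact_mod_cast Iff.rfl

lemma hurwitz_no_root {A : Matrix (Fin d) (Fin d) ℝ} (hH : IsHurwitz A) :
    ∀ t : ℝ, 0 ≤ t → q A t ≠ 0 := by
  intro t ht h0
  have h := hH t (spec_iff_q.mpr h0)
  rw [Complex.ofReal_re] at h
  linarith

lemma hurwitz_q_pos {A : Matrix (Fin d) (Fin d) ℝ} (hH : IsHurwitz A) {t : ℝ} (ht : 0 ≤ t) :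
    0 < q A t := by
  rcases Nat.eq_zero_or_pos d with hd | hd
  · subst hd
    simp [q]
  · have hmonic := A.charpoly_monic
    have hdeg : 0 < A.charpoly.degree := by
      have h1 : A.charpoly.degree = (Fintype.card (Fin d) : WithBot ℕ) :=
        A.charpoly_degree_eq_dim
      rw [h1]
      simp only [Fintype.card_fin]
      exact_mod_cast hd
    have htop : Filter.Tendsto (fun s => Polynomial.eval s A.charpoly)
        Filter.atTop Filter.atTop :=
      A.charpoly.tendsto_atTop_of_leadingCoeff_nonneg hdeg (by simp [hmonic.leadingCoeff])
    obtain ⟨t₀, ht₀⟩ := ((htop.eventually_gt_atTop 0).and (Filter.eventually_ge_atTop t)).exists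
    by_contra hle
    push_neg at hle
    have hne := hurwitz_no_root hH t ht
    have hlt : q A t < 0 := lt_of_le_of_ne hle hne
    have hcont : ContinuousOn (fun s => Polynomial.eval s A.charpoly) (Set.Icc t t₀) :=
      (A.charpoly.continuous_aeval).continuousOn
    have h0mem : (0 : ℝ) ∈ Set.Icc (Polynomial.eval t A.charpoly)
        (Polynomial.eval t₀ A.charpoly) := by
      constructor
      · rw [← q_eq]; linarith
      · linarith [ht₀.1]
    obtain ⟨c, hc, hc0⟩ := intermediate_value_Icc ht₀.2 hcont h0mem
    exact hurwitz_no_root hH c (le_trans ht hc.1) (by rw [q_eq]; exact hc0)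

lemma q_zero (A : Matrix (Fin d) (Fin d) ℝ) : q A 0 = (-1) ^ d * A.det := by
  simp [q, Matrix.det_neg]

lemma root_bound {A : Matrix (Fin d) (Fin d) ℝ} {R t : ℝ} (hR : ∀ i j, |A i j| ≤ R)
    (h0 : q A t = 0) : |t| ≤ d * R := by
  obtain ⟨x, hx0, hx⟩ := (Matrix.exists_mulVec_eq_zero_iff).mpr h0
  have hax : ∀ i, t * x i = (A *ᵥ x) i := by
    intro i
    have h := congrFun hx i
    rw [Matrix.sub_mulVec, Matrix.smul_mulVec, Matrix.one_mulVec] at h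
    have := sub_eq_zero.mp h
    simpa using this
  obtain ⟨i, -, hi⟩ := Finset.exists_max_image Finset.univ (fun i => |x i|)
    (by
      obtain ⟨j, hj⟩ := Function.ne_iff.mp hx0
      exact ⟨j, Finset.mem_univ j⟩)
  have hxi : 0 < |x i| := by
    obtain ⟨j, hj⟩ := Function.ne_iff.mp hx0
    exact lt_of_lt_of_le (abs_pos.mpr hj) (hi j (Finset.mem_univ j))
  have key : |t| * |x i| ≤ (d * R) * |x i| := by
    have h1 : |t| * |x i| = |(A *ᵥ x) i| := by rw [← abs_mul, hax]
    rw [h1, Matrix.mulVec, dotProduct]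
    calc |∑ j, A i j * x j| ≤ ∑ j, |A i j * x j| := Finset.abs_sum_le_sum_abs _ _
      _ ≤ ∑ _j : Fin d, R * |x i| := by
          apply Finset.sum_le_sum
          intro j _
          rw [abs_mul]
          have h2 : |A i j| ≤ R := hR i j
          have h3 : |x j| ≤ |x i| := hi j (Finset.mem_univ j)
          exact mul_le_mul h2 h3 (abs_nonneg _) (le_trans (abs_nonneg _) h2)
      _ = (d * R) * |x i| := by
          rw [Finset.sum_const, Finset.card_univ, Fintype.card_fin, nsmul_eq_mul]
          ring
  exact le_of_mul_le_mul_right key hxi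

lemma multiset_pow_card_le_prod {a : ℝ} (ha : 0 ≤ a) (s : Multiset ℝ)
    (h : ∀ x ∈ s, a ≤ x) : a ^ (Multiset.card s) ≤ s.prod := by
  induction s using Multiset.induction with
  | empty => simp
  | cons x s ih =>
    simp only [Multiset.prod_cons, Multiset.card_cons, pow_succ]
    have hx := h x (Multiset.mem_cons_self _ _)
    have hs := ih (fun y hy => h y (Multiset.mem_cons_of_mem hy))
    calc a ^ Multiset.card s * a ≤ s.prod * x :=
          mul_le_mul hs hx ha (le_trans (pow_nonneg ha _) hs)
      _ = x * s.prod := mul_comm _ _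

lemma hurwitz_quant {A : Matrix (Fin d) (Fin d) ℝ} (hH : IsHurwitz A) {t : ℝ} (ht : 0 < t) :
    t ^ d ≤ |q A t| := by
  set p := (A.map Complex.ofReal).charpoly with hp
  have hmonic : p.Monic := (A.map Complex.ofReal).charpoly_monic
  have hpne : p ≠ 0 := hmonic.ne_zero
  have hsplit : p.Splits := IsAlgClosed.splits p
  have hcard : Multiset.card p.roots = d := by
    have h1 := (hsplit.natDegree_eq_card_roots).symm
    rw [h1, hp, Matrix.charpoly_natDegree_eq_dim, Fintype.card_fin]
  have hprod : p = (p.roots.map fun a => X - C a).prod :=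
    (hsplit.eq_prod_roots_of_monic hmonic)
  have heval : p.eval (t : ℂ) = (p.roots.map fun a => (t : ℂ) - a).prod := by
    conv_lhs => rw [hprod]
    rw [Polynomial.eval_multiset_prod, Multiset.map_map]
    simp
  have hspec : ∀ a ∈ p.roots, a.re < 0 := by
    intro a ha
    apply hH
    rw [spec_iff, ← eval_charpoly]
    exact (Polynomial.mem_roots hpne).mp ha
  have habs : norm (p.eval (t : ℂ))
      = (p.roots.map fun a => norm ((t : ℂ) - a)).prod := by
    have hmm : (Multiset.map (fun a => norm ((t : ℂ) - a)) p.roots)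
        = Multiset.map (fun w : ℂ => ‖w‖) (Multiset.map (fun a => (t : ℂ) - a) p.roots) := by
      rw [Multiset.map_map]
      rfl
    rw [heval, hmm]
    exact map_multiset_prod (normHom (α := ℂ)) _
  have hge : ∀ y ∈ p.roots.map (fun a => norm ((t : ℂ) - a)), t ≤ y := by
    intro y hy
    obtain ⟨a, ha, rfl⟩ := Multiset.mem_map.mp hy
    have h1 : ((t : ℂ) - a).re ≤ norm ((t : ℂ) - a) := Complex.re_le_norm _
    have h2 : ((t : ℂ) - a).re = t - a.re := by simp
    have := hspec a ha
    linarith [h1, h2 ▸ h1]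
  have hbound : t ^ d ≤ norm (p.eval (t : ℂ)) := by
    rw [habs]
    have := multiset_pow_card_le_prod (le_of_lt ht) _ hge
    rwa [Multiset.card_map, hcard] at this
  have hval : norm (p.eval (t : ℂ)) = |q A t| := by
    rw [hp, eval_charpoly, map_det, Complex.norm_real, Real.norm_eq_abs]
  rwa [hval] at hbound


lemma wielandt (C : Matrix (Fin d) (Fin d) ℝ) (hC : ∀ i j, 0 < C i j)
    {s₀ : ℝ} {x₀ : Fin d → ℝ} (hx₀ : ∀ i, 0 ≤ x₀ i) (hx₀s : ∑ i, x₀ i = 1)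
    (hs₀ : ∀ i, s₀ * x₀ i ≤ (C *ᵥ x₀) i) :
    ∃ r, s₀ ≤ r ∧ r ≤ d * (∑ i, ∑ j, C i j) ∧ q C r = 0 := by
  have hd : 0 < d := by
    rcases Nat.eq_zero_or_pos d with h | h
    · subst h; simp at hx₀s
    · exact h
  have : Nonempty (Fin d) := ⟨⟨0, hd⟩⟩
  have hne : (Finset.univ : Finset (Fin d)).Nonempty := Finset.univ_nonempty
  have hd' : (0 : ℝ) < d := by exact_mod_cast hd
  set B := ∑ i, ∑ j, C i j with hB
  have hBpos : 0 < B :=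
    Finset.sum_pos (fun i _ => Finset.sum_pos (fun j _ => hC i j) hne) hne
  -- the a-priori bound on admissible growth rates
  have key : ∀ s : ℝ, ∀ x : Fin d → ℝ, (∀ i, 0 ≤ x i) → (∑ i, x i) = 1 →
      (∀ i, s * x i ≤ (C *ᵥ x) i) → s ≤ d * B := by
    intro s x hx hxs hsx
    rcases le_or_gt s 0 with h | h
    · exact le_trans h (by positivity)
    · obtain ⟨i, hi⟩ : ∃ i, (1 : ℝ) / d ≤ x i := by
        by_contra hcon
        push_neg at hcon
        have hlt : ∑ i, x i < ∑ _i : Fin d, (1 : ℝ) / d :=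
          Finset.sum_lt_sum_of_nonempty hne fun i _ => hcon i
        rw [hxs, Finset.sum_const, Finset.card_univ, Fintype.card_fin, nsmul_eq_mul] at hlt
        rw [mul_one_div, div_self (ne_of_gt hd')] at hlt
        exact lt_irrefl _ hlt
      have hxj1 : ∀ j, x j ≤ 1 := by
        intro j
        have := Finset.single_le_sum (f := x) (fun k _ => hx k) (Finset.mem_univ j)
        simpa [hxs] using this
      have h2 : (C *ᵥ x) i ≤ B := by
        rw [Matrix.mulVec, dotProduct]
        calc ∑ j, C i j * x j ≤ ∑ j, C i j := by
              apply Finset.sum_le_sum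
              intro j _
              nlinarith [hC i j, hxj1 j, hx j]
          _ ≤ B := Finset.single_le_sum
              (f := fun i => ∑ j, C i j)
              (fun k _ => Finset.sum_nonneg fun j _ => (hC k j).le) (Finset.mem_univ i)
      have h3 : 1 ≤ x i * d := by
        rw [div_le_iff₀ hd'] at hi
        linarith
      have h1 := hsx i
      calc s = s * 1 := (mul_one s).symm
        _ ≤ s * (x i * d) := by nlinarith
        _ = (s * x i) * d := by ring
        _ ≤ B * d := mul_le_mul_of_nonneg_right (le_trans h1 h2) (le_of_lt hd')
        _ = d * B := mul_comm _ _
  set K : Set (ℝ × (Fin d → ℝ)) :=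
    {p | s₀ ≤ p.1 ∧ (∀ i, 0 ≤ p.2 i) ∧ (∑ i, p.2 i) = 1 ∧
      ∀ i, p.1 * p.2 i ≤ (C *ᵥ p.2) i} with hK
  have hKsub : K ⊆ Set.Icc s₀ (d * B) ×ˢ Set.Icc (0 : Fin d → ℝ) 1 := by
    rintro ⟨s, x⟩ ⟨h1, h2, h3, h4⟩
    refine ⟨⟨h1, key s x h2 h3 h4⟩, fun i => h2 i, fun i => ?_⟩
    have := Finset.single_le_sum (f := x) (fun k _ => h2 k) (Finset.mem_univ i)
    simpa [h3] using this
  have hKclosed : IsClosed K := by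
    have c1 : IsClosed {p : ℝ × (Fin d → ℝ) | s₀ ≤ p.1} :=
      isClosed_le continuous_const continuous_fst
    have c2 : IsClosed {p : ℝ × (Fin d → ℝ) | ∀ i, 0 ≤ p.2 i} := by
      rw [Set.setOf_forall]
      exact isClosed_iInter fun i =>
        isClosed_le continuous_const ((continuous_apply i).comp continuous_snd)
    have c3 : IsClosed {p : ℝ × (Fin d → ℝ) | (∑ i, p.2 i) = 1} := by
      apply isClosed_eq _ continuous_const
      exact continuous_finset_sum _ fun i _ => (continuous_apply i).comp continuous_snd
    have c4 : IsClosed {p : ℝ × (Fin d → ℝ) | ∀ i, p.1 * p.2 i ≤ (C *ᵥ p.2) i} := by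
      rw [Set.setOf_forall]
      refine isClosed_iInter fun i => isClosed_le ?_ ?_
      · exact continuous_fst.mul ((continuous_apply i).comp continuous_snd)
      · simp only [Matrix.mulVec, dotProduct]
        exact continuous_finset_sum _ fun j _ =>
          continuous_const.mul ((continuous_apply j).comp continuous_snd)
    have hKeq : K = {p : ℝ × (Fin d → ℝ) | s₀ ≤ p.1} ∩
        ({p : ℝ × (Fin d → ℝ) | ∀ i, 0 ≤ p.2 i} ∩
          ({p : ℝ × (Fin d → ℝ) | (∑ i, p.2 i) = 1} ∩
            {p : ℝ × (Fin d → ℝ) | ∀ i, p.1 * p.2 i ≤ (C *ᵥ p.2) i})) := rfl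
    rw [hKeq]
    exact c1.inter (c2.inter (c3.inter c4))
  have hKcomp : IsCompact K :=
    IsCompact.of_isClosed_subset (isCompact_Icc.prod isCompact_Icc) hKclosed hKsub
  have hKne : K.Nonempty := ⟨(s₀, x₀), le_rfl, hx₀, hx₀s, hs₀⟩
  obtain ⟨⟨r, x⟩, hmem, hmax'⟩ :=
    hKcomp.exists_isMaxOn hKne continuous_fst.continuousOn
  have hmax : ∀ p ∈ K, p.1 ≤ (r, x).1 := fun p hp => hmax' hp
  obtain ⟨hr1, hx1, hx2, hx3⟩ := hmem
  refine ⟨r, hr1, key r x hx1 hx2 hx3, ?_⟩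
  by_cases heq : C *ᵥ x = r • x
  · apply Matrix.exists_mulVec_eq_zero_iff.mp
    refine ⟨x, ?_, ?_⟩
    · intro h0
      rw [h0] at hx2
      simp at hx2
    · rw [Matrix.sub_mulVec, Matrix.smul_mulVec, Matrix.one_mulVec, heq, sub_self]
  · exfalso
    set u : Fin d → ℝ := C *ᵥ x - r • x with hu
    have hu0 : ∀ i, 0 ≤ u i := by
      intro i
      have := hx3 i
      simp only [hu, Pi.sub_apply, Pi.smul_apply, smul_eq_mul]
      linarith
    have hune : u ≠ 0 := fun h => heq (by rwa [sub_eq_zero] at h)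
    obtain ⟨j₀, hj₀⟩ := Function.ne_iff.mp hune
    have huj₀ : 0 < u j₀ := lt_of_le_of_ne (hu0 j₀) (Ne.symm hj₀)
    have hxpos : ∃ j, 0 < x j := by
      by_contra hcon
      push_neg at hcon
      have hx0 : x = 0 := funext fun j => le_antisymm (hcon j) (hx1 j)
      rw [hx0] at hx2
      simp at hx2
    set y := C *ᵥ x with hy'
    have hy : ∀ i, 0 < y i := by
      intro i
      obtain ⟨j, hj⟩ := hxpos
      have hterm : ∀ k ∈ Finset.univ, 0 ≤ C i k * x k :=
        fun k _ => mul_nonneg (hC i k).le (hx1 k)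
      have hsingle : C i j * x j ≤ y i := by
        rw [hy', Matrix.mulVec, dotProduct]
        exact Finset.single_le_sum hterm (Finset.mem_univ j)
      nlinarith [hC i j]
    have hCu : ∀ i, 0 < (C *ᵥ u) i := by
      intro i
      have hterm : ∀ k ∈ Finset.univ, 0 ≤ C i k * u k :=
        fun k _ => mul_nonneg (hC i k).le (hu0 k)
      have hsingle : C i j₀ * u j₀ ≤ (C *ᵥ u) i := by
        rw [Matrix.mulVec, dotProduct]
        exact Finset.single_le_sum hterm (Finset.mem_univ j₀)
      nlinarith [hC i j₀]
    obtain ⟨i₀, -, hi₀⟩ := Finset.exists_min_image Finset.univ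
      (fun i => (C *ᵥ u) i / y i) hne
    set ε := (C *ᵥ u) i₀ / y i₀ with hε'
    have hε : 0 < ε := div_pos (hCu i₀) (hy i₀)
    have hεy : ∀ i, ε * y i ≤ (C *ᵥ u) i := by
      intro i
      have h6 := hi₀ i (Finset.mem_univ i)
      rw [le_div_iff₀ (hy i)] at h6
      linarith
    have hCy : ∀ i, (r + ε) * y i ≤ (C *ᵥ y) i := by
      intro i
      have h5 : C *ᵥ y = r • y + C *ᵥ u := by
        have hyd : y = r • x + u := by
          ext k
          simp [hu, hy']
        calc C *ᵥ y = C *ᵥ (r • x + u) := by rw [← hyd]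
          _ = r • (C *ᵥ x) + C *ᵥ u := by
              rw [Matrix.mulVec_add, Matrix.mulVec_smul]
          _ = r • y + C *ᵥ u := by rw [← hy']
      have h7 := congrFun h5 i
      simp only [Pi.add_apply, Pi.smul_apply, smul_eq_mul] at h7
      have h8 := hεy i
      have hexp : (r + ε) * y i = r * y i + ε * y i := by ring
      rw [h7, hexp]
      linarith [h8]
    set σ := ∑ i, y i with hσ'
    have hσ : 0 < σ := Finset.sum_pos (fun i _ => hy i) hne
    have hwK : (r + ε, σ⁻¹ • y) ∈ K := by
      refine ⟨by linarith, fun i => ?_, ?_, ?_⟩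
      · simp only [Pi.smul_apply, smul_eq_mul]
        exact mul_nonneg (inv_nonneg.mpr hσ.le) (hy i).le
      · simp only [Pi.smul_apply, smul_eq_mul]
        rw [← Finset.mul_sum, ← hσ']
        field_simp
      · intro i
        have h9 : (C *ᵥ (σ⁻¹ • y)) i = σ⁻¹ * (C *ᵥ y) i := by
          rw [Matrix.mulVec_smul]
          simp
        rw [h9]
        have h10 := hCy i
        have hσi : (0 : ℝ) ≤ σ⁻¹ := by positivity
        simp only [Pi.smul_apply, smul_eq_mul]
        calc (r + ε) * (σ⁻¹ * y i) = σ⁻¹ * ((r + ε) * y i) := by ring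
          _ ≤ σ⁻¹ * (C *ᵥ y) i := by nlinarith
    have := hmax _ hwK
    simp only at this
    linarith

lemma pf_nonneg (B : Matrix (Fin d) (Fin d) ℝ) (hB : ∀ i j, 0 ≤ B i j)
    {s₀ : ℝ} {w : Fin d → ℝ} (hw : ∀ i, 0 ≤ w i) (hwne : w ≠ 0)
    (hsw : ∀ i, s₀ * w i ≤ (B *ᵥ w) i) :
    ∃ r, s₀ ≤ r ∧ q B r = 0 := by
  obtain ⟨j₀, hj₀⟩ : ∃ j, 0 < w j := by
    obtain ⟨j, hj⟩ := Function.ne_iff.mp hwne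
    exact ⟨j, lt_of_le_of_ne (hw j) (Ne.symm hj)⟩
  have hnonempty : Nonempty (Fin d) := ⟨j₀⟩
  have hσ : 0 < ∑ i, w i :=
    Finset.sum_pos' (fun i _ => hw i) ⟨j₀, Finset.mem_univ _, hj₀⟩
  set σ := ∑ i, w i with hσ'
  set x₀ : Fin d → ℝ := σ⁻¹ • w with hx₀'
  have hx₀ : ∀ i, 0 ≤ x₀ i := fun i => by
    simp only [hx₀', Pi.smul_apply, smul_eq_mul]
    exact mul_nonneg (inv_nonneg.mpr hσ.le) (hw i)
  have hx₀s : ∑ i, x₀ i = 1 := by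
    simp only [hx₀', Pi.smul_apply, smul_eq_mul]
    rw [← Finset.mul_sum, ← hσ']
    field_simp
  have hBx₀ : ∀ i, s₀ * x₀ i ≤ (B *ᵥ x₀) i := by
    intro i
    have h1 : B *ᵥ x₀ = σ⁻¹ • (B *ᵥ w) := by
      rw [hx₀', Matrix.mulVec_smul]
    rw [h1]
    simp only [hx₀', Pi.smul_apply, smul_eq_mul]
    have := mul_le_mul_of_nonneg_left (hsw i) (inv_nonneg.mpr hσ.le)
    calc s₀ * (σ⁻¹ * w i) = σ⁻¹ * (s₀ * w i) := by ring
      _ ≤ σ⁻¹ * (B *ᵥ w) i := this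
  set Cm : ℕ → Matrix (Fin d) (Fin d) ℝ :=
    fun n => Matrix.of fun i j => B i j + ((n : ℝ) + 1)⁻¹ with hCm
  have hinvpos : ∀ n : ℕ, (0 : ℝ) < ((n : ℝ) + 1)⁻¹ := fun n => by positivity
  have hCpos : ∀ n i j, 0 < Cm n i j := fun n i j =>
    add_pos_of_nonneg_of_pos (hB i j) (hinvpos n)
  have hCs : ∀ n i, s₀ * x₀ i ≤ (Cm n *ᵥ x₀) i := by
    intro n i
    refine le_trans (hBx₀ i) ?_
    simp only [Matrix.mulVec, dotProduct, hCm, Matrix.of_apply]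
    apply Finset.sum_le_sum
    intro j _
    nlinarith [hx₀ j, hinvpos n]
  choose r hr1 hr2 hr3 using fun n => wielandt (Cm n) (hCpos n) hx₀ hx₀s (hCs n)
  set S := (d : ℝ) * ((∑ i, ∑ j, B i j) + d * d) with hS
  have hrS : ∀ n, r n ≤ S := by
    intro n
    refine le_trans (hr2 n) ?_
    have hsum : ∑ i, ∑ j, Cm n i j ≤ (∑ i, ∑ j, B i j) + d * d := by
      have : ∀ i : Fin d, ∑ j, Cm n i j ≤ (∑ j, B i j) + d := by
        intro i
        simp only [hCm, Matrix.of_apply, Finset.sum_add_distrib, Finset.sum_const,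
          Finset.card_univ, Fintype.card_fin, nsmul_eq_mul]
        have h1 : (d : ℝ) * ((n : ℝ) + 1)⁻¹ ≤ d * 1 := by
          apply mul_le_mul_of_nonneg_left _ (Nat.cast_nonneg d)
          rw [inv_le_one_iff₀]
          right; linarith [Nat.cast_nonneg (α := ℝ) n]
        linarith
      calc ∑ i, ∑ j, Cm n i j ≤ ∑ i : Fin d, ((∑ j, B i j) + d) :=
            Finset.sum_le_sum fun i _ => this i
        _ = (∑ i, ∑ j, B i j) + d * d := by
            rw [Finset.sum_add_distrib, Finset.sum_const, Finset.card_univ,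
              Fintype.card_fin, nsmul_eq_mul]
    rw [hS]
    apply mul_le_mul_of_nonneg_left hsum (Nat.cast_nonneg d)
  obtain ⟨L, hL, φ, hφ, hconv⟩ :=
    (isCompact_Icc (a := s₀) (b := S)).tendsto_subseq (x := r) (fun n => ⟨hr1 n, hrS n⟩)
  refine ⟨L, hL.1, ?_⟩
  have hcont : Continuous (fun p : ℝ × ℝ =>
      (p.1 • (1 : Matrix (Fin d) (Fin d) ℝ) -
        Matrix.of fun i j => B i j + p.2).det) := by
    apply Continuous.matrix_det
    apply Continuous.sub
    · exact continuous_fst.smul continuous_const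
    · apply continuous_matrix
      intro i j
      exact continuous_const.add continuous_snd
  have hpt : Filter.Tendsto (fun n => (r (φ n), (((φ n : ℕ) : ℝ) + 1)⁻¹))
      Filter.atTop (nhds (L, 0)) := by
    apply Filter.Tendsto.prodMk_nhds hconv
    have h0 : Filter.Tendsto (fun n : ℕ => ((n : ℝ) + 1)⁻¹) Filter.atTop (nhds 0) := by
      simpa [one_div] using tendsto_one_div_add_atTop_nhds_zero_nat (𝕜 := ℝ)
    exact h0.comp hφ.tendsto_atTop
  have hdet := (hcont.tendsto (L, 0)).comp hpt
  have hB0 : (Matrix.of fun i j => B i j + (0 : ℝ)) = B := by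
    ext i j; simp
  have hval : ∀ n, (fun p : ℝ × ℝ =>
      (p.1 • (1 : Matrix (Fin d) (Fin d) ℝ) - Matrix.of fun i j => B i j + p.2).det)
        (r (φ n), (((φ n : ℕ) : ℝ) + 1)⁻¹) = 0 := by
    intro n
    have := hr3 (φ n)
    simpa [q, hCm] using this
  have hfun : ((fun p : ℝ × ℝ =>
      (p.1 • (1 : Matrix (Fin d) (Fin d) ℝ) - Matrix.of fun i j => B i j + p.2).det) ∘
        fun n => (r (φ n), (((φ n : ℕ) : ℝ) + 1)⁻¹)) = fun _ : ℕ => (0 : ℝ) :=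
    funext fun n => hval n
  rw [hfun] at hdet
  have hzero := tendsto_nhds_unique hdet tendsto_const_nhds
  simpa [q, hB0, show (Matrix.of fun i j => B i j) = B from rfl] using hzero

lemma pf_metzler {A : Matrix (Fin d) (Fin d) ℝ} (hA : IsMetzler A) {z : ℂ}
    (hz : z ∈ spectrum ℂ (A.map Complex.ofReal)) :
    ∃ t : ℝ, z.re ≤ t ∧ q A t = 0 := by
  have hdet0 : (z • (1 : Matrix (Fin d) (Fin d) ℂ) - A.map Complex.ofReal).det = 0 :=
    spec_iff.mp hz
  obtain ⟨v, hv0, hv⟩ := Matrix.exists_mulVec_eq_zero_iff.mpr hdet0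
  have hAv : ∀ i, (A.map Complex.ofReal *ᵥ v) i = z * v i := by
    intro i
    have h := congrFun hv i
    rw [Matrix.sub_mulVec, Matrix.smul_mulVec, Matrix.one_mulVec] at h
    have h2 := sub_eq_zero.mp h
    simpa using h2.symm
  set c : ℝ := ∑ i, |A i i| with hc
  have hc0 : 0 ≤ c := Finset.sum_nonneg fun i _ => abs_nonneg _
  have hcd : ∀ i, 0 ≤ A i i + c := by
    intro i
    have h1 : |A i i| ≤ c := Finset.single_le_sum
      (f := fun i => |A i i|) (fun j _ => abs_nonneg _) (Finset.mem_univ i)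
    have h2 := neg_abs_le (A i i)
    linarith
  set B : Matrix (Fin d) (Fin d) ℝ := A + c • 1 with hB'
  have hBnn : ∀ i j, 0 ≤ B i j := by
    intro i j
    by_cases h : i = j
    · subst h
      simpa [hB', Matrix.one_apply] using hcd i
    · have h1 := hA i j h
      simp only [hB', Matrix.add_apply, Matrix.smul_apply, Matrix.one_apply_ne h,
        smul_eq_mul, mul_zero]
      linarith
  set w : Fin d → ℝ := fun i => norm (v i) with hw'
  have hw : ∀ i, 0 ≤ w i := fun i => norm_nonneg _
  have hwne : w ≠ 0 := by
    obtain ⟨j, hj⟩ := Function.ne_iff.mp hv0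
    intro h
    have h2 := congrFun h j
    simp only [hw', Pi.zero_apply] at h2
    exact hj (norm_eq_zero.mp h2)
  have hBmap : B.map Complex.ofReal
      = A.map Complex.ofReal + (c : ℂ) • (1 : Matrix (Fin d) (Fin d) ℂ) := by
    ext i j
    by_cases h : i = j <;>
      simp [hB', Matrix.one_apply, h, Matrix.map_apply]
  have hkey : ∀ i, (z.re + c) * w i ≤ (B *ᵥ w) i := by
    intro i
    have hBc : (B.map Complex.ofReal *ᵥ v) i = (z + c) * v i := by
      rw [hBmap, Matrix.add_mulVec, Matrix.smul_mulVec, Matrix.one_mulVec]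
      simp only [Pi.add_apply, Pi.smul_apply, smul_eq_mul, hAv i]
      ring
    have habs2 : norm ((B.map Complex.ofReal *ᵥ v) i) ≤ (B *ᵥ w) i := by
      rw [Matrix.mulVec, dotProduct]
      calc norm (∑ j, (B.map Complex.ofReal) i j * v j)
          ≤ ∑ j, norm ((B.map Complex.ofReal) i j * v j) :=
            norm_sum_le _ _
        _ = ∑ j, B i j * w j := by
            apply Finset.sum_congr rfl
            intro j _
            rw [norm_mul]
            simp only [Matrix.map_apply, Complex.norm_real, Real.norm_eq_abs, hw']
            rw [abs_of_nonneg (hBnn i j)]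
        _ = (B *ᵥ w) i := by rw [Matrix.mulVec, dotProduct]
    have hre : z.re + c ≤ norm (z + c) := by
      have := Complex.re_le_norm (z + (c : ℂ))
      simpa using this
    calc (z.re + c) * w i ≤ norm (z + c) * w i :=
          mul_le_mul_of_nonneg_right hre (hw i)
      _ = norm ((z + c) * v i) := by
          rw [norm_mul]
      _ = norm ((B.map Complex.ofReal *ᵥ v) i) := by rw [hBc]
      _ ≤ (B *ᵥ w) i := habs2
  obtain ⟨r, hr1, hr2⟩ := pf_nonneg B hBnn hw hwne hkey
  refine ⟨r - c, by linarith, ?_⟩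
  have hmat : (r - c) • (1 : Matrix (Fin d) (Fin d) ℝ) - A
      = r • (1 : Matrix (Fin d) (Fin d) ℝ) - B := by
    ext i j
    by_cases h : i = j <;>
      simp [hB', Matrix.one_apply, h, Matrix.smul_apply, Matrix.add_apply] <;> ring
  rw [q, hmat]
  exact hr2

end MetzAux

theorem parameterized_metzler_hurwitz_iff_det {N d : ℕ}
    (Θ : Set (Fin N → ℝ)) (hc : IsCompact Θ) (hconn : IsConnected Θ)
    (M : (Fin N → ℝ) → Matrix (Fin d) (Fin d) ℝ)
    (hcont : ContinuousOn M Θ)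
    (hMetz : ∀ θ ∈ Θ, IsMetzler (M θ)) :
    (∀ θ ∈ Θ, IsHurwitz (M θ)) ↔
      ((∃ θs ∈ Θ, IsHurwitz (M θs)) ∧ ∀ θ ∈ Θ, 0 < (-1 : ℝ) ^ d * (M θ).det) := by
  classical
  constructor
  · intro h
    obtain ⟨θ₀, hθ₀⟩ := hconn.nonempty
    refine ⟨⟨θ₀, hθ₀, h θ₀ hθ₀⟩, ?_⟩
    intro θ hθ
    have hpos := MetzAux.hurwitz_q_pos (h θ hθ) (le_refl (0 : ℝ))
    rwa [MetzAux.q_zero] at hpos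
  · rintro ⟨⟨θs, hθs, hHs⟩, hdet⟩ θ hθ
    rcases Nat.eq_zero_or_pos d with hd | hd
    · subst hd
      intro z hz
      exfalso
      have h0 := MetzAux.spec_iff.mp hz
      simp at h0
    · -- uniform bound on entries
      have hcoord : ∀ i j, ContinuousOn (fun θ' => |M θ' i j|) Θ := by
        intro i j
        exact (((continuous_apply j).comp (continuous_apply i)).comp_continuousOn hcont).abs
      have hFcont : ContinuousOn (fun θ' => ∑ i, ∑ j, |M θ' i j|) Θ :=
        continuousOn_finset_sum _ fun i _ => continuousOn_finset_sum _ fun j _ => hcoord i j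
      obtain ⟨θm, hθm, hθmax⟩ := hc.exists_isMaxOn hconn.nonempty hFcont
      set R := (∑ i, ∑ j, |M θm i j|) + 1 with hR'
      have hR : ∀ θ' ∈ Θ, ∀ i j, |M θ' i j| ≤ R := by
        intro θ' hθ' i j
        have h1 : |M θ' i j| ≤ ∑ j, |M θ' i j| :=
          Finset.single_le_sum (f := fun j => |M θ' i j|)
            (fun k _ => abs_nonneg _) (Finset.mem_univ j)
        have h2 : (∑ j, |M θ' i j|) ≤ ∑ i, ∑ j, |M θ' i j| :=
          Finset.single_le_sum (f := fun i => ∑ j, |M θ' i j|)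
            (fun k _ => Finset.sum_nonneg fun l _ => abs_nonneg _) (Finset.mem_univ i)
        have h3 := hθmax hθ'
        simp only [Set.mem_setOf_eq] at h3
        rw [hR']
        calc |M θ' i j| ≤ ∑ i, ∑ j, |M θ' i j| := le_trans h1 h2
          _ ≤ ∑ i, ∑ j, |M θm i j| := h3
          _ ≤ (∑ i, ∑ j, |M θm i j|) + 1 := by linarith
      set T := (d : ℝ) * R with hT'
      -- The compact "bad" set and its projection
      set Ck : Set ((Fin N → ℝ) × ℝ) :=
        {p | p.1 ∈ Θ ∧ p.2 ∈ Set.Icc (0 : ℝ) T ∧ MetzAux.q (M p.1) p.2 ≤ 0} with hCk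
      have hdetc : Continuous fun A : Matrix (Fin d) (Fin d) ℝ => A.det :=
        continuous_id.matrix_det
      have hFc : ContinuousOn (fun p : (Fin N → ℝ) × ℝ => MetzAux.q (M p.1) p.2)
          (Θ ×ˢ Set.Icc (0 : ℝ) T) := by
        apply hdetc.comp_continuousOn
        apply ContinuousOn.sub
        · exact (continuous_snd.smul continuous_const).continuousOn
        · exact hcont.comp continuousOn_fst (fun p hp => hp.1)
      have hprodc : IsCompact (Θ ×ˢ Set.Icc (0 : ℝ) T) := hc.prod isCompact_Icc
      have hCkcomp : IsCompact Ck := by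
        have hCkeq : Ck = (Θ ×ˢ Set.Icc (0 : ℝ) T) ∩
            (fun p : (Fin N → ℝ) × ℝ => MetzAux.q (M p.1) p.2) ⁻¹' Set.Iic 0 := by
          ext p
          simp only [hCk, Set.mem_setOf_eq, Set.mem_inter_iff, Set.mem_prod,
            Set.mem_preimage, Set.mem_Iic]
          tauto
        rw [hCkeq]
        exact IsCompact.of_isClosed_subset hprodc
          (hFc.preimage_isClosed_of_isClosed hprodc.isClosed isClosed_Iic)
          Set.inter_subset_left
      set SBad := Prod.fst '' Ck with hSB'
      have hSBclosed : IsClosed SBad := (hCkcomp.image continuous_fst).isClosed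
      have hchar : ∀ θ' ∈ Θ, (IsHurwitz (M θ') ↔ θ' ∉ SBad) := by
        intro θ' hθ'
        constructor
        · intro hH hmem
          obtain ⟨p, hp, hpe⟩ := hmem
          obtain ⟨hp1, hp2, hp3⟩ := hp
          rw [hpe] at hp3
          have h2 := MetzAux.hurwitz_q_pos hH hp2.1
          linarith
        · intro hns z hz
          by_contra hre
          push_neg at hre
          obtain ⟨t, ht1, ht2⟩ := MetzAux.pf_metzler (hMetz θ' hθ') hz
          have ht0 : 0 ≤ t := le_trans hre ht1
          have htT : t ≤ T := by
            have hb := MetzAux.root_bound (hR θ' hθ') ht2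
            rw [abs_of_nonneg ht0] at hb
            exact hb
          exact hns ⟨(θ', t), ⟨hθ', ⟨ht0, htT⟩, le_of_eq ht2⟩, rfl⟩
      -- subtype clopen argument
      haveI : PreconnectedSpace Θ := Subtype.preconnectedSpace hconn.isPreconnected
      have hHopen : IsOpen {x : Θ | IsHurwitz (M x.1)} := by
        have heq : {x : Θ | IsHurwitz (M x.1)} = Subtype.val ⁻¹' SBadᶜ := by
          ext x
          simp only [Set.mem_setOf_eq, Set.mem_preimage, Set.mem_compl_iff]
          exact hchar x.1 x.2
        rw [heq]
        exact hSBclosed.isOpen_compl.preimage continuous_subtype_val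
      have hHclosed : IsClosed {x : Θ | IsHurwitz (M x.1)} := by
        rw [← isOpen_compl_iff]
        rw [isOpen_iff_forall_mem_open]
        intro x hx
        have hx' : ¬ IsHurwitz (M x.1) := hx
        rw [IsHurwitz] at hx'
        push_neg at hx'
        obtain ⟨z, hz, hzre⟩ := hx'
        obtain ⟨t, ht1, ht2⟩ := MetzAux.pf_metzler (hMetz x.1 x.2) hz
        have ht0' : 0 ≤ t := le_trans hzre ht1
        have ht0 : 0 < t := by
          rcases lt_or_eq_of_le ht0' with h | h
          · exact h
          · exfalso
            have hq0 := hdet x.1 x.2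
            rw [← MetzAux.q_zero] at hq0
            rw [← h] at ht2
            linarith
        have hcsub : Continuous fun y : Θ => MetzAux.q (M y.1) t := by
          apply hdetc.comp
          apply Continuous.sub continuous_const
          exact hcont.restrict
        refine ⟨{y : Θ | |MetzAux.q (M y.1) t| < t ^ d}, ?_, ?_, ?_⟩
        · intro y hy hyH
          have hge := MetzAux.hurwitz_quant hyH ht0
          have hlt : |MetzAux.q (M y.1) t| < t ^ d := hy
          linarith
        · exact isOpen_lt hcsub.abs continuous_const
        · simp only [Set.mem_setOf_eq, ht2, abs_zero]
          positivity
      have hne : {x : Θ | IsHurwitz (M x.1)}.Nonempty := ⟨⟨θs, hθs⟩, hHs⟩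
      have huniv := IsClopen.eq_univ ⟨hHclosed, hHopen⟩ hne
      have hmem : (⟨θ, hθ⟩ : Θ) ∈ {x : Θ | IsHurwitz (M x.1)} := by
        rw [huniv]
        exact Set.mem_univ _
      exact hmem
end

section
/- Let M be a d×d Metzler matrix that is Hurwitz stable. Then (−1)^d det(M) > 0, and the vector vᵀ = (−1)^{d+1} 𝟙ᵀ adj(M) (where adj denotes the adjugate matrix) is strictly positive and satisfies vᵀM = 𝟙ᵀ(−1)^d det(M)·(−1) < 0, i.e., vᵀM = −(−1)^d det(M) 𝟙ᵀ < 0 componentwise. -/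
open Matrix

section Aux
open Finset

lemma pow_entry_nonneg_s10 {d : ℕ} {A : Matrix (Fin d) (Fin d) ℝ}
    (hA : ∀ i j, 0 ≤ A i j) (k : ℕ) : ∀ i j, 0 ≤ (A ^ k) i j := by
  induction k with
  | zero => intro i j; rw [pow_zero, Matrix.one_apply]; split <;> norm_num
  | succ k ih =>
    intro i j
    rw [pow_succ, Matrix.mul_apply]
    exact Finset.sum_nonneg fun l _ => mul_nonneg (ih i l) (hA l j)

lemma pow_rowsum_le {d : ℕ} {A : Matrix (Fin d) (Fin d) ℝ}
    (hA : ∀ i j, 0 ≤ A i j) {r : ℝ} (hr : 0 ≤ r)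
    (hrow : ∀ i, ∑ j, A i j ≤ r) (k : ℕ) : ∀ i, ∑ j, (A ^ k) i j ≤ r ^ k := by
  induction k with
  | zero =>
    intro i; rw [pow_zero, pow_zero]
    have : ∑ j, (1 : Matrix (Fin d) (Fin d) ℝ) i j = 1 := by
      simp [Matrix.one_apply]
    rw [this]
  | succ k ih =>
    intro i
    rw [pow_succ, pow_succ]
    calc ∑ j, (A ^ k * A) i j = ∑ j, ∑ l, (A ^ k) i l * A l j := by
          simp [Matrix.mul_apply]
      _ = ∑ l, (A ^ k) i l * (∑ j, A l j) := by
          rw [Finset.sum_comm]; simp [Finset.mul_sum]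
      _ ≤ ∑ l, (A ^ k) i l * r := by
          refine Finset.sum_le_sum fun l _ => ?_
          exact mul_le_mul_of_nonneg_left (hrow l) (pow_entry_nonneg_s10 hA k i l)
      _ = (∑ l, (A ^ k) i l) * r := by rw [Finset.sum_mul]
      _ ≤ r ^ k * r := mul_le_mul_of_nonneg_right (ih i) hr

lemma pow_entry_le {d : ℕ} {A : Matrix (Fin d) (Fin d) ℝ}
    (hA : ∀ i j, 0 ≤ A i j) {r : ℝ} (hr : 0 ≤ r)
    (hrow : ∀ i, ∑ j, A i j ≤ r) (k : ℕ) (i j : Fin d) : (A ^ k) i j ≤ r ^ k :=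
  le_trans (Finset.single_le_sum (fun l _ => pow_entry_nonneg_s10 hA k i l) (Finset.mem_univ j))
    (pow_rowsum_le hA hr hrow k i)

lemma neumann {d : ℕ} (A : Matrix (Fin d) (Fin d) ℝ) (hA : ∀ i j, 0 ≤ A i j)
    {r : ℝ} (hr0 : 0 ≤ r) (hr1 : r < 1) (hrow : ∀ i, ∑ j, A i j ≤ r) :
    ∃ G : Matrix (Fin d) (Fin d) ℝ, (∀ i j, 0 ≤ G i j) ∧ (1 - A) * G = 1 ∧ G * (1 - A) = 1 := by
  have hsum : ∀ i j, Summable fun k => (A ^ k) i j := fun i j =>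
    Summable.of_nonneg_of_le (fun k => pow_entry_nonneg_s10 hA k i j)
      (fun k => pow_entry_le hA hr0 hrow k i j) (summable_geometric_of_lt_one hr0 hr1)
  set G : Matrix (Fin d) (Fin d) ℝ := Matrix.of fun i j => ∑' k, (A ^ k) i j with hG
  have hGnn : ∀ i j, 0 ≤ G i j := fun i j =>
    tsum_nonneg fun k => pow_entry_nonneg_s10 hA k i j
  -- partial sums
  set S : ℕ → Matrix (Fin d) (Fin d) ℝ := fun n => ∑ k ∈ Finset.range n, A ^ k with hS
  have hSlim : ∀ i j, Filter.Tendsto (fun n => S n i j) Filter.atTop (nhds (G i j)) := by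
    intro i j
    have := (hsum i j).hasSum.tendsto_sum_nat
    simpa [hS, hG, Matrix.sum_apply] using this
  have hcomm : ∀ n, (1 - A) * S n = S n * (1 - A) := by
    intro n
    have : Commute A (S n) := Commute.sum_right _ _ _ fun k _ => (Commute.refl A).pow_right k
    rw [sub_mul, mul_sub, one_mul, mul_one, this.eq]
  have hgeom : ∀ n, S n * (1 - A) = 1 - A ^ n := by
    intro n
    have := geom_sum_mul A n
    have h2 : S n * (1 - A) = -(S n * (A - 1)) := by rw [← neg_sub A 1, mul_neg]
    rw [h2, hS, this, neg_sub]
  have hpowlim : ∀ i j, Filter.Tendsto (fun n => (A ^ n) i j) Filter.atTop (nhds 0) :=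
    fun i j => squeeze_zero (fun n => pow_entry_nonneg_s10 hA n i j)
      (fun n => pow_entry_le hA hr0 hrow n i j)
      (tendsto_pow_atTop_nhds_zero_of_lt_one hr0 hr1)
  have key : ∀ X : Matrix (Fin d) (Fin d) ℝ,
      (∀ n, X * S n = 1 - A ^ n) → X * G = 1 := by
    intro X hX
    ext i j
    have h1 : Filter.Tendsto (fun n => (X * S n) i j) Filter.atTop (nhds ((X * G) i j)) := by
      simp only [Matrix.mul_apply]
      exact tendsto_finset_sum _ fun l _ => (tendsto_const_nhds.mul (hSlim l j))
    have h2 : Filter.Tendsto (fun n => (X * S n) i j) Filter.atTop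
        (nhds ((1 : Matrix (Fin d) (Fin d) ℝ) i j)) := by
      have : ∀ n, (X * S n) i j = (1 : Matrix (Fin d) (Fin d) ℝ) i j - (A ^ n) i j := by
        intro n; rw [hX n, Matrix.sub_apply]
      simp_rw [this]
      simpa using tendsto_const_nhds.sub (hpowlim i j)
    exact tendsto_nhds_unique h1 h2
  have key2 : ∀ X : Matrix (Fin d) (Fin d) ℝ,
      (∀ n, S n * X = 1 - A ^ n) → G * X = 1 := by
    intro X hX
    ext i j
    have h1 : Filter.Tendsto (fun n => (S n * X) i j) Filter.atTop (nhds ((G * X) i j)) := by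
      simp only [Matrix.mul_apply]
      exact tendsto_finset_sum _ fun l _ => ((hSlim i l).mul tendsto_const_nhds)
    have h2 : Filter.Tendsto (fun n => (S n * X) i j) Filter.atTop
        (nhds ((1 : Matrix (Fin d) (Fin d) ℝ) i j)) := by
      have : ∀ n, (S n * X) i j = (1 : Matrix (Fin d) (Fin d) ℝ) i j - (A ^ n) i j := by
        intro n; rw [hX n, Matrix.sub_apply]
      simp_rw [this]
      simpa using tendsto_const_nhds.sub (hpowlim i j)
    exact tendsto_nhds_unique h1 h2
  refine ⟨G, hGnn, key _ fun n => by rw [hcomm n, hgeom n], key2 _ hgeom⟩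


lemma step_lemma {d : ℕ} (X R : Matrix (Fin d) (Fin d) ℝ) (hR : ∀ i j, 0 ≤ R i j)
    (hXR : X * R = 1) (hRX : R * X = 1) {h r : ℝ} (hh : 0 ≤ h)
    (hr0 : 0 ≤ r) (hr1 : r < 1) (hrow : ∀ i, ∑ j, h * R i j ≤ r) :
    ∃ N : Matrix (Fin d) (Fin d) ℝ, (∀ i j, 0 ≤ N i j) ∧
      (X - h • 1) * N = 1 ∧ N * (X - h • 1) = 1 := by
  obtain ⟨G, hGnn, hG1, hG2⟩ := neumann (h • R)
    (fun i j => by simpa using mul_nonneg hh (hR i j)) hr0 hr1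
    (fun i => by simpa using hrow i)
  have hfact : X - h • 1 = X * (1 - h • R) := by
    rw [mul_sub, mul_one, mul_smul_comm, hXR]
  have hfact' : X - h • 1 = (1 - h • R) * X := by
    rw [sub_mul, one_mul, smul_mul_assoc, hRX]
  have hcomm : R * (1 - h • R) = (1 - h • R) * R := by
    rw [mul_sub, sub_mul, mul_one, one_mul, mul_smul_comm, smul_mul_assoc]
  refine ⟨G * R, ?_, ?_, ?_⟩
  · intro i j
    rw [Matrix.mul_apply]
    exact Finset.sum_nonneg fun l _ => mul_nonneg (hGnn i l) (hR l j)
  · calc (X - h • 1) * (G * R) = X * ((1 - h • R) * G) * R := by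
          rw [hfact]; noncomm_ring
      _ = 1 := by rw [hG1, mul_one, hXR]
  · calc (G * R) * (X - h • 1) = G * (R * (1 - h • R)) * X := by
          rw [hfact']; noncomm_ring
      _ = G * (1 - h • R) * (R * X) := by rw [hcomm]; noncomm_ring
      _ = 1 := by rw [hG2, hRX, one_mul]


lemma det_resolvent_ne_zero {d : ℕ} (M : Matrix (Fin d) (Fin d) ℝ) (hH : IsHurwitz M) :
    ∀ t : ℝ, 0 ≤ t → (t • (1 : Matrix (Fin d) (Fin d) ℝ) - M).det ≠ 0 := by
  intro t ht hzero
  have hmem : (t : ℂ) ∈ spectrum ℂ (M.map Complex.ofReal) := by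
    rw [spectrum.mem_iff]
    rw [Matrix.isUnit_iff_isUnit_det]
    have hmap : algebraMap ℂ (Matrix (Fin d) (Fin d) ℂ) (t : ℂ) - M.map Complex.ofReal
        = (t • (1 : Matrix (Fin d) (Fin d) ℝ) - M).map Complex.ofRealHom := by
      rw [Algebra.algebraMap_eq_smul_one]
      ext i j
      simp [Matrix.map_apply, Matrix.one_apply, apply_ite]
    rw [hmap, ← RingHom.mapMatrix_apply, ← RingHom.map_det, hzero]
    simp
  have := hH _ hmem
  rw [Complex.ofReal_re] at this
  linarith


lemma det_sign_pos {d : ℕ} (M : Matrix (Fin d) (Fin d) ℝ)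
    (hdet : ∀ t : ℝ, 0 ≤ t → (t • (1 : Matrix (Fin d) (Fin d) ℝ) - M).det ≠ 0) :
    0 < (-1 : ℝ) ^ d * M.det := by
  set p : ℝ → ℝ := fun t => (t • (1 : Matrix (Fin d) (Fin d) ℝ) - M).det with hp
  have hpcont : Continuous p :=
    ((continuous_id.smul continuous_const).sub continuous_const).matrix_det
  have hgcont : Continuous fun u : ℝ => ((1 : Matrix (Fin d) (Fin d) ℝ) - u • M).det :=
    (continuous_const.sub (continuous_id.smul continuous_const)).matrix_det
  set g : ℝ → ℝ := fun u => ((1 : Matrix (Fin d) (Fin d) ℝ) - u • M).det with hg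
  have hg0 : g 0 = 1 := by simp [hg]
  have hev : ∀ᶠ u in nhds (0 : ℝ), 0 < g u := by
    have := hgcont.continuousAt (x := 0)
    rw [ContinuousAt, hg0] at this
    exact this.eventually (eventually_gt_nhds one_pos)
  obtain ⟨δ, hδpos, hδ⟩ := Metric.eventually_nhds_iff.mp hev
  set t0 : ℝ := δ⁻¹ + 1 with ht0
  have ht0pos : 0 < t0 := by positivity
  have hinv : dist (t0⁻¹) 0 < δ := by
    rw [Real.dist_eq, sub_zero, abs_of_pos (by positivity)]
    rw [inv_lt_comm₀ ht0pos hδpos]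
    simp [ht0]
  have hpt0 : 0 < p t0 := by
    have hfact : t0 • (1 : Matrix (Fin d) (Fin d) ℝ) - M
        = t0 • ((1 : Matrix (Fin d) (Fin d) ℝ) - t0⁻¹ • M) := by
      rw [smul_sub, smul_smul, mul_inv_cancel₀ (ne_of_gt ht0pos), one_smul]
    rw [hp]
    simp only [hfact, Matrix.det_smul, Fintype.card_fin]
    exact mul_pos (pow_pos ht0pos d) (hδ hinv)
  have hp0 : 0 < p 0 := by
    rcases lt_or_gt_of_ne (hdet 0 le_rfl) with hneg | hpos
    · exfalso
      obtain ⟨c, hc, hpc⟩ := intermediate_value_Icc (le_of_lt ht0pos) hpcont.continuousOn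
        (Set.mem_Icc.mpr ⟨le_of_lt hneg, le_of_lt hpt0⟩)
      exact hdet c hc.1 hpc
    · exact hpos
  have : p 0 = (-1 : ℝ) ^ d * M.det := by
    rw [hp]
    simp only [zero_smul, zero_sub, Matrix.det_neg, Fintype.card_fin]
  rwa [this] at hp0


lemma neg_inv_nonneg {d : ℕ} (M : Matrix (Fin d) (Fin d) ℝ) (hM : IsMetzler M)
    (hdet : ∀ t : ℝ, 0 ≤ t → (t • (1 : Matrix (Fin d) (Fin d) ℝ) - M).det ≠ 0) :
    ∀ i j, 0 ≤ (-M)⁻¹ i j := by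
  classical
  -- shift constant
  obtain ⟨s, hs0, habs⟩ : ∃ s : ℝ, 0 ≤ s ∧ ∀ i j, |M i j| ≤ s := by
    refine ⟨∑ i, ∑ j, |M i j|,
      Finset.sum_nonneg fun i _ => Finset.sum_nonneg fun j _ => abs_nonneg _, fun i j => ?_⟩
    calc |M i j| ≤ ∑ j', |M i j'| :=
          Finset.single_le_sum (f := fun j' => |M i j'|) (fun l _ => abs_nonneg _)
            (Finset.mem_univ j)
      _ ≤ _ := Finset.single_le_sum (f := fun i => ∑ j', |M i j'|)
          (fun l _ => Finset.sum_nonneg fun _ _ => abs_nonneg _) (Finset.mem_univ i)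
  set A : Matrix (Fin d) (Fin d) ℝ := M + s • 1 with hA_def
  have hAnn : ∀ i j, 0 ≤ A i j := by
    intro i j
    rcases eq_or_ne i j with rfl | hij
    · have := neg_abs_le (M i i)
      have h2 := habs i i
      simp only [hA_def, Matrix.add_apply, Matrix.smul_apply, Matrix.one_apply_eq, smul_eq_mul,
        mul_one]
      linarith
    · simp only [hA_def, Matrix.add_apply, Matrix.smul_apply, Matrix.one_apply_ne hij,
        smul_eq_mul, mul_zero, add_zero]
      exact hM i j hij
  obtain ⟨σ, hσ0, hrowA⟩ : ∃ σ : ℝ, 0 ≤ σ ∧ ∀ i, ∑ j, A i j ≤ σ :=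
    ⟨∑ i, ∑ j, A i j,
      Finset.sum_nonneg fun i _ => Finset.sum_nonneg fun j _ => hAnn i j,
      fun i => Finset.single_le_sum (f := fun i => ∑ j, A i j)
        (fun l _ => Finset.sum_nonneg fun j _ => hAnn l j) (Finset.mem_univ i)⟩
  set T : ℝ := σ + 1 with hT_def
  have hT0 : 0 < T := by positivity
  have hTs : 0 < T + s := by positivity
  set c : ℝ := (T + s)⁻¹ with hc_def
  have hc0 : 0 ≤ c := inv_nonneg.mpr (le_of_lt hTs)
  -- base case: Neumann at T
  obtain ⟨G, hGnn, hG1, hG2⟩ := neumann (c • A)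
    (fun i j => by simpa using mul_nonneg hc0 (hAnn i j))
    (r := c * σ) (mul_nonneg hc0 hσ0)
    (by rw [hc_def, inv_mul_lt_one₀ hTs]; linarith)
    (fun i => by
      simp only [Matrix.smul_apply, smul_eq_mul, ← Finset.mul_sum]
      exact mul_le_mul_of_nonneg_left (hrowA i) hc0)
  have hXT : T • (1 : Matrix (Fin d) (Fin d) ℝ) - M = (T + s) • (1 - c • A) := by
    rw [smul_sub, smul_smul, mul_inv_cancel₀ (ne_of_gt hTs), one_smul, hA_def,
      add_smul T s (1 : Matrix (Fin d) (Fin d) ℝ)]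
    abel
  have hRT1 : (T • (1 : Matrix (Fin d) (Fin d) ℝ) - M) * (c • G) = 1 := by
    rw [hXT, smul_mul_assoc, mul_smul_comm, smul_smul, mul_inv_cancel₀ (ne_of_gt hTs), hG1,
      one_smul]
  have hinvT : (T • (1 : Matrix (Fin d) (Fin d) ℝ) - M)⁻¹ = c • G :=
    Matrix.inv_eq_right_inv hRT1
  -- continuity and uniform bound on [0, T]
  set Inv : ℝ → Matrix (Fin d) (Fin d) ℝ :=
    fun t => (t • (1 : Matrix (Fin d) (Fin d) ℝ) - M)⁻¹ with hInv_def
  have hbase : Continuous fun t : ℝ => t • (1 : Matrix (Fin d) (Fin d) ℝ) - M :=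
    (continuous_id.smul continuous_const).sub continuous_const
  have hcontInv : ContinuousOn Inv (Set.Icc 0 T) := by
    have : ContinuousOn (fun t : ℝ =>
        ((t • (1 : Matrix (Fin d) (Fin d) ℝ) - M).det)⁻¹ •
          (t • (1 : Matrix (Fin d) (Fin d) ℝ) - M).adjugate) (Set.Icc 0 T) :=
      ContinuousOn.smul (hbase.matrix_det.continuousOn.inv₀ fun t ht => hdet t ht.1)
        hbase.matrix_adjugate.continuousOn
    refine this.congr fun t _ => ?_
    show (t • (1 : Matrix (Fin d) (Fin d) ℝ) - M)⁻¹ = _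
    rw [Matrix.inv_def, Ring.inverse_eq_inv]
  set F : ℝ → ℝ := fun t => ∑ i, ∑ j, |Inv t i j| with hF_def
  have hFcont : ContinuousOn F (Set.Icc 0 T) := by
    refine continuousOn_finset_sum _ fun i _ => continuousOn_finset_sum _ fun j _ => ?_
    have hentry : Continuous fun B : Matrix (Fin d) (Fin d) ℝ => B i j :=
      (continuous_apply j).comp (continuous_apply i)
    exact (hentry.comp_continuousOn hcontInv).abs
  obtain ⟨C, hC⟩ := isCompact_Icc.exists_bound_of_continuousOn hFcont
  have hC0 : 0 ≤ C := le_trans (norm_nonneg _) (hC 0 (Set.mem_Icc.mpr ⟨le_rfl, le_of_lt hT0⟩))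
  have hentryC : ∀ t ∈ Set.Icc (0:ℝ) T, ∀ i j, Inv t i j ≤ C := by
    intro t ht i j
    calc Inv t i j ≤ |Inv t i j| := le_abs_self _
      _ ≤ ∑ j', |Inv t i j'| :=
          Finset.single_le_sum (f := fun j' => |Inv t i j'|) (fun l _ => abs_nonneg _)
            (Finset.mem_univ j)
      _ ≤ F t := Finset.single_le_sum (f := fun i => ∑ j', |Inv t i j'|)
          (fun l _ => Finset.sum_nonneg fun _ _ => abs_nonneg _) (Finset.mem_univ i)
      _ ≤ ‖F t‖ := le_abs_self _
      _ ≤ C := hC t ht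
  -- grid
  set n : ℕ := ⌈T * ((d : ℝ) * C + 1)⌉₊ + 1 with hn_def
  have hn0 : 0 < n := Nat.succ_pos _
  have hnR : (0:ℝ) < n := by exact_mod_cast hn0
  set h : ℝ := T / n with hh_def
  have hh0 : 0 ≤ h := le_of_lt (div_pos hT0 hnR)
  have hnh : (n : ℝ) * h = T := by
    rw [hh_def, mul_div_cancel₀ _ (ne_of_gt hnR)]
  set r : ℝ := h * ((d : ℝ) * C + 1) with hr_def
  have hr0 : 0 ≤ r := by positivity
  have hr1 : r < 1 := by
    rw [hr_def, hh_def, div_mul_eq_mul_div, div_lt_one hnR]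
    calc T * ((d : ℝ) * C + 1) ≤ (⌈T * ((d : ℝ) * C + 1)⌉₊ : ℝ) := Nat.le_ceil _
      _ < n := by rw [hn_def]; push_cast; linarith
  have key : ∀ j : ℕ, j ≤ n → ∀ i k, 0 ≤ Inv (T - j * h) i k := by
    intro j
    induction j with
    | zero =>
      intro _ i k
      have : T - (0 : ℕ) * h = T := by push_cast; ring
      rw [this]
      show 0 ≤ (T • (1 : Matrix (Fin d) (Fin d) ℝ) - M)⁻¹ i k
      rw [hinvT]
      simpa using mul_nonneg hc0 (hGnn i k)
    | succ j ih =>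
      intro hjn i k
      have hj : j ≤ n := Nat.le_of_succ_le hjn
      set t : ℝ := T - j * h with ht_def
      have htmem : t ∈ Set.Icc (0:ℝ) T := by
        constructor
        · have : (j : ℝ) * h ≤ (n : ℝ) * h :=
            mul_le_mul_of_nonneg_right (by exact_mod_cast hj) hh0
          rw [hnh] at this
          linarith [ht_def]
        · have : 0 ≤ (j : ℝ) * h := by positivity
          simp only [ht_def]; linarith
      have hdt := hdet t htmem.1
      have hunit : IsUnit (t • (1 : Matrix (Fin d) (Fin d) ℝ) - M).det :=
        isUnit_iff_ne_zero.mpr hdt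
      have hXR := Matrix.mul_nonsing_inv _ hunit
      have hRX := Matrix.nonsing_inv_mul _ hunit
      have hRnn : ∀ i' k', 0 ≤ Inv t i' k' := ih hj
      have hrow : ∀ i', ∑ k', h * Inv t i' k' ≤ r := by
        intro i'
        rw [← Finset.mul_sum]
        have h1 : ∑ k', Inv t i' k' ≤ (d : ℝ) * C := by
          calc ∑ k', Inv t i' k' ≤ ∑ _k' : Fin d, C :=
                Finset.sum_le_sum fun k' _ => hentryC t htmem i' k'
            _ = (d : ℝ) * C := by simp [mul_comm]
        calc h * ∑ k', Inv t i' k' ≤ h * ((d : ℝ) * C + 1) :=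
              mul_le_mul_of_nonneg_left (by linarith) hh0
          _ = r := hr_def.symm
      obtain ⟨N, hNnn, hN1, _⟩ := step_lemma _ _ hRnn hXR hRX hh0 hr0 hr1 hrow
      have hshift : (t - h) • (1 : Matrix (Fin d) (Fin d) ℝ) - M
          = (t • (1 : Matrix (Fin d) (Fin d) ℝ) - M) - h • 1 := by
        rw [sub_smul]; abel
      have hcast : T - (↑(j + 1) : ℝ) * h = t - h := by rw [ht_def]; push_cast; ring
      rw [hcast]
      show 0 ≤ ((t - h) • (1 : Matrix (Fin d) (Fin d) ℝ) - M)⁻¹ i k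
      rw [hshift, Matrix.inv_eq_right_inv hN1]
      exact hNnn i k
  have hfinal := key n le_rfl
  have h0 : T - (n : ℝ) * h = 0 := by rw [hnh]; ring
  rw [h0] at hfinal
  intro i j
  have h2 : (-M) = (0 : ℝ) • (1 : Matrix (Fin d) (Fin d) ℝ) - M := by
    rw [zero_smul, zero_sub]
  rw [h2]
  exact hfinal i j

end Aux

theorem metzler_hurwitz_adjugate_vector {d : ℕ}
    (M : Matrix (Fin d) (Fin d) ℝ) (hM : IsMetzler M) (hH : IsHurwitz M) :
    0 < (-1 : ℝ) ^ d * M.det ∧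
    (∀ j, 0 < ((-1 : ℝ) ^ (d + 1) • ((fun _ => (1 : ℝ)) ᵥ* M.adjugate)) j) ∧
    (((-1 : ℝ) ^ (d + 1) • ((fun _ => (1 : ℝ)) ᵥ* M.adjugate)) ᵥ* M
        = fun _ => -((-1 : ℝ) ^ d * M.det)) ∧
    (∀ j, ((((-1 : ℝ) ^ (d + 1) • ((fun _ => (1 : ℝ)) ᵥ* M.adjugate)) ᵥ* M) j) < 0) := by
  have hdet := det_resolvent_ne_zero M hH
  have hdetpos := det_sign_pos M hdet
  have hdetM : M.det ≠ 0 := by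
    intro h0
    rw [h0, mul_zero] at hdetpos
    exact lt_irrefl 0 hdetpos
  have hunit : IsUnit M.det := isUnit_iff_ne_zero.mpr hdetM
  have hneginv := neg_inv_nonneg M hM hdet
  have hdetnegunit : IsUnit (-M).det := by
    rw [Matrix.det_neg, Fintype.card_fin]
    exact isUnit_iff_ne_zero.mpr (ne_of_gt hdetpos)
  have hMinv : M⁻¹ = -(-M)⁻¹ := by
    apply Matrix.inv_eq_right_inv
    calc M * -(-M)⁻¹ = (-M) * (-M)⁻¹ := by rw [mul_neg, neg_mul]
      _ = 1 := Matrix.mul_nonsing_inv _ hdetnegunit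
  have hMinv_nonpos : ∀ i j, M⁻¹ i j ≤ 0 := by
    intro i j
    rw [hMinv, Matrix.neg_apply, neg_nonpos]
    exact hneginv i j
  set u : Fin d → ℝ := (fun _ => (1 : ℝ)) ᵥ* M⁻¹ with hu
  have hu_apply : ∀ j, u j = ∑ i, M⁻¹ i j := by
    intro j
    simp [hu, Matrix.vecMul, dotProduct]
  have huM : u ᵥ* M = fun _ => (1 : ℝ) := by
    rw [hu, Matrix.vecMul_vecMul, Matrix.nonsing_inv_mul M hunit, Matrix.vecMul_one]
  have hu_nonpos : ∀ j, u j ≤ 0 := by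
    intro j
    rw [hu_apply]
    exact Finset.sum_nonpos fun i _ => hMinv_nonpos i j
  have hu_neg : ∀ j, u j < 0 := by
    intro j
    rcases lt_or_eq_of_le (hu_nonpos j) with hlt | heq
    · exact hlt
    exfalso
    have h1 : (u ᵥ* M) j = 1 := by rw [huM]
    have h2 : (u ᵥ* M) j = ∑ i, u i * M i j := by
      simp [Matrix.vecMul, dotProduct]
    have h3 : ∑ i, u i * M i j ≤ 0 := by
      apply Finset.sum_nonpos
      intro i _
      rcases eq_or_ne i j with rfl | hij
      · simp [heq]
      · exact mul_nonpos_iff.mpr (Or.inr ⟨hu_nonpos i, hM i j hij⟩)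
    rw [h1] at h2
    linarith
  have hadj : M.adjugate = M.det • M⁻¹ := by
    rw [Matrix.inv_def, Ring.inverse_eq_inv, smul_smul, mul_inv_cancel₀ hdetM, one_smul]
  have hcomp : ∀ j, ((-1 : ℝ) ^ (d + 1) • ((fun _ => (1 : ℝ)) ᵥ* M.adjugate)) j
      = -((-1 : ℝ) ^ d * M.det) * u j := by
    intro j
    have hentry : ((fun _ => (1 : ℝ)) ᵥ* M.adjugate) j = M.det * u j := by
      rw [hadj, hu_apply]
      simp [Matrix.vecMul, dotProduct, Finset.mul_sum]
    rw [Pi.smul_apply, hentry, smul_eq_mul, pow_succ]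
    ring
  have h3 : ∀ j, (((-1 : ℝ) ^ (d + 1) • ((fun _ => (1 : ℝ)) ᵥ* M.adjugate)) ᵥ* M) j
      = -((-1 : ℝ) ^ d * M.det) := by
    intro j
    rw [Matrix.smul_vecMul, Pi.smul_apply, Matrix.vecMul_vecMul, Matrix.adjugate_mul]
    have hentry : ((fun _ => (1 : ℝ)) ᵥ* (M.det • (1 : Matrix (Fin d) (Fin d) ℝ))) j
        = M.det := by
      simp [Matrix.vecMul, dotProduct, Matrix.smul_apply, Matrix.one_apply]
    rw [hentry, smul_eq_mul, pow_succ]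
    ring
  refine ⟨hdetpos, ?_, ?_, ?_⟩
  · intro j
    rw [hcomp j]
    exact mul_pos_of_neg_of_neg (by linarith) (hu_neg j)
  · funext j
    exact h3 j
  · intro j
    rw [h3 j]
    linarith
end

section
/- Let A : ℝ^{n}_{>0} → ℝ^{d×d} be affine in its parameters, with A(ρ) Metzler for all ρ > 0, decomposed so that A(ρ_dg, ρ_cv, ρ_ct) is entrywise monotone: decreasing in ρ_dg and increasing in ρ_ct. Suppose A(ρ_dg, ρ_cv, 0) is Hurwitz for all positive (ρ_dg, ρ_cv), and write A(ρ) = A_ρ + S_ct D(ρ_ct) W_ct with S_ct, W_ct entrywise nonnegative and D(ρ_ct) diagonal positive, where A_ρ = A(ρ_dg, ρ_cv, 0). Then A(ρ) is Hurwitz stable for all ρ > 0 if and only if the spectral radius of W_ct A_ρ⁻¹ S_ct equals 0 for all positive (ρ_dg, ρ_cv). -/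
open Matrix

/-- The spectral radius of a real square matrix: the maximum modulus of its
(complex) eigenvalues. -/
noncomputable def specRad {n : ℕ} (N : Matrix (Fin n) (Fin n) ℝ) : ℝ :=
  sSup {x : ℝ | ∃ z ∈ spectrum ℂ (N.map (Complex.ofReal)), x = ‖z‖}


namespace SHaux

open Polynomial

variable {n : ℕ}


variable {n : ℕ}

/-- complexification -/
noncomputable def mc (Q : Matrix (Fin n) (Fin n) ℝ) : Matrix (Fin n) (Fin n) ℂ :=
  Q.map (Complex.ofReal)

lemma mc_apply (Q : Matrix (Fin n) (Fin n) ℝ) (i j : Fin n) : mc Q i j = (Q i j : ℂ) := rfl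

lemma mc_add (Q R : Matrix (Fin n) (Fin n) ℝ) : mc (Q + R) = mc Q + mc R := by
  ext i j; simp [mc]

lemma mc_sub (Q R : Matrix (Fin n) (Fin n) ℝ) : mc (Q - R) = mc Q - mc R := by
  ext i j; simp [mc]

lemma mc_one : mc (1 : Matrix (Fin n) (Fin n) ℝ) = 1 := by
  ext i j; simp [mc, Matrix.one_apply]; split <;> simp

lemma mc_smul (c : ℝ) (Q : Matrix (Fin n) (Fin n) ℝ) : mc (c • Q) = (c : ℂ) • mc Q := by
  ext i j; simp [mc]

lemma mc_mul (Q R : Matrix (Fin n) (Fin n) ℝ) : mc (Q * R) = mc Q * mc R := by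
  ext i j; simp [mc, Matrix.mul_apply]

lemma mc_pow (Q : Matrix (Fin n) (Fin n) ℝ) (k : ℕ) : mc (Q ^ k) = mc Q ^ k := by
  induction k with
  | zero => simpa using mc_one
  | succ k ih => rw [pow_succ, pow_succ, mc_mul, ih]

lemma mc_inj {Q R : Matrix (Fin n) (Fin n) ℝ} (h : mc Q = mc R) : Q = R := by
  ext i j
  have h2 := congrFun (congrFun h i) j
  simpa [mc] using h2

lemma mc_det (Q : Matrix (Fin n) (Fin n) ℝ) : (mc Q).det = (Q.det : ℂ) :=
  by
  have := RingHom.map_det Complex.ofRealHom Q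
  exact this.symm

/-- spectrum membership iff det vanishing, over ℂ. -/
lemma mem_spec_iff_det (Q : Matrix (Fin n) (Fin n) ℂ) (z : ℂ) :
    z ∈ spectrum ℂ Q ↔ (z • (1 : Matrix (Fin n) (Fin n) ℂ) - Q).det = 0 := by
  rw [spectrum.mem_iff]
  have halg : (algebraMap ℂ (Matrix (Fin n) (Fin n) ℂ)) z = z • 1 := by
    rw [Matrix.algebraMap_eq_diagonal]
    ext i j
    simp [Matrix.diagonal_apply, Matrix.one_apply, Pi.algebraMap_apply]
  rw [halg, Matrix.isUnit_iff_isUnit_det, isUnit_iff_ne_zero, not_ne_iff]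

lemma mem_spec_iff_eig (Q : Matrix (Fin n) (Fin n) ℂ) (z : ℂ) :
    z ∈ spectrum ℂ Q ↔ ∃ w ≠ 0, Q *ᵥ w = z • w := by
  rw [mem_spec_iff_det, ← Matrix.exists_mulVec_eq_zero_iff]
  constructor
  · rintro ⟨w, hw, hmul⟩
    refine ⟨w, hw, ?_⟩
    have := hmul
    rw [Matrix.sub_mulVec, Matrix.smul_mulVec, Matrix.one_mulVec, sub_eq_zero] at this
    exact this.symm
  · rintro ⟨w, hw, hmul⟩
    refine ⟨w, hw, ?_⟩
    rw [Matrix.sub_mulVec, Matrix.smul_mulVec, Matrix.one_mulVec, hmul, sub_self]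

lemma eval_charpoly (Q : Matrix (Fin n) (Fin n) ℂ) (t : ℂ) :
    Q.charpoly.eval t = (t • (1 : Matrix (Fin n) (Fin n) ℂ) - Q).det := by
  rw [Matrix.charpoly, eval_det, Matrix.matPolyEquiv_charmatrix]
  simp [Matrix.scalar_apply, Matrix.smul_one_eq_diagonal]

lemma mem_spec_iff_root (Q : Matrix (Fin n) (Fin n) ℂ) (z : ℂ) :
    z ∈ spectrum ℂ Q ↔ Q.charpoly.eval z = 0 := by
  rw [mem_spec_iff_det, eval_charpoly]

lemma spec_finite (Q : Matrix (Fin n) (Fin n) ℂ) : (spectrum ℂ Q).Finite := by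
  have hmono : Q.charpoly ≠ 0 := (Matrix.charpoly_monic Q).ne_zero
  apply Set.Finite.subset (Q.charpoly.roots.toFinset : Finset ℂ).finite_toSet
  intro z hz
  rw [mem_spec_iff_root] at hz
  simp only [Finset.coe_sort_coe, Multiset.mem_toFinset, Finset.mem_coe]
  exact (Polynomial.mem_roots hmono).mpr hz

lemma spec_nonempty (hn : 0 < n) (Q : Matrix (Fin n) (Fin n) ℂ) :
    (spectrum ℂ Q).Nonempty := by
  have hdeg : Q.charpoly.natDegree = n := by simpa using Matrix.charpoly_natDegree_eq_dim Q
  have : Q.charpoly.natDegree ≠ 0 := by omega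
  obtain ⟨z, hz⟩ := Complex.exists_root (show 0 < Q.charpoly.degree by
    rw [Polynomial.degree_eq_natDegree (Matrix.charpoly_monic Q).ne_zero]
    exact_mod_cast Nat.pos_of_ne_zero this)
  exact ⟨z, (mem_spec_iff_root Q z).mpr hz⟩

/-- if all complex eigenvalues vanish then Q^n = 0 -/
lemma pow_eq_zero_of_spec_zero (Q : Matrix (Fin n) (Fin n) ℝ)
    (h : ∀ z ∈ spectrum ℂ (mc Q), z = 0) : Q ^ n = 0 := by
  set p := (mc Q).charpoly with hp
  have hmonic : p.Monic := Matrix.charpoly_monic _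
  have hsplit : Splits p := IsAlgClosed.splits p
  have hdeg : p.natDegree = n := by
    rw [hp, Matrix.charpoly_natDegree_eq_dim, Fintype.card_fin]
  have hcard : p.roots.card = n := by
    have := hsplit.natDegree_eq_card_roots
    simpa [hdeg] using this.symm
  have hroots : ∀ a ∈ p.roots, a = 0 := by
    intro a ha
    apply h
    rw [mem_spec_iff_root]
    exact (Polynomial.mem_roots hmonic.ne_zero).mp ha
  have hprod : p = X ^ n := by
    have h1 : p = (p.roots.map fun a => X - C a).prod :=
      hsplit.eq_prod_roots_of_monic hmonic
    have h2 : p.roots.map (fun a => X - C a) = p.roots.map (fun _ => (X : ℂ[X])) := by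
      apply Multiset.map_congr rfl
      intro a ha
      rw [hroots a ha]; simp
    rw [h1, h2, Multiset.map_const', Multiset.prod_replicate, hcard]
  have hCH : (mc Q) ^ n = 0 := by
    have := Matrix.aeval_self_charpoly (mc Q)
    rw [← hp, hprod] at this
    simpa using this
  apply mc_inj
  rw [mc_pow, hCH]
  ext i j; simp [mc]


lemma mulVec_nonneg {m p : ℕ} {M : Matrix (Fin m) (Fin p) ℝ} {x : Fin p → ℝ}
    (hM : ∀ i j, 0 ≤ M i j) (hx : ∀ j, 0 ≤ x j) : ∀ i, 0 ≤ (M *ᵥ x) i := by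
  intro i
  rw [Matrix.mulVec, dotProduct]
  exact Finset.sum_nonneg fun j _ => mul_nonneg (hM i j) (hx j)

lemma mulVec_mono {m p : ℕ} {M : Matrix (Fin m) (Fin p) ℝ} {x y : Fin p → ℝ}
    (hM : ∀ i j, 0 ≤ M i j) (hxy : ∀ j, x j ≤ y j) : ∀ i, (M *ᵥ x) i ≤ (M *ᵥ y) i := by
  intro i
  rw [Matrix.mulVec, Matrix.mulVec, dotProduct, dotProduct]
  exact Finset.sum_le_sum fun j _ => mul_le_mul_of_nonneg_left (hxy j) (hM i j)

lemma mul_entries_nonneg {m p q : ℕ} {M : Matrix (Fin m) (Fin p) ℝ} {N : Matrix (Fin p) (Fin q) ℝ}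
    (hM : ∀ i j, 0 ≤ M i j) (hN : ∀ i j, 0 ≤ N i j) : ∀ i j, 0 ≤ (M * N) i j := by
  intro i j
  rw [Matrix.mul_apply]
  exact Finset.sum_nonneg fun k _ => mul_nonneg (hM i k) (hN k j)

lemma mul_entries_nonpos {m p q : ℕ} {M : Matrix (Fin m) (Fin p) ℝ} {N : Matrix (Fin p) (Fin q) ℝ}
    (hM : ∀ i j, 0 ≤ M i j) (hN : ∀ i j, N i j ≤ 0) : ∀ i j, (M * N) i j ≤ 0 := by
  intro i j
  rw [Matrix.mul_apply]
  exact Finset.sum_nonpos fun k _ => mul_nonpos_of_nonneg_of_nonpos (hM i k) (hN k j)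

lemma pow_entries_nonneg {M : Matrix (Fin n) (Fin n) ℝ} (hM : ∀ i j, 0 ≤ M i j) (k : ℕ) :
    ∀ i j, 0 ≤ (M ^ k) i j := by
  induction k with
  | zero => intro i j; simp [Matrix.one_apply]; split <;> simp
  | succ k ih => rw [pow_succ]; exact mul_entries_nonneg ih hM

/-- From an eigenvalue of the complexification, an entrywise modulus inequality. -/
lemma eig_modulus (Q : Matrix (Fin n) (Fin n) ℝ) {z : ℂ} (hz : z ∈ spectrum ℂ (mc Q)) :
    ∃ x : Fin n → ℝ, (∀ i, 0 ≤ x i) ∧ x ≠ 0 ∧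
      ∀ i, ‖z‖ * x i ≤ ∑ j, |Q i j| * x j := by
  obtain ⟨w, hw0, hw⟩ := (mem_spec_iff_eig (mc Q) z).mp hz
  refine ⟨fun i => ‖w i‖, fun i => norm_nonneg _, ?_, ?_⟩
  · intro h
    apply hw0
    funext i
    have := congrFun h i
    simpa using this
  · intro i
    have h1 : (mc Q *ᵥ w) i = z * w i := by rw [hw]; rfl
    have h2 : ‖z‖ * ‖w i‖ = ‖(mc Q *ᵥ w) i‖ := by
      rw [h1, norm_mul]
    rw [h2]
    calc ‖(mc Q *ᵥ w) i‖ = ‖∑ j, (Q i j : ℂ) * w j‖ := rfl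
      _ ≤ ∑ j, ‖(Q i j : ℂ) * w j‖ := norm_sum_le _ _
      _ = ∑ j, |Q i j| * ‖w j‖ := by
          apply Finset.sum_congr rfl
          intro j _
          rw [norm_mul, Complex.norm_real, Real.norm_eq_abs]

/-- nilpotency by domination: if `|Q| ≤ c P` entrywise with `P ≥ 0` and `P^n = 0` then `Q^n = 0`. -/
lemma nilpotent_of_dominated {P Q : Matrix (Fin n) (Fin n) ℝ} {c : ℝ} (hc : 0 ≤ c)
    (hP : ∀ i j, 0 ≤ P i j) (hPn : P ^ n = 0)
    (hdom : ∀ i j, |Q i j| ≤ c * P i j) : Q ^ n = 0 := by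
  apply pow_eq_zero_of_spec_zero
  intro z hz
  obtain ⟨x, hx0, hxne, hxi⟩ := eig_modulus Q hz
  -- key: |z| x ≤ c * (P x)
  have hkey : ∀ i, ‖z‖ * x i ≤ c * (P *ᵥ x) i := by
    intro i
    refine (hxi i).trans ?_
    rw [Matrix.mulVec, dotProduct, Finset.mul_sum]
    apply Finset.sum_le_sum
    intro j _
    calc |Q i j| * x j ≤ (c * P i j) * x j :=
          mul_le_mul_of_nonneg_right (hdom i j) (hx0 j)
      _ = c * (P i j * x j) := by ring
  -- iterate
  have hiter : ∀ k, ∀ i, (‖z‖) ^ k * x i ≤ c ^ k * ((P ^ k) *ᵥ x) i := by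
    intro k
    induction k with
    | zero => intro i; simp [Matrix.one_mulVec]
    | succ k ih =>
      intro i
      have habs : (0 : ℝ) ≤ ‖z‖ := norm_nonneg z
      have step : ‖z‖ * ((P ^ k) *ᵥ x) i ≤ c * ((P ^ (k+1)) *ᵥ x) i := by
        have h1 : (P ^ k) *ᵥ (fun j => ‖z‖ * x j) = ‖z‖ • ((P ^ k) *ᵥ x) := by
          rw [show (fun j => ‖z‖ * x j) = ‖z‖ • x from rfl, Matrix.mulVec_smul]
        have h2 := mulVec_mono (x := fun j => ‖z‖ * x j)
          (y := fun j => c * (P *ᵥ x) j) (pow_entries_nonneg hP k) (fun j => hkey j) i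
        rw [h1] at h2
        have h3 : (P ^ k) *ᵥ (fun j => c * (P *ᵥ x) j) = c • ((P ^ k * P) *ᵥ x) := by
          rw [show (fun j => c * (P *ᵥ x) j) = c • (P *ᵥ x) from rfl, Matrix.mulVec_smul,
            ← Matrix.mulVec_mulVec]
        rw [h3] at h2
        simpa [pow_succ] using h2
      calc (‖z‖) ^ (k+1) * x i = ‖z‖ * ((‖z‖) ^ k * x i) := by ring
        _ ≤ ‖z‖ * (c ^ k * ((P ^ k) *ᵥ x) i) := by
            exact mul_le_mul_of_nonneg_left (ih i) habs
        _ = c ^ k * (‖z‖ * ((P ^ k) *ᵥ x) i) := by ring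
        _ ≤ c ^ k * (c * ((P ^ (k+1)) *ᵥ x) i) := by
            exact mul_le_mul_of_nonneg_left step (pow_nonneg hc k)
        _ = c ^ (k+1) * ((P ^ (k+1)) *ᵥ x) i := by ring
  -- pick positive coordinate
  obtain ⟨i, hi⟩ : ∃ i, 0 < x i := by
    by_contra hcon
    push_neg at hcon
    apply hxne
    funext i
    exact le_antisymm (hcon i) (hx0 i)
  have := hiter n i
  rw [hPn] at this
  simp only [Matrix.zero_mulVec, Pi.zero_apply, mul_zero] at this
  have habsn : (‖z‖) ^ n ≤ 0 := by
    by_contra hcon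
    push_neg at hcon
    nlinarith
  have : ‖z‖ = 0 := by
    have h0 : (‖z‖) ^ n = 0 :=
      le_antisymm habsn (pow_nonneg (norm_nonneg z) n)
    rcases Nat.eq_zero_or_pos n with h | h
    · subst h; simp at h0
    · exact pow_eq_zero_iff (by omega) |>.mp h0
  exact norm_eq_zero.mp this


section Geom

attribute [local instance] Matrix.linftyOpNormedAddCommGroup Matrix.linftyOpNormedRing
  Matrix.linftyOpNormedAlgebra

lemma matrix_complete : CompleteSpace (Matrix (Fin n) (Fin n) ℝ) :=
  inferInstanceAs (CompleteSpace (Fin n → Fin n → ℝ))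

lemma entry_abs_le_norm (A : Matrix (Fin n) (Fin n) ℝ) (i j : Fin n) : |A i j| ≤ ‖A‖ := by
  rw [Matrix.linfty_opNorm_def]
  have h1 : ‖A i j‖₊ ≤ ∑ k, ‖A i k‖₊ :=
    Finset.single_le_sum (f := fun k => ‖A i k‖₊) (fun k _ => by positivity) (Finset.mem_univ j)
  have h2 : (∑ k, ‖A i k‖₊) ≤ (Finset.univ : Finset (Fin n)).sup fun i => ∑ j, ‖A i j‖₊ :=
    Finset.le_sup (f := fun i => ∑ j, ‖A i j‖₊) (Finset.mem_univ i)
  have := h1.trans h2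
  calc |A i j| = (‖A i j‖₊ : ℝ) := by simp [Real.norm_eq_abs]
    _ ≤ _ := by exact_mod_cast this

lemma norm_lt_of_rowsums (A : Matrix (Fin n) (Fin n) ℝ) {c : ℝ} (hc : 0 < c)
    (h : ∀ i, ∑ j, |A i j| < c) : ‖A‖ < c := by
  rw [Matrix.linfty_opNorm_def]
  have : ((Finset.univ : Finset (Fin n)).sup fun i => ∑ j, ‖A i j‖₊) < c.toNNReal := by
    apply Finset.sup_lt_iff (by simpa using hc) |>.mpr
    intro i _
    have : (∑ j, ‖A i j‖₊ : ℝ) < c := by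
      calc (∑ j, ‖A i j‖₊ : ℝ) = ∑ j, |A i j| := by
            push_cast; exact Finset.sum_congr rfl fun j _ => by simp [Real.norm_eq_abs]
        _ < c := h i
    rw [← NNReal.coe_lt_coe]
    simpa [Real.coe_toNNReal _ hc.le] using this
  have h2 : (((Finset.univ : Finset (Fin n)).sup fun i => ∑ j, ‖A i j‖₊ : NNReal) : ℝ)
      < (c.toNNReal : ℝ) := by exact_mod_cast this
  rw [Real.coe_toNNReal _ hc.le] at h2
  exact h2

/-- geometric series inverse of 1 - C with nonnegative entries -/
lemma geom_inverse_nonneg (C : Matrix (Fin n) (Fin n) ℝ) (hC : ∀ i j, 0 ≤ C i j)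
    (hrow : ∀ i, ∑ j, |C i j| < 1) :
    ∃ S : Matrix (Fin n) (Fin n) ℝ,
      (1 - C) * S = 1 ∧ S * (1 - C) = 1 ∧ ∀ i j, 0 ≤ S i j := by
  haveI := (matrix_complete (n := n))
  have hnorm : ‖C‖ < 1 := norm_lt_of_rowsums C one_pos hrow
  have hsurv : Summable (fun k : ℕ => C ^ k) := summable_geometric_of_norm_lt_one hnorm
  refine ⟨∑' k : ℕ, C ^ k, mul_neg_geom_series C hnorm, geom_series_mul_neg C hnorm, ?_⟩
  intro i j
  have hpart := hsurv.hasSum.tendsto_sum_nat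
  -- entries converge
  have hentry : Filter.Tendsto (fun N => (∑ k ∈ Finset.range N, C ^ k) i j)
      Filter.atTop (nhds ((∑' k : ℕ, C ^ k) i j)) := by
    replace hpart := Metric.tendsto_atTop.mp hpart
    rw [Metric.tendsto_atTop]
    intro ε hε
    obtain ⟨N₀, hN₀⟩ := hpart ε hε
    refine ⟨N₀, fun N hN => ?_⟩
    have := hN₀ N hN
    rw [dist_eq_norm] at this ⊢
    calc ‖(∑ k ∈ Finset.range N, C ^ k) i j - (∑' k : ℕ, C ^ k) i j‖
        = |((∑ k ∈ Finset.range N, C ^ k) - (∑' k : ℕ, C ^ k)) i j| := by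
          simp [Matrix.sub_apply, Real.norm_eq_abs]
      _ ≤ ‖(∑ k ∈ Finset.range N, C ^ k) - (∑' k : ℕ, C ^ k)‖ := entry_abs_le_norm _ i j
      _ < ε := this
  refine ge_of_tendsto' hentry fun N => ?_
  rw [Matrix.sum_apply]
  exact Finset.sum_nonneg fun k _ => pow_entries_nonneg hC k i j

end Geom

lemma det_real_ne_of_spec (B : Matrix (Fin n) (Fin n) ℝ) {t : ℝ}
    (hspec : ∀ z ∈ spectrum ℂ (mc B), ‖z‖ < t) :
    ∀ u, t ≤ u → (u • (1 : Matrix (Fin n) (Fin n) ℝ) - B).det ≠ 0 := by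
  intro u hu hdet0
  have hmem : ((u : ℂ)) ∈ spectrum ℂ (mc B) := by
    rw [mem_spec_iff_det]
    have : (u : ℂ) • (1 : Matrix (Fin n) (Fin n) ℂ) - mc B
        = mc (u • (1 : Matrix (Fin n) (Fin n) ℝ) - B) := by
      rw [mc_sub, mc_smul, mc_one]
    rw [this, mc_det, hdet0, Complex.ofReal_zero]
  have h1 := hspec _ hmem
  rw [Complex.norm_real, Real.norm_eq_abs] at h1
  have h2 : u ≤ |u| := le_abs_self u
  linarith

/-- Resolvent nonnegativity: if `B ≥ 0` and `t` dominates all eigenvalue moduli strictly,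
then `(t•1 - B)⁻¹` exists and is entrywise nonnegative. -/
lemma resolvent_nonneg (B : Matrix (Fin n) (Fin n) ℝ) (hB : ∀ i j, 0 ≤ B i j) (t : ℝ)
    (hspec : ∀ z ∈ spectrum ℂ (mc B), ‖z‖ < t) :
    (t • (1 : Matrix (Fin n) (Fin n) ℝ) - B).det ≠ 0 ∧
      ∀ i j, 0 ≤ (t • (1 : Matrix (Fin n) (Fin n) ℝ) - B)⁻¹ i j := by
  rcases Nat.eq_zero_or_pos n with rfl | hn
  · exact ⟨by simp, fun i j => i.elim0⟩
  have hdet := det_real_ne_of_spec B hspec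
  have hdetu : ∀ u, t ≤ u → IsUnit (u • (1 : Matrix (Fin n) (Fin n) ℝ) - B).det :=
    fun u hu => isUnit_iff_ne_zero.mpr (hdet u hu)
  have htpos : 0 < t := by
    obtain ⟨z, hz⟩ := spec_nonempty hn (mc B)
    exact lt_of_le_of_lt (norm_nonneg z) (hspec z hz)
  set T : ℝ := max t (1 + ∑ i, ∑ j, |B i j|) with hT
  have htT : t ≤ T := le_max_left _ _
  have hsum0 : 0 ≤ ∑ i, ∑ j, |B i j| :=
    Finset.sum_nonneg fun i _ => Finset.sum_nonneg fun j _ => abs_nonneg _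
  have hT1 : 1 + ∑ i, ∑ j, |B i j| ≤ T := le_max_right _ _
  have hTpos : 0 < T := lt_of_lt_of_le (by linarith) hT1
  -- base case: inverse at T is nonneg
  have hbase : ∀ i j, 0 ≤ (T • (1 : Matrix (Fin n) (Fin n) ℝ) - B)⁻¹ i j := by
    have hrow : ∀ i, ∑ j, |(T⁻¹ • B) i j| < 1 := by
      intro i
      have h1 : ∑ j, |(T⁻¹ • B) i j| = T⁻¹ * ∑ j, |B i j| := by
        rw [Finset.mul_sum]
        apply Finset.sum_congr rfl
        intro j _
        rw [Matrix.smul_apply, smul_eq_mul, abs_mul, abs_of_pos (inv_pos.mpr hTpos)]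
      rw [h1]
      have h2 : ∑ j, |B i j| ≤ ∑ i, ∑ j, |B i j| :=
        Finset.single_le_sum (f := fun i => ∑ j, |B i j|)
          (fun i _ => Finset.sum_nonneg fun j _ => abs_nonneg _) (Finset.mem_univ i)
      have h3 : ∑ j, |B i j| < T := by linarith
      rw [inv_mul_lt_iff₀ hTpos, mul_one]
      exact h3
    obtain ⟨S, hS1, _, hSpos⟩ := geom_inverse_nonneg (T⁻¹ • B)
      (fun i j => by
        rw [Matrix.smul_apply, smul_eq_mul]
        exact mul_nonneg (inv_pos.mpr hTpos).le (hB i j)) hrow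
    have hfact : (T • (1 : Matrix (Fin n) (Fin n) ℝ) - B) = T • (1 - T⁻¹ • B) := by
      rw [smul_sub, smul_smul, mul_inv_cancel₀ hTpos.ne', one_smul]
    have hright : (T • (1 : Matrix (Fin n) (Fin n) ℝ) - B) * (T⁻¹ • S) = 1 := by
      rw [hfact, Matrix.smul_mul, Matrix.mul_smul, smul_smul, mul_inv_cancel₀ hTpos.ne',
        one_smul, hS1]
    rw [Matrix.inv_eq_right_inv hright]
    intro i j
    rw [Matrix.smul_apply, smul_eq_mul]
    exact mul_nonneg (inv_pos.mpr hTpos).le (hSpos i j)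
  -- continuity bound on [t, T]
  set F : ℝ → Matrix (Fin n) (Fin n) ℝ :=
    fun u => ((u • (1 : Matrix (Fin n) (Fin n) ℝ) - B).det)⁻¹ •
      (u • (1 : Matrix (Fin n) (Fin n) ℝ) - B).adjugate with hFdef
  have hFinv : ∀ u, t ≤ u → (u • (1 : Matrix (Fin n) (Fin n) ℝ) - B)⁻¹ = F u := by
    intro u hu
    rw [Matrix.inv_def, Ring.inverse_eq_inv]
  set g : ℝ → ℝ := fun u => ∑ i, ∑ j, |F u i j| with hgdef
  have hMatC : Continuous fun u : ℝ => u • (1 : Matrix (Fin n) (Fin n) ℝ) - B :=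
    (continuous_id.smul continuous_const).sub continuous_const
  have hdetC : Continuous fun u : ℝ => (u • (1 : Matrix (Fin n) (Fin n) ℝ) - B).det :=
    hMatC.matrix_det
  have hadjC : Continuous fun u : ℝ => (u • (1 : Matrix (Fin n) (Fin n) ℝ) - B).adjugate :=
    hMatC.matrix_adjugate
  have hgc : ContinuousOn g (Set.Icc t T) := by
    apply continuousOn_finset_sum
    intro i _
    apply continuousOn_finset_sum
    intro j _
    apply ContinuousOn.abs
    apply ContinuousOn.mul
    · exact (hdetC.continuousOn).inv₀ fun u hu => hdet u hu.1
    · exact ((continuous_apply j).comp ((continuous_apply i).comp hadjC)).continuousOn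
  obtain ⟨x₀, hx₀mem, hx₀'⟩ := isCompact_Icc.exists_isMaxOn (Set.nonempty_Icc.mpr htT) hgc
  have hx₀ : ∀ u ∈ Set.Icc t T, g u ≤ g x₀ := hx₀'
  set C₀ : ℝ := g x₀ with hC₀
  have hC₀0 : 0 ≤ C₀ :=
    Finset.sum_nonneg fun i _ => Finset.sum_nonneg fun j _ => abs_nonneg _
  set δ : ℝ := 1 / (C₀ + 1) with hδ
  have hδpos : 0 < δ := by positivity
  have hδC : δ * C₀ < 1 := by
    rw [hδ, div_mul_eq_mul_div, div_lt_one (by linarith)]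
    linarith
  -- step lemma
  have hstep : ∀ u u₁ : ℝ, t ≤ u → u ≤ u₁ → u₁ ≤ T → u₁ - u ≤ δ →
      (∀ i j, 0 ≤ (u₁ • (1 : Matrix (Fin n) (Fin n) ℝ) - B)⁻¹ i j) →
      (∀ i j, 0 ≤ (u • (1 : Matrix (Fin n) (Fin n) ℝ) - B)⁻¹ i j) := by
    intro u u₁ htu huu hu₁T hdle hpos
    set f₁ := (u₁ • (1 : Matrix (Fin n) (Fin n) ℝ) - B)⁻¹ with hf₁
    set y := (u₁ - u) • f₁ with hy
    have htu₁ : t ≤ u₁ := le_trans htu huu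
    have hynn : ∀ i j, 0 ≤ y i j := by
      intro i j
      rw [hy, Matrix.smul_apply, smul_eq_mul]
      exact mul_nonneg (by linarith) (hpos i j)
    have hrowy : ∀ i, ∑ j, |y i j| < 1 := by
      intro i
      have h1 : ∑ j, |y i j| = (u₁ - u) * ∑ j, |f₁ i j| := by
        rw [Finset.mul_sum]
        apply Finset.sum_congr rfl
        intro j _
        rw [hy, Matrix.smul_apply, smul_eq_mul, abs_mul, abs_of_nonneg (by linarith : (0:ℝ) ≤ u₁ - u)]
      have h2 : ∑ j, |f₁ i j| ≤ g u₁ := by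
        rw [hgdef]
        have : ∑ j, |f₁ i j| = ∑ j, |F u₁ i j| := by
          rw [hf₁, hFinv u₁ htu₁]
        rw [this]
        exact Finset.single_le_sum (f := fun i => ∑ j, |F u₁ i j|)
          (fun i _ => Finset.sum_nonneg fun j _ => abs_nonneg _) (Finset.mem_univ i)
      have h3 : g u₁ ≤ C₀ := hx₀ u₁ ⟨htu₁, hu₁T⟩
      calc ∑ j, |y i j| = (u₁ - u) * ∑ j, |f₁ i j| := h1
        _ ≤ δ * C₀ := by
            apply mul_le_mul hdle (h2.trans h3) (Finset.sum_nonneg fun j _ => abs_nonneg _)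
              hδpos.le
        _ < 1 := hδC
    obtain ⟨S, hS1, hS2, hSpos⟩ := geom_inverse_nonneg y hynn hrowy
    -- identity : f₁ * (u•1 - B) = 1 - y
    have hid : f₁ * (u • (1 : Matrix (Fin n) (Fin n) ℝ) - B) = 1 - y := by
      have hsplit : (u • (1 : Matrix (Fin n) (Fin n) ℝ) - B)
          = (u₁ • (1 : Matrix (Fin n) (Fin n) ℝ) - B) - (u₁ - u) • (1 : Matrix (Fin n) (Fin n) ℝ) := by
        rw [sub_smul]; abel
      rw [hsplit, Matrix.mul_sub, hf₁, Matrix.nonsing_inv_mul _ (hdetu u₁ htu₁),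
        Matrix.mul_smul, Matrix.mul_one]
    -- f u = S * f₁
    have hfu : (u • (1 : Matrix (Fin n) (Fin n) ℝ) - B)⁻¹ = S * f₁ := by
      apply Matrix.inv_eq_left_inv
      -- (S * f₁) * (u•1 - B) = S * (f₁ * (u•1-B)) = S * (1 - y) = 1
      rw [Matrix.mul_assoc, hid, hS2]
    rw [hfu]
    exact mul_entries_nonneg hSpos hpos
  -- downward induction
  have hind : ∀ k : ℕ, ∀ u : ℝ, t ≤ u → T - k * δ ≤ u → u ≤ T →
      ∀ i j, 0 ≤ (u • (1 : Matrix (Fin n) (Fin n) ℝ) - B)⁻¹ i j := by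
    intro k
    induction k with
    | zero =>
      intro u htu hTu huT
      have : u = T := le_antisymm huT (by simpa using hTu)
      rw [this]; exact hbase
    | succ k ih =>
      intro u htu hTu huT
      by_cases hcase : T - k * δ ≤ u
      · exact ih u htu hcase huT
      · push_neg at hcase
        set u₁ : ℝ := min (u + δ) T with hu₁
        have hu₁T : u₁ ≤ T := min_le_right _ _
        have huu₁ : u ≤ u₁ := le_min (by linarith) huT
        have htu₁ : t ≤ u₁ := le_trans htu huu₁
        have hTu₁ : T - k * δ ≤ u₁ := by
          apply le_min
          · push_cast at hTu; linarith
          · nlinarith [hδpos.le]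
        have hd : u₁ - u ≤ δ := by
          have : u₁ ≤ u + δ := min_le_left _ _
          linarith
        exact hstep u u₁ htu huu₁ hu₁T hd (ih u₁ htu₁ hTu₁ hu₁T)
  obtain ⟨k, hk⟩ := Archimedean.arch (T - t) hδpos
  refine ⟨hdet t le_rfl, hind k t le_rfl ?_ htT⟩
  rw [nsmul_eq_mul] at hk
  linarith


/-- shift of spectrum: z ∈ σ(M) ↔ z + s ∈ σ(M + s•1)  (over ℂ, for real M, s). -/
lemma spec_shift (M : Matrix (Fin n) (Fin n) ℝ) (s : ℝ) (z : ℂ) :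
    z ∈ spectrum ℂ (mc M) ↔
      (z + s) ∈ spectrum ℂ (mc (M + s • (1 : Matrix (Fin n) (Fin n) ℝ))) := by
  rw [mem_spec_iff_det, mem_spec_iff_det]
  have h : (z + s) • (1 : Matrix (Fin n) (Fin n) ℂ) - mc (M + s • 1)
      = z • (1 : Matrix (Fin n) (Fin n) ℂ) - mc M := by
    rw [mc_add, mc_smul, mc_one, add_smul]
    abel
  rw [h]

/-- Perron root: for entrywise nonnegative B there is a real eigenvalue dominating all moduli. -/
lemma perron (hn : 0 < n) (B : Matrix (Fin n) (Fin n) ℝ) (hB : ∀ i j, 0 ≤ B i j) :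
    ∃ r : ℝ, 0 ≤ r ∧ ((r : ℂ)) ∈ spectrum ℂ (mc B) ∧
      ∀ z ∈ spectrum ℂ (mc B), ‖z‖ ≤ r := by
  have hfin := spec_finite (mc B)
  have hne := spec_nonempty hn (mc B)
  set Fs : Finset ℝ := hfin.toFinset.image (fun z => ‖z‖) with hFs
  have hFsne : Fs.Nonempty := by
    obtain ⟨z, hz⟩ := hne
    exact ⟨‖z‖, Finset.mem_image_of_mem _ (hfin.mem_toFinset.mpr hz)⟩
  set r : ℝ := Fs.max' hFsne with hr
  have hrub : ∀ z ∈ spectrum ℂ (mc B), ‖z‖ ≤ r := fun z hz =>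
    Fs.le_max' _ (Finset.mem_image_of_mem _ (hfin.mem_toFinset.mpr hz))
  obtain ⟨lam, hlmem', hleq⟩ := Finset.mem_image.mp (Fs.max'_mem hFsne)
  have hlmem : lam ∈ spectrum ℂ (mc B) := hfin.mem_toFinset.mp hlmem'
  have hleq' : ‖lam‖ = r := by rw [hleq, ← hr]
  have hr0 : 0 ≤ r := by rw [← hleq']; exact norm_nonneg lam
  refine ⟨r, hr0, ?_, hrub⟩
  by_contra hrnot
  obtain ⟨x, hx0, hxne, hxi⟩ := eig_modulus B hlmem
  have hxB : ∀ i, r * x i ≤ (B *ᵥ x) i := by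
    intro i
    rw [← hleq']
    refine (hxi i).trans (le_of_eq ?_)
    rw [Matrix.mulVec, dotProduct]
    exact Finset.sum_congr rfl fun j _ => by rw [abs_of_nonneg (hB i j)]
  obtain ⟨i₀, hi₀⟩ : ∃ i, 0 < x i := by
    by_contra hcon
    push_neg at hcon
    exact hxne (funext fun i => le_antisymm (hcon i) (hx0 i))
  have hdetr : ((r : ℝ) • (1 : Matrix (Fin n) (Fin n) ℝ) - B).det ≠ 0 := by
    intro h0
    apply hrnot
    rw [mem_spec_iff_det]
    have h : (r : ℂ) • (1 : Matrix (Fin n) (Fin n) ℂ) - mc B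
        = mc (r • (1 : Matrix (Fin n) (Fin n) ℝ) - B) := by
      rw [mc_sub, mc_smul, mc_one]
    rw [h, mc_det, h0, Complex.ofReal_zero]
  set F : ℝ → Matrix (Fin n) (Fin n) ℝ :=
    fun u => ((u • (1 : Matrix (Fin n) (Fin n) ℝ) - B).det)⁻¹ •
      (u • (1 : Matrix (Fin n) (Fin n) ℝ) - B).adjugate with hFdef
  have hFinv : ∀ u, (u • (1 : Matrix (Fin n) (Fin n) ℝ) - B)⁻¹ = F u := by
    intro u
    rw [Matrix.inv_def, Ring.inverse_eq_inv]
  set φ : ℝ → ℝ := fun u => (u - r) * ((F u) *ᵥ x) i₀ with hφ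
  have hMatC : Continuous fun u : ℝ => u • (1 : Matrix (Fin n) (Fin n) ℝ) - B :=
    (continuous_id.smul continuous_const).sub continuous_const
  have houter : Continuous fun M : Matrix (Fin n) (Fin n) ℝ => (M *ᵥ x) i₀ := by
    have h : (fun M : Matrix (Fin n) (Fin n) ℝ => (M *ᵥ x) i₀)
        = fun M : Matrix (Fin n) (Fin n) ℝ => ∑ j, M i₀ j * x j := by
      funext M
      rw [Matrix.mulVec, dotProduct]
    rw [h]
    exact continuous_finset_sum _ fun j _ =>
      (continuous_id.matrix_elem i₀ j).mul continuous_const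
  have hFc : ContinuousAt F r := by
    refine ContinuousAt.smul (f := fun u => ((u • (1 : Matrix (Fin n) (Fin n) ℝ) - B).det)⁻¹)
      (g := fun u => (u • (1 : Matrix (Fin n) (Fin n) ℝ) - B).adjugate) ?_ ?_
    · exact (hMatC.matrix_det.continuousAt).inv₀ hdetr
    · exact hMatC.matrix_adjugate.continuousAt
  have hφc : ContinuousAt φ r :=
    ((continuous_id.sub continuous_const).continuousAt).mul (houter.continuousAt.comp hFc)
  have hφr : φ r = 0 := by simp [hφ]
  have htend : Filter.Tendsto φ (nhdsWithin r (Set.Ioi r)) (nhds 0) := by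
    rw [← hφr]
    exact hφc.continuousWithinAt.tendsto
  have hev : ∀ u ∈ Set.Ioi r, x i₀ ≤ φ u := by
    intro u hu
    have hru : r < u := hu
    obtain ⟨hdu, hRu⟩ := resolvent_nonneg B hB u
      (fun z hz => lt_of_le_of_lt (hrub z hz) hru)
    have hunit : IsUnit (u • (1 : Matrix (Fin n) (Fin n) ℝ) - B).det :=
      isUnit_iff_ne_zero.mpr hdu
    set R : Matrix (Fin n) (Fin n) ℝ := (u • (1 : Matrix (Fin n) (Fin n) ℝ) - B)⁻¹ with hR
    have hxeq : x = R *ᵥ ((u • (1 : Matrix (Fin n) (Fin n) ℝ) - B) *ᵥ x) := by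
      rw [Matrix.mulVec_mulVec, hR, Matrix.nonsing_inv_mul _ hunit, Matrix.one_mulVec]
    have hle1 : ∀ i, ((u • (1 : Matrix (Fin n) (Fin n) ℝ) - B) *ᵥ x) i ≤ ((u - r) • x) i := by
      intro i
      rw [Matrix.sub_mulVec, Matrix.smul_mulVec, Matrix.one_mulVec]
      have := hxB i
      simp only [Pi.sub_apply, Pi.smul_apply, smul_eq_mul]
      nlinarith [hxB i]
    have hle2 : x i₀ ≤ (R *ᵥ ((u - r) • x)) i₀ := by
      calc x i₀ = (R *ᵥ ((u • (1 : Matrix (Fin n) (Fin n) ℝ) - B) *ᵥ x)) i₀ := by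
            rw [← hxeq]
        _ ≤ (R *ᵥ ((u - r) • x)) i₀ := mulVec_mono hRu hle1 i₀
    have hle3 : (R *ᵥ ((u - r) • x)) i₀ = φ u := by
      rw [Matrix.mulVec_smul, hφ, hR, hFinv u]
      simp [smul_eq_mul]
    linarith [hle2, hle3.symm.le]
  have hfinal : x i₀ ≤ 0 :=
    ge_of_tendsto htend (eventually_nhdsWithin_of_forall hev)
  linarith

/-- a Metzler matrix can be shifted to a nonnegative matrix. -/
lemma exists_shift {M : Matrix (Fin n) (Fin n) ℝ} (hM : IsMetzler M) :
    ∃ s : ℝ, 0 < s ∧ ∀ i j, 0 ≤ (M + s • (1 : Matrix (Fin n) (Fin n) ℝ)) i j := by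
  refine ⟨1 + ∑ i, |M i i|, by positivity, ?_⟩
  intro i j
  rcases eq_or_ne i j with rfl | hij
  · have h1 : |M i i| ≤ ∑ k, |M k k| :=
      Finset.single_le_sum (f := fun k => |M k k|) (fun k _ => abs_nonneg _) (Finset.mem_univ i)
    have h2 : -M i i ≤ |M i i| := neg_le_abs _
    simp only [Matrix.add_apply, Matrix.smul_apply, Matrix.one_apply_eq, smul_eq_mul, mul_one]
    linarith
  · simp only [Matrix.add_apply, Matrix.smul_apply, Matrix.one_apply_ne hij, smul_eq_mul,
      mul_zero, add_zero]
    exact hM i j hij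

/-- Key lemma: a Hurwitz Metzler matrix has nonpositive inverse. -/
lemma metzler_hurwitz_inv {M : Matrix (Fin n) (Fin n) ℝ}
    (hM : IsMetzler M) (hH : IsHurwitz M) :
    IsUnit M.det ∧ ∀ i j, M⁻¹ i j ≤ 0 := by
  rcases Nat.eq_zero_or_pos n with rfl | hn
  · refine ⟨?_, fun i j => i.elim0⟩
    rw [Matrix.det_isEmpty]
    exact isUnit_one
  obtain ⟨s, hspos, hBnn⟩ := exists_shift hM
  set B : Matrix (Fin n) (Fin n) ℝ := M + s • 1 with hBdef
  obtain ⟨r, hr0, hrmem, hrub⟩ := perron hn B hBnn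
  -- r - s is a real eigenvalue of M, hence r < s
  have hrs : r < s := by
    have hmem : ((r : ℂ) - s) ∈ spectrum ℂ (mc M) := by
      rw [spec_shift M s]
      simpa using hrmem
    have hre := hH _ (by exact hmem)
    simp only [Complex.sub_re, Complex.ofReal_re] at hre
    linarith
  have hspec : ∀ z ∈ spectrum ℂ (mc B), ‖z‖ < s :=
    fun z hz => lt_of_le_of_lt (hrub z hz) hrs
  obtain ⟨hdets, hRnn⟩ := resolvent_nonneg B hBnn s hspec
  have hunit : IsUnit (s • (1 : Matrix (Fin n) (Fin n) ℝ) - B).det :=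
    isUnit_iff_ne_zero.mpr hdets
  set R : Matrix (Fin n) (Fin n) ℝ := (s • (1 : Matrix (Fin n) (Fin n) ℝ) - B)⁻¹ with hR
  have hMeq : M = -(s • (1 : Matrix (Fin n) (Fin n) ℝ) - B) := by
    rw [hBdef]; abel
  have hMR : M * (-R) = 1 := by
    rw [hMeq, neg_mul_neg, hR]
    exact Matrix.mul_nonsing_inv _ hunit
  refine ⟨Matrix.isUnit_det_of_right_inverse hMR, ?_⟩
  rw [Matrix.inv_eq_right_inv hMR]
  intro i j
  simp only [Matrix.neg_apply, neg_nonpos]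
  exact hRnn i j

/-- positivity bootstrapping for Metzler matrices -/
lemma pos_of_metzler {M : Matrix (Fin n) (Fin n) ℝ} {v : Fin n → ℝ}
    (hM : IsMetzler M) (hv : ∀ i, 0 ≤ v i) (hMv : ∀ i, (M *ᵥ v) i < 0) :
    ∀ i, 0 < v i := by
  intro i
  rcases (hv i).lt_or_eq with h | h
  · exact h
  · exfalso
    have h0 : 0 ≤ (M *ᵥ v) i := by
      rw [Matrix.mulVec, dotProduct]
      apply Finset.sum_nonneg
      intro j _
      rcases eq_or_ne j i with rfl | hji
      · rw [← h, mul_zero]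
      · exact mul_nonneg (hM i j (Ne.symm hji)) (hv j)
    exact absurd (hMv i) (not_lt.mpr h0)

/-- Hurwitz Metzler matrices admit positive vectors with negative image -/
lemma exists_posvec {M : Matrix (Fin n) (Fin n) ℝ} (hM : IsMetzler M) (hH : IsHurwitz M) :
    ∃ v : Fin n → ℝ, (∀ i, 0 < v i) ∧ ∀ i, (M *ᵥ v) i < 0 := by
  obtain ⟨hU, hinv⟩ := metzler_hurwitz_inv hM hH
  set v : Fin n → ℝ := M⁻¹ *ᵥ (fun _ => (-1 : ℝ)) with hvdef
  have hv0 : ∀ i, 0 ≤ v i := by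
    intro i
    rw [hvdef, Matrix.mulVec, dotProduct]
    apply Finset.sum_nonneg
    intro j _
    have := hinv i j
    nlinarith
  have hMv : ∀ i, (M *ᵥ v) i < 0 := by
    intro i
    rw [hvdef, Matrix.mulVec_mulVec, Matrix.mul_nonsing_inv _ hU, Matrix.one_mulVec]
    norm_num
  exact ⟨v, pos_of_metzler hM hv0 hMv, hMv⟩

/-- Sufficient criterion: Metzler with a positive vector mapped to negative is Hurwitz. -/
lemma hurwitz_of_pos_vec {M : Matrix (Fin n) (Fin n) ℝ} {v : Fin n → ℝ}
    (hM : IsMetzler M) (hv : ∀ i, 0 < v i) (hMv : ∀ i, (M *ᵥ v) i < 0) :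
    IsHurwitz M := by
  intro z hz
  by_contra hre
  push_neg at hre
  obtain ⟨s, hspos, hBnn⟩ := exists_shift hM
  set B : Matrix (Fin n) (Fin n) ℝ := M + s • 1 with hBdef
  have hzmem : (z + s) ∈ spectrum ℂ (mc B) := (spec_shift M s z).mp hz
  obtain ⟨x, hx0, hxne, hxi⟩ := eig_modulus B hzmem
  have hxB : ∀ i, ‖z + s‖ * x i ≤ (B *ᵥ x) i := by
    intro i
    refine (hxi i).trans (le_of_eq ?_)
    rw [Matrix.mulVec, dotProduct]
    exact Finset.sum_congr rfl fun j _ => by rw [abs_of_nonneg (hBnn i j)]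
  have hzs : s ≤ ‖z + s‖ := by
    have h1 : (z + (s : ℂ)).re ≤ ‖z + s‖ := Complex.re_le_norm _
    have h2 : (z + (s : ℂ)).re = z.re + s := by simp
    linarith
  have hBv : ∀ i, (B *ᵥ v) i < s * v i := by
    intro i
    rw [hBdef, Matrix.add_mulVec, Matrix.smul_mulVec, Matrix.one_mulVec]
    have := hMv i
    simp only [Pi.add_apply, Pi.smul_apply, smul_eq_mul]
    linarith
  obtain ⟨i₁, hi₁⟩ : ∃ i, 0 < x i := by
    by_contra hcon
    push_neg at hcon
    exact hxne (funext fun i => le_antisymm (hcon i) (hx0 i))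
  haveI : Nonempty (Fin n) := ⟨i₁⟩
  set Fs : Finset ℝ := Finset.univ.image (fun i => x i / v i) with hFs
  have hFsne : Fs.Nonempty := ⟨x i₁ / v i₁, Finset.mem_image_of_mem _ (Finset.mem_univ i₁)⟩
  set c : ℝ := Fs.max' hFsne with hc
  obtain ⟨i₀, _, hi₀eq⟩ := Finset.mem_image.mp (Fs.max'_mem hFsne)
  have hcge : ∀ j, x j / v j ≤ c := fun j =>
    Fs.le_max' _ (Finset.mem_image_of_mem _ (Finset.mem_univ j))
  have hxcv : ∀ j, x j ≤ c * v j := fun j => by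
    have := hcge j
    rw [div_le_iff₀ (hv j)] at this
    linarith
  have hcpos : 0 < c := lt_of_lt_of_le (div_pos hi₁ (hv i₁)) (hcge i₁)
  have hx0eq : x i₀ = c * v i₀ := by
    have := (div_eq_iff (hv i₀).ne').mp hi₀eq
    linarith
  have hxi₀pos : 0 < x i₀ := by
    rw [hx0eq]
    exact mul_pos hcpos (hv i₀)
  have hchain : s * x i₀ < s * x i₀ := by
    calc s * x i₀ ≤ ‖z + s‖ * x i₀ :=
          mul_le_mul_of_nonneg_right hzs (hx0 i₀)
      _ ≤ (B *ᵥ x) i₀ := hxB i₀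
      _ ≤ (B *ᵥ fun j => c * v j) i₀ := mulVec_mono hBnn hxcv i₀
      _ = c * (B *ᵥ v) i₀ := by
          have h : (fun j => c * v j) = c • v := rfl
          rw [h, Matrix.mulVec_smul]
          simp [smul_eq_mul]
      _ < c * (s * v i₀) := mul_lt_mul_of_pos_left (hBv i₀) hcpos
      _ = s * x i₀ := by rw [hx0eq]; ring
  exact absurd hchain (lt_irrefl _)



lemma mul_entries_nonpos' {m p q : ℕ} {M : Matrix (Fin m) (Fin p) ℝ} {N : Matrix (Fin p) (Fin q) ℝ}
    (hM : ∀ i j, M i j ≤ 0) (hN : ∀ i j, 0 ≤ N i j) : ∀ i j, (M * N) i j ≤ 0 := by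
  intro i j
  rw [Matrix.mul_apply]
  exact Finset.sum_nonpos fun k _ => mul_nonpos_of_nonpos_of_nonneg (hM i k) (hN k j)

lemma exists_pos_term {m : ℕ} {f : Fin m → ℝ} (h : 0 < ∑ j, f j) : ∃ j, 0 < f j := by
  by_contra hcon
  push_neg at hcon
  exact absurd h (not_lt.mpr (Finset.sum_nonpos fun j _ => hcon j))

lemma exists_neg_term {m : ℕ} {f : Fin m → ℝ} (h : ∑ j, f j < 0) : ∃ j, f j < 0 := by
  by_contra hcon
  push_neg at hcon
  exact absurd h (not_lt.mpr (Finset.sum_nonneg fun j _ => hcon j))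

lemma mul_diag_const_mul {d m : ℕ} (S : Matrix (Fin d) (Fin m) ℝ) (W : Matrix (Fin m) (Fin d) ℝ)
    (c : ℝ) : S * Matrix.diagonal (fun _ : Fin m => c) * W = c • (S * W) := by
  rw [← Matrix.smul_one_eq_diagonal, Matrix.mul_smul, Matrix.mul_one, Matrix.smul_mul]

lemma mul_through_zero {d : ℕ} (X : Matrix (Fin d) (Fin 0) ℝ) (Y : Matrix (Fin 0) (Fin d) ℝ) :
    X * Y = 0 := by
  ext i j
  rw [Matrix.mul_apply]
  simp

/-- finite geometric inverse for a nilpotent matrix -/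
lemma geom_of_nilpotent {y : Matrix (Fin n) (Fin n) ℝ} {L : ℕ} (hy : y ^ L = 0) :
    (1 - y) * (∑ j ∈ Finset.range L, y ^ j) = 1 ∧
      (∑ j ∈ Finset.range L, y ^ j) * (1 - y) = 1 := by
  constructor
  · have h := mul_geom_sum y L
    have h2 : (1 - y) * ∑ j ∈ Finset.range L, y ^ j
        = -((y - 1) * ∑ j ∈ Finset.range L, y ^ j) := by noncomm_ring
    rw [h2, h, hy]
    noncomm_ring
  · have h := geom_sum_mul y L
    have h2 : (∑ j ∈ Finset.range L, y ^ j) * (1 - y)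
        = -((∑ j ∈ Finset.range L, y ^ j) * (y - 1)) := by noncomm_ring
    rw [h2, h, hy]
    noncomm_ring

lemma specRad_eq_zero_of {N : Matrix (Fin n) (Fin n) ℝ}
    (h : ∀ z ∈ spectrum ℂ (N.map Complex.ofReal), z = 0) : specRad N = 0 := by
  unfold specRad
  rcases Set.eq_empty_or_nonempty
    {x : ℝ | ∃ z ∈ spectrum ℂ (N.map Complex.ofReal), x = ‖z‖} with he | hne
  · rw [he, Real.sSup_empty]
  · have hset : {x : ℝ | ∃ z ∈ spectrum ℂ (N.map Complex.ofReal), x = ‖z‖} = {0} := by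
      apply Set.eq_singleton_iff_nonempty_unique_mem.mpr
      refine ⟨hne, ?_⟩
      rintro x ⟨z, hz, rfl⟩
      rw [h z hz]
      simp
    rw [hset, csSup_singleton]

lemma spec_zero_of_specRad {N : Matrix (Fin n) (Fin n) ℝ} (h : specRad N = 0) :
    ∀ z ∈ spectrum ℂ (N.map Complex.ofReal), z = 0 := by
  intro z hz
  have hset : {x : ℝ | ∃ z ∈ spectrum ℂ (N.map Complex.ofReal), x = ‖z‖}
      = (fun w => ‖w‖) '' (spectrum ℂ (N.map Complex.ofReal)) := by
    ext x
    constructor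
    · rintro ⟨w, hw, rfl⟩; exact ⟨w, hw, rfl⟩
    · rintro ⟨w, hw, rfl⟩; exact ⟨w, hw, rfl⟩
  have hbdd : BddAbove {x : ℝ | ∃ z ∈ spectrum ℂ (N.map Complex.ofReal), x = ‖z‖} := by
    rw [hset]
    exact ((spec_finite (N.map Complex.ofReal)).image _).bddAbove
  have hmem : ‖z‖ ∈
      {x : ℝ | ∃ z ∈ spectrum ℂ (N.map Complex.ofReal), x = ‖z‖} := ⟨z, hz, rfl⟩
  have hle := le_csSup hbdd hmem
  rw [show sSup {x : ℝ | ∃ z ∈ spectrum ℂ (N.map Complex.ofReal), x = ‖z‖}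
    = specRad N from rfl, h] at hle
  exact norm_eq_zero.mp (le_antisymm hle (norm_nonneg z))

end SHaux

open SHaux

theorem structural_hurwitz_iff_spectral_radius_zero
    {d ndg ncv nct : ℕ}
    (A : (Fin ndg → ℝ) → (Fin ncv → ℝ) → (Fin nct → ℝ) → Matrix (Fin d) (Fin d) ℝ)
    (Sct : Matrix (Fin d) (Fin nct) ℝ) (Wct : Matrix (Fin nct) (Fin d) ℝ)
    (hS : ∀ i j, 0 ≤ Sct i j) (hW : ∀ i j, 0 ≤ Wct i j)
    (hdecomp : ∀ ρdg ρcv ρct,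
      A ρdg ρcv ρct = A ρdg ρcv 0 + Sct * Matrix.diagonal ρct * Wct)
    (hMetz : ∀ ρdg ρcv ρct, (∀ i, 0 < ρdg i) → (∀ i, 0 < ρcv i) → (∀ i, 0 < ρct i) →
      IsMetzler (A ρdg ρcv ρct))
    (hmono : ∀ ρdg ρdg' ρcv ρct, (∀ i, ρdg i ≤ ρdg' i) →
      ∀ m n, A ρdg' ρcv ρct m n ≤ A ρdg ρcv ρct m n)
    (hH0 : ∀ ρdg ρcv, (∀ i, 0 < ρdg i) → (∀ i, 0 < ρcv i) → IsHurwitz (A ρdg ρcv 0)) :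
    (∀ ρdg ρcv ρct, (∀ i, 0 < ρdg i) → (∀ i, 0 < ρcv i) → (∀ i, 0 < ρct i) →
        IsHurwitz (A ρdg ρcv ρct)) ↔
      (∀ ρdg ρcv, (∀ i, 0 < ρdg i) → (∀ i, 0 < ρcv i) →
        specRad (Wct * (A ρdg ρcv 0)⁻¹ * Sct) = 0) := by
  classical
  -- Metzler property of the boundary matrix A(·,·,0)
  have hMetz0 : ∀ ρdg ρcv, (∀ i, 0 < ρdg i) → (∀ i, 0 < ρcv i) →
      IsMetzler (A ρdg ρcv 0) := by
    intro ρdg ρcv hdg hcv i j hij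
    by_contra hneg
    push_neg at hneg
    set c : ℝ := (Sct * Wct) i j with hcdef
    have hc0 : 0 ≤ c := mul_entries_nonneg hS hW i j
    set ε : ℝ := (-(A ρdg ρcv 0 i j)) / (2 * (c + 1)) with hεdef
    have hεpos : 0 < ε := by
      apply div_pos (by linarith) (by linarith)
    have hMet := hMetz ρdg ρcv (fun _ => ε) hdg hcv (fun _ => hεpos) i j hij
    rw [hdecomp ρdg ρcv (fun _ => ε), mul_diag_const_mul] at hMet
    simp only [Matrix.add_apply, Matrix.smul_apply, smul_eq_mul] at hMet
    have hεc1 : ε * (c + 1) = (-(A ρdg ρcv 0 i j)) / 2 := by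
      rw [hεdef]
      field_simp
    have hεc : ε * c ≤ ε * (c + 1) := by nlinarith
    rw [← hcdef] at hMet
    linarith
  constructor
  · -- forward direction
    intro hypAll ρdg ρcv hdg hcv
    set Aρ := A ρdg ρcv 0 with hAρ
    have hH : IsHurwitz Aρ := hH0 ρdg ρcv hdg hcv
    have hMz : IsMetzler Aρ := hMetz0 ρdg ρcv hdg hcv
    obtain ⟨hU, hinv⟩ := metzler_hurwitz_inv hMz hH
    set N := Wct * Aρ⁻¹ * Sct with hN
    have hNassoc : N = Wct * (Aρ⁻¹ * Sct) := by rw [hN, Matrix.mul_assoc]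
    have hWInp : ∀ a q, (Wct * Aρ⁻¹) a q ≤ 0 := mul_entries_nonpos hW hinv
    have hNnp : ∀ a b, N a b ≤ 0 := by
      rw [hN]
      exact mul_entries_nonpos' hWInp hS
    set P := -N with hP
    have hPnn : ∀ a b, 0 ≤ P a b := by
      intro a b
      rw [hP, Matrix.neg_apply]
      linarith [hNnp a b]
    apply specRad_eq_zero_of
    intro z hz
    by_contra hzne
    have habs : 0 < ‖z‖ := norm_pos_iff.mpr hzne
    obtain ⟨x, hx0, hxne, hxi⟩ := eig_modulus N hz
    have hxP : ∀ a, ‖z‖ * x a ≤ (P *ᵥ x) a := by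
      intro a
      refine (hxi a).trans (le_of_eq ?_)
      rw [Matrix.mulVec, dotProduct]
      refine Finset.sum_congr rfl fun b _ => ?_
      rw [abs_of_nonpos (hNnp a b)]
      rfl
    set t : ℝ := 2 / ‖z‖ with ht
    have htpos : 0 < t := by positivity
    have hHt : IsHurwitz (A ρdg ρcv (fun _ => t)) :=
      hypAll ρdg ρcv (fun _ => t) hdg hcv (fun _ => htpos)
    have hMt : IsMetzler (A ρdg ρcv (fun _ => t)) :=
      hMetz ρdg ρcv (fun _ => t) hdg hcv (fun _ => htpos)
    obtain ⟨v, hvpos, hvneg⟩ := exists_posvec hMt hHt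
    set u := Wct *ᵥ v with hu
    have hu0 : ∀ a, 0 ≤ u a := mulVec_nonneg hW (fun p => (hvpos p).le)
    set w := (A ρdg ρcv (fun _ => t)) *ᵥ v with hw
    have hweq : w = Aρ *ᵥ v + t • ((Sct * Wct) *ᵥ v) := by
      rw [hw, hdecomp ρdg ρcv (fun _ => t), mul_diag_const_mul, Matrix.add_mulVec,
        Matrix.smul_mulVec]
    -- apply Aρ⁻¹ then Wct
    have h1 : Aρ⁻¹ *ᵥ w = v + t • ((Aρ⁻¹ * (Sct * Wct)) *ᵥ v) := by
      rw [hweq, Matrix.mulVec_add, Matrix.mulVec_smul, Matrix.mulVec_mulVec,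
        Matrix.mulVec_mulVec, Matrix.nonsing_inv_mul _ hU, Matrix.one_mulVec]
    have e1 : Wct * (Aρ⁻¹ * (Sct * Wct)) = N * Wct := by
      simp only [hNassoc, Matrix.mul_assoc]
    have h2 : Wct *ᵥ (Aρ⁻¹ *ᵥ w) = u + t • (N *ᵥ u) := by
      rw [h1, Matrix.mulVec_add, Matrix.mulVec_smul, Matrix.mulVec_mulVec, e1,
        ← Matrix.mulVec_mulVec, ← hu]
    have h3 : ∀ b, 0 ≤ (Aρ⁻¹ *ᵥ w) b := by
      intro b
      rw [Matrix.mulVec, dotProduct]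
      apply Finset.sum_nonneg
      intro q _
      have hwq : w q < 0 := hvneg q
      nlinarith [hinv b q]
    have hPu : P *ᵥ u = -(N *ᵥ u) := by rw [hP, Matrix.neg_mulVec]
    have hkey : ∀ a, t * (P *ᵥ u) a ≤ u a := by
      intro a
      have h4 := mulVec_nonneg hW h3 a
      rw [h2] at h4
      simp only [Pi.add_apply, Pi.smul_apply, smul_eq_mul] at h4
      have h5 : (P *ᵥ u) a = -((N *ᵥ u) a) := by rw [hPu]; rfl
      rw [h5]
      linarith
    obtain ⟨a₁, ha₁⟩ : ∃ a, 0 < x a := by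
      by_contra hcon
      push_neg at hcon
      exact hxne (funext fun a => le_antisymm (hcon a) (hx0 a))
    have hupos : ∀ a, 0 < x a → 0 < u a := by
      intro a hxa
      have hPxa : 0 < (P *ᵥ x) a := lt_of_lt_of_le (mul_pos habs hxa) (hxP a)
      rw [Matrix.mulVec, dotProduct] at hPxa
      obtain ⟨b, hb⟩ := exists_pos_term hPxa
      have hNab : N a b < 0 := by
        rcases lt_or_ge (N a b) 0 with h | h
        · exact h
        · exfalso
          have : P a b ≤ 0 := by rw [hP, Matrix.neg_apply]; linarith
          nlinarith [hx0 b]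
      rw [hN, Matrix.mul_apply] at hNab
      obtain ⟨q, hq⟩ := exists_neg_term hNab
      have hWIaq : (Wct * Aρ⁻¹) a q < 0 := by
        rcases lt_or_ge ((Wct * Aρ⁻¹) a q) 0 with h | h
        · exact h
        · exact absurd hq (not_lt.mpr (mul_nonneg h (hS q b)))
      rw [Matrix.mul_apply] at hWIaq
      obtain ⟨p, hp⟩ := exists_neg_term hWIaq
      have hWap : 0 < Wct a p := by
        rcases (hW a p).lt_or_eq with h | h
        · exact h
        · exfalso; rw [← h, zero_mul] at hp; exact lt_irrefl _ hp
      have hterm : Wct a p * v p ≤ u a := by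
        rw [hu, Matrix.mulVec, dotProduct]
        exact Finset.single_le_sum
          (fun p' _ => mul_nonneg (hW a p') (hvpos p').le) (Finset.mem_univ p)
      exact lt_of_lt_of_le (mul_pos hWap (hvpos p)) hterm
    set Fs : Finset ℝ :=
      (Finset.univ.filter fun a => 0 < x a).image (fun a => x a / u a) with hFs
    have hFsne : Fs.Nonempty :=
      ⟨x a₁ / u a₁, Finset.mem_image_of_mem _
        (Finset.mem_filter.mpr ⟨Finset.mem_univ a₁, ha₁⟩)⟩
    set c : ℝ := Fs.max' hFsne with hcd
    obtain ⟨a₀, ha₀f, hceq⟩ := Finset.mem_image.mp (Fs.max'_mem hFsne)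
    have hxa₀ : 0 < x a₀ := (Finset.mem_filter.mp ha₀f).2
    have hua₀ : 0 < u a₀ := hupos a₀ hxa₀
    have hceq' : x a₀ / u a₀ = c := by rw [hceq, hcd]
    have hcpos : 0 < c := by rw [← hceq']; exact div_pos hxa₀ hua₀
    have hxcu : ∀ a, x a ≤ c * u a := by
      intro a
      by_cases hxa : 0 < x a
      · have hmem : x a / u a ∈ Fs :=
          Finset.mem_image_of_mem _ (Finset.mem_filter.mpr ⟨Finset.mem_univ a, hxa⟩)
        have hle := Fs.le_max' _ hmem
        rw [← hcd] at hle
        have hua := hupos a hxa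
        rw [div_le_iff₀ hua] at hle
        linarith
      · have hxa0 : x a = 0 := le_antisymm (not_lt.mp hxa) (hx0 a)
        rw [hxa0]
        exact mul_nonneg hcpos.le (hu0 a)
    have hx0eq : x a₀ = c * u a₀ := by
      have := (div_eq_iff hua₀.ne').mp hceq'
      linarith
    have hfin2 : (P *ᵥ x) a₀ ≤ (P *ᵥ fun a => c * u a) a₀ := mulVec_mono hPnn hxcu a₀
    have hfin3 : (P *ᵥ fun a => c * u a) a₀ = c * (P *ᵥ u) a₀ := by
      have h : (fun a => c * u a) = c • u := rfl
      rw [h, Matrix.mulVec_smul]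
      simp [smul_eq_mul]
    have hfin4 := hkey a₀
    have h7 : ‖z‖ * x a₀ ≤ x a₀ / t := by
      calc ‖z‖ * x a₀ ≤ (P *ᵥ x) a₀ := hxP a₀
        _ ≤ c * (P *ᵥ u) a₀ := by rw [← hfin3]; exact hfin2
        _ ≤ c * (u a₀ / t) := by
            apply mul_le_mul_of_nonneg_left _ hcpos.le
            rw [le_div_iff₀ htpos]
            nlinarith [hkey a₀]
        _ = x a₀ / t := by rw [hx0eq]; ring
    have h8 : ‖z‖ * t = 2 := by
      rw [ht]
      field_simp
    rw [le_div_iff₀ htpos] at h7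
    nlinarith [mul_pos habs hxa₀, htpos, h8]
  · -- backward direction
    intro hsr ρdg ρcv ρct hdg hcv hct
    have hH : IsHurwitz (A ρdg ρcv 0) := hH0 ρdg ρcv hdg hcv
    have hMz : IsMetzler (A ρdg ρcv 0) := hMetz0 ρdg ρcv hdg hcv
    obtain ⟨hU, hinv⟩ := metzler_hurwitz_inv hMz hH
    set Aρ := A ρdg ρcv 0 with hAρ
    set N := Wct * Aρ⁻¹ * Sct with hN
    have hNassoc : N = Wct * (Aρ⁻¹ * Sct) := by rw [hN, Matrix.mul_assoc]
    have hWInp : ∀ a q, (Wct * Aρ⁻¹) a q ≤ 0 := mul_entries_nonpos hW hinv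
    have hNnp : ∀ a b, N a b ≤ 0 := by rw [hN]; exact mul_entries_nonpos' hWInp hS
    set P := -N with hP
    have hPnn : ∀ a b, 0 ≤ P a b := fun a b => by
      rw [hP, Matrix.neg_apply]; linarith [hNnp a b]
    have hz0 : ∀ z ∈ spectrum ℂ (N.map Complex.ofReal), z = 0 :=
      spec_zero_of_specRad (hsr ρdg ρcv hdg hcv)
    have hNn : N ^ nct = 0 := pow_eq_zero_of_spec_zero N hz0
    have hPn : P ^ nct = 0 := by
      rw [hP, show -N = (-1 : ℝ) • N by simp, smul_pow, hNn, smul_zero]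
    set D := Matrix.diagonal ρct with hD
    set c : ℝ := 1 + ∑ a, ρct a with hc
    have hcub : ∀ a, ρct a ≤ c := by
      intro a
      have h1 : ρct a ≤ ∑ b, ρct b :=
        Finset.single_le_sum (fun b _ => (hct b).le) (Finset.mem_univ a)
      rw [hc]; linarith
    have hc0 : 0 ≤ c := by
      have h1 : (0 : ℝ) ≤ ∑ a, ρct a := Finset.sum_nonneg fun a _ => (hct a).le
      rw [hc]; linarith
    have hdom : ∀ a b, |(D * N) a b| ≤ c * P a b := by
      intro a b
      rw [hD, Matrix.diagonal_mul, abs_mul, abs_of_pos (hct a), abs_of_nonpos (hNnp a b)]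
      have h : -N a b = P a b := by rw [hP, Matrix.neg_apply]
      rw [h]
      exact mul_le_mul_of_nonneg_right (hcub a) (hPnn a b)
    have hDNn : (D * N) ^ nct = 0 := nilpotent_of_dominated hc0 hPnn hPn hdom
    set E := Sct * D * Wct with hE
    have hEnn : ∀ i j, 0 ≤ E i j := by
      rw [hE]
      apply mul_entries_nonneg _ hW
      intro i q
      rw [hD, Matrix.mul_diagonal]
      exact mul_nonneg (hS i q) (hct q).le
    set K := Aρ⁻¹ * E with hK
    have hKnil : K ^ (nct + 1) = 0 := by
      rcases Nat.eq_zero_or_pos nct with h0 | hpos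
      · subst h0
        have hE0 : E = 0 := by rw [hE]; exact mul_through_zero _ _
        rw [zero_add, pow_one, hK, hE0, Matrix.mul_zero]
      · have hKpow : ∀ m : ℕ, K ^ (m + 1) = Aρ⁻¹ * (Sct * ((D * N) ^ m * (D * Wct))) := by
          intro m
          induction m with
          | zero =>
            rw [zero_add, pow_one, hK, hE]
            simp only [pow_zero, Matrix.one_mul, Matrix.mul_assoc]
          | succ m ih =>
            rw [pow_succ, ih, hK, hE, pow_succ (D * N) m]
            simp only [hNassoc, Matrix.mul_assoc]
        rw [hKpow nct, hDNn]
        simp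
    set G := ∑ j ∈ Finset.range (nct + 1), (-K) ^ j with hG
    have hyn : (-K) ^ (nct + 1) = 0 := by
      rw [show -K = (-1 : ℝ) • K by simp, smul_pow, hKnil, smul_zero]
    obtain ⟨hg1, hg2⟩ := geom_of_nilpotent hyn
    have h1K : (1 : Matrix (Fin d) (Fin d) ℝ) - -K = 1 + K := by rw [sub_neg_eq_add]
    rw [h1K] at hg1 hg2
    have hGnn : ∀ i j, 0 ≤ G i j := by
      intro i j
      rw [hG, Matrix.sum_apply]
      apply Finset.sum_nonneg
      intro k _
      apply pow_entries_nonneg _ k i j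
      intro a b
      have hnegK : -K = (-Aρ⁻¹) * E := by rw [hK, Matrix.neg_mul]
      rw [hnegK]
      exact mul_entries_nonneg
        (fun a b => by rw [Matrix.neg_apply]; linarith [hinv a b]) hEnn a b
    set R := G * Aρ⁻¹ with hR
    have hfact : A ρdg ρcv ρct = Aρ * (1 + K) := by
      have h1 : A ρdg ρcv ρct = Aρ + E := by
        rw [hdecomp ρdg ρcv ρct, hE, hD, hAρ]
      rw [h1, Matrix.mul_add, Matrix.mul_one, hK, ← Matrix.mul_assoc,
        Matrix.mul_nonsing_inv _ hU, Matrix.one_mul]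
    have hMR : (A ρdg ρcv ρct) * R = 1 := by
      rw [hfact, hR, Matrix.mul_assoc, ← Matrix.mul_assoc (1 + K) G, hg1, Matrix.one_mul,
        Matrix.mul_nonsing_inv _ hU]
    have hRnp : ∀ i j, R i j ≤ 0 := by rw [hR]; exact mul_entries_nonpos hGnn hinv
    set v := R *ᵥ (fun _ => (-1 : ℝ)) with hv
    have hv0 : ∀ i, 0 ≤ v i := by
      intro i
      rw [hv, Matrix.mulVec, dotProduct]
      apply Finset.sum_nonneg
      intro j _
      nlinarith [hRnp i j]
    have hMv : ∀ i, ((A ρdg ρcv ρct) *ᵥ v) i < 0 := by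
      intro i
      rw [hv, Matrix.mulVec_mulVec, hMR, Matrix.one_mulVec]
      norm_num
    exact hurwitz_of_pos_vec (hMetz ρdg ρcv ρct hdg hcv hct)
      (pos_of_metzler (hMetz ρdg ρcv ρct hdg hcv hct) hv0 hMv) hMv
end
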